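/- arXiv:2009.10124 — 3 statements merged into one kernel-verified Lean document; each statement's English description precedes it below -/
import Mathlib

section
/- Two-point string-sum bound (Lemma 3 of the Supplement, in terms of interaction weights). For every integer m ≥ 0 and all sites i, i' ∈ Λ, the sum over all connected sequences (Z₀, Z₁, …, Z_m) of nonempty subsets of Λ of size at most k whose union contains both i and i', of the products ∏_{j=0}^{m} a_{Z_j}, satisfies Σ_{(Z₀,…,Z_m) connected, {i,i'} ⊆ Z₀∪⋯∪Z_m} ∏_{j=0}^{m} a_{Z_j} ≤ m! (m+1)² g̃^{m+1} (d(i,i')+1)^{−α}. -/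
open scoped Classical ENNReal Matrix ComplexOrder
open Complex

noncomputable section

/-- Spin configurations of a lattice `Λ` of (1/2)-spins. -/
abbrev SpinConf (Λ : Type) := Λ → Fin 2

/-- Operators on the Hilbert space `⨂_{i∈Λ} ℂ²`, realized as complex matrices
indexed by spin configurations. -/
abbrev SpinOp (Λ : Type) [Fintype Λ] [DecidableEq Λ] := Matrix (SpinConf Λ) (SpinConf Λ) ℂ

section GeneralMatrices

variable {n : Type} [Fintype n] [DecidableEq n]

/-- The operator norm `‖·‖` (largest singular value). -/
noncomputable def opNorm (A : Matrix n n ℂ) : ℝ :=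
  ‖Matrix.toEuclideanCLM (𝕜 := ℂ) A‖

/-- The normalized Frobenius norm `‖O‖_F := √(tr(O†O)/tr(1̂))`. -/
noncomputable def frobNorm (A : Matrix n n ℂ) : ℝ :=
  Real.sqrt ((Aᴴ * A).trace.re / (Fintype.card n))

/-- The Schatten `p`-norm; for `p = ∞` it is the operator norm, otherwise it is the
`ℓ^p` norm of the singular values. -/
noncomputable def schattenNorm (p : ℝ≥0∞) (A : Matrix n n ℂ) : ℝ :=
  if p = ⊤ then opNorm A
  else (∑ i, Real.sqrt ((Matrix.posSemidef_conjTranspose_mul_self A).1.eigenvalues i)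
      ^ p.toReal) ^ (1 / p.toReal)

/-- The commutator `[A,B] := AB - BA`. -/
def commM (A B : Matrix n n ℂ) : Matrix n n ℂ := A * B - B * A

/-- `U` is a unitary matrix. -/
def IsUnitaryM (U : Matrix n n ℂ) : Prop := Uᴴ * U = 1 ∧ U * Uᴴ = 1

/-- Heisenberg time evolution `O(t) := e^{iHt} O e^{-iHt}`. -/
noncomputable def timeEv (H : Matrix n n ℂ) (t : ℝ) (A : Matrix n n ℂ) : Matrix n n ℂ :=
  NormedSpace.exp ((Complex.I * (t : ℂ)) • H) * A *
    NormedSpace.exp ((-(Complex.I * (t : ℂ))) • H)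

end GeneralMatrices

variable {Λ : Type} [Fintype Λ] [DecidableEq Λ]

/-- `A = A_X ⊗ 1_{X^c}`: the matrix entries vanish unless the configurations agree
outside `X`, and depend only on the configurations inside `X`. -/
def IsSupportedOn (A : SpinOp Λ) (X : Finset Λ) : Prop :=
  (∀ a b : SpinConf Λ, (∃ i ∉ X, a i ≠ b i) → A a b = 0) ∧
  (∀ a b a' b' : SpinConf Λ, (∀ i ∈ X, a i = a' i) → (∀ i ∈ X, b i = b' i) →
    (∀ i ∉ X, a i = b i) → (∀ i ∉ X, a' i = b' i) → A a b = A a' b')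

/-- The localization `(tr_{X^c}[A]/tr_{X^c}(1̂)) ⊗ 1_{X^c}` of an operator `A`
onto the subset `X` (normalized partial trace over `X^c` tensored with identity). -/
noncomputable def localize (A : SpinOp Λ) (X : Finset Λ) : SpinOp Λ := fun a b =>
  (if ∀ i ∉ X, a i = b i then (1 : ℂ) else 0) *
    (∑ c : SpinConf Λ,
      A (fun i => if i ∈ X then a i else c i) (fun i => if i ∈ X then b i else c i))
    / (2 ^ Fintype.card Λ)

/-- `d` is a metric taking nonnegative integer values. -/
def IsLatticeMetric (d : Λ → Λ → ℕ) : Prop :=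
  (∀ i j, d i j = d j i) ∧ (∀ i j, d i j = 0 ↔ i = j) ∧
    (∀ i j l, d i l ≤ d i j + d j l)

/-- The ball `i[r] := {j : d(i,j) ≤ r}`. -/
def ball (d : Λ → Λ → ℕ) (i : Λ) (r : ℕ) : Finset Λ :=
  Finset.univ.filter (fun j => d i j ≤ r)

/-- The extended set `X[r] := ⋃_{i∈X} i[r]`. -/
def extend (d : Λ → Λ → ℕ) (X : Finset Λ) (r : ℕ) : Finset Λ :=
  Finset.univ.filter (fun j => ∃ i ∈ X, d i j ≤ r)

/-- The distance from a site to a (nonempty) finite set of sites. -/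
noncomputable def distSet (d : Λ → Λ → ℕ) (i : Λ) (S : Finset Λ) : ℕ :=
  sInf {m : ℕ | ∃ j ∈ S, d i j = m}

/-- The inner boundary `∂X := {i ∈ X : d(i,X^c) = 1}`. -/
noncomputable def bdry (d : Λ → Λ → ℕ) (X : Finset Λ) : Finset Λ :=
  X.filter (fun i => distSet d i Xᶜ = 1)

/-- The layer `(∂X)_s`: the sites of `X` at distance `-s` from `∂X` when `s ≤ 0`,
and the sites of `X^c` at distance `s` from `∂X` when `s > 0`. -/
noncomputable def layer (d : Λ → Λ → ℕ) (X : Finset Λ) (s : ℤ) : Finset Λ :=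
  if s ≤ 0 then X.filter (fun i => (distSet d i (bdry d X) : ℤ) = -s)
  else Xᶜ.filter (fun i => (distSet d i (bdry d X) : ℤ) = s)

/-- The four single-site Pauli matrices `σ⁰ = 1, σˣ, σʸ, σᶻ`. -/
def pauli : Fin 4 → Matrix (Fin 2) (Fin 2) ℂ :=
  ![1, !![0, 1; 1, 0], !![0, -Complex.I; Complex.I, 0], !![1, 0; 0, -1]]

/-- A Pauli string `⨂_{i∈Λ} σ^{p(i)}`. -/
noncomputable def pauliString (p : Λ → Fin 4) : SpinOp Λ :=
  fun a b => ∏ i, pauli (p i) (a i) (b i)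

/-- The Pauli expansion coefficient `tr(P_p A)/2^{|Λ|}` of `A` at the string `p`. -/
noncomputable def pauliCoeff (A : SpinOp Λ) (p : Λ → Fin 4) : ℂ :=
  (pauliString p * A).trace / (2 ^ Fintype.card Λ)

/-- `J := 3^{k/2} J₀`. -/
noncomputable def Jconst (k : ℕ) (J₀ : ℝ) : ℝ := Real.sqrt 3 ^ k * J₀

/-- `g̃ := max(gk, λJ)` with `J = 3^{k/2} J₀`. -/
noncomputable def gTilde (k : ℕ) (J₀ g lam : ℝ) : ℝ := max (g * k) (lam * Jconst k J₀)

/-- `C₀ := 2^{α-D/2+2} J₀ γ/(2α-D-1) + (80 g̃ γ 2^{α-D/2}/(α-D)) √(2α-2D+γ)`. -/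
noncomputable def C0 (α J₀ γ : ℝ) (D : ℕ) (gt : ℝ) : ℝ :=
  (2 : ℝ) ^ (α - (D : ℝ) / 2 + 2) * J₀ * γ / (2 * α - (D : ℝ) - 1) +
    (80 * gt * γ * (2 : ℝ) ^ (α - (D : ℝ) / 2) / (α - (D : ℝ))) *
      Real.sqrt (2 * α - 2 * (D : ℝ) + γ)

end

/-- A sequence `(Z₀,…,Z_m)` of subsets is connected if each `Z_j` (`j ≥ 1`)
intersects `Z₀ ∪ ⋯ ∪ Z_{j-1}`. -/
def SeqConnected {Λ : Type} [Fintype Λ] [DecidableEq Λ] {m : ℕ}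
    (w : Fin (m + 1) → Finset Λ) : Prop :=
  ∀ j : Fin (m + 1), 0 < (j : ℕ) →
    (w j ∩ (Finset.univ.filter
      (fun j' : Fin (m + 1) => (j' : ℕ) < (j : ℕ))).biUnion w).Nonempty

set_option linter.unusedSectionVars false
set_option maxHeartbeats 1000000

namespace TPAux

/-! ### An instance-free indicator -/

noncomputable def indic (p : Prop) (x : ℝ) : ℝ := by
  classical exact if p then x else 0

lemma indic_pos {p : Prop} (h : p) (x : ℝ) : indic p x = x := by
  simp only [indic, h, if_true]

lemma indic_neg {p : Prop} (h : ¬ p) (x : ℝ) : indic p x = 0 := by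
  simp only [indic, h, if_false]

lemma indic_nonneg {p : Prop} {x : ℝ} (hx : 0 ≤ x) : 0 ≤ indic p x := by
  by_cases h : p
  · rw [indic_pos h]; exact hx
  · rw [indic_neg h]

lemma indic_congr {p q : Prop} (h : p ↔ q) (x : ℝ) : indic p x = indic q x := by
  by_cases hp : p
  · rw [indic_pos hp, indic_pos (h.mp hp)]
  · rw [indic_neg hp, indic_neg (fun hq => hp (h.mpr hq))]

lemma indic_mono {p q : Prop} {x : ℝ} (h : p → q) (hx : 0 ≤ x) :
    indic p x ≤ indic q x := by
  by_cases hp : p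
  · rw [indic_pos hp, indic_pos (h hp)]
  · rw [indic_neg hp]; exact indic_nonneg hx

lemma indic_split {p q r : Prop} {x : ℝ} (h : p → q ∨ r) (hx : 0 ≤ x) :
    indic p x ≤ indic q x + indic r x := by
  by_cases hp : p
  · rw [indic_pos hp]
    rcases h hp with hq | hr
    · rw [indic_pos hq]; exact le_add_of_nonneg_right (indic_nonneg hx)
    · rw [indic_pos hr]; exact le_add_of_nonneg_left (indic_nonneg hx)
  · rw [indic_neg hp]
    exact add_nonneg (indic_nonneg hx) (indic_nonneg hx)

lemma indic_add {p : Prop} {x y z : ℝ} (h : p → x ≤ y + z) (hy : 0 ≤ y) (hz : 0 ≤ z) :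
    indic p x ≤ indic p y + indic p z := by
  by_cases hp : p
  · rw [indic_pos hp, indic_pos hp, indic_pos hp]; exact h hp
  · rw [indic_neg hp, indic_neg hp, indic_neg hp]; simp

variable {Λ : Type} [Fintype Λ] [DecidableEq Λ]

lemma sum_indic {β : Type*} [Fintype β] (P : β → Prop) [DecidablePred P] (F : β → ℝ) :
    ∑ b ∈ Finset.univ.filter P, F b = ∑ b : β, indic (P b) (F b) := by
  rw [Finset.sum_filter]
  refine Finset.sum_congr rfl fun b _ => ?_
  by_cases h : P b
  · rw [if_pos h, indic_pos h]
  · rw [if_neg h, indic_neg h]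

lemma sum_indic_exists_le {ι β : Type*} [Fintype β] (s : Finset ι)
    (R : β → Prop) (Q : ι → β → Prop) (F : β → ℝ) (hF : ∀ b, 0 ≤ F b) :
    ∑ b : β, indic (R b ∧ ∃ i ∈ s, Q i b) (F b)
      ≤ ∑ i ∈ s, ∑ b : β, indic (R b ∧ Q i b) (F b) := by
  classical
  induction s using Finset.induction_on with
  | empty =>
    simp only [Finset.notMem_empty, false_and, exists_false, and_false]
    exact le_of_eq (Finset.sum_eq_zero fun b _ => indic_neg (by tauto) _)
  | @insert x s hx ih =>
    rw [Finset.sum_insert hx]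
    calc ∑ b : β, indic (R b ∧ ∃ i ∈ insert x s, Q i b) (F b)
        ≤ ∑ b : β, (indic (R b ∧ Q x b) (F b) + indic (R b ∧ ∃ i ∈ s, Q i b) (F b)) := by
          refine Finset.sum_le_sum fun b _ => indic_split ?_ (hF b)
          rintro ⟨hR, i, hi, hQ⟩
          rcases Finset.mem_insert.mp hi with rfl | hi
          · exact Or.inl ⟨hR, hQ⟩
          · exact Or.inr ⟨hR, i, hi, hQ⟩
      _ = (∑ b : β, indic (R b ∧ Q x b) (F b))
            + ∑ b : β, indic (R b ∧ ∃ i ∈ s, Q i b) (F b) := Finset.sum_add_distrib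
      _ ≤ _ := add_le_add (le_refl _) ih

/-! ### Peeling the last set of a sequence -/

def snocEquiv (n : ℕ) (β : Type*) : ((Fin n → β) × β) ≃ (Fin (n+1) → β) where
  toFun p := Fin.snoc p.1 p.2
  invFun w := (fun j => w j.castSucc, w (Fin.last n))
  left_inv p := by
    refine Prod.ext ?_ ?_
    · funext j; simp
    · simp
  right_inv w := by
    funext j
    cases j using Fin.lastCases with
    | last => simp
    | cast i => simp

lemma peel_sum {n : ℕ} (P : (Fin (n+1) → Finset Λ) → Prop)
    (F : (Fin (n+1) → Finset Λ) → ℝ) :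
    ∑ w ∈ Finset.univ.filter P, F w
      = ∑ w' : Fin n → Finset Λ, ∑ Z : Finset Λ,
          indic (P (Fin.snoc w' Z)) (F (Fin.snoc w' Z)) := by
  classical
  rw [sum_indic]
  have h := Fintype.sum_equiv (snocEquiv n (Finset Λ))
    (fun p => indic (P (Fin.snoc p.1 p.2)) (F (Fin.snoc p.1 p.2)))
    (fun w => indic (P w) (F w)) (fun p => rfl)
  rw [← h, Fintype.sum_prod_type]

lemma exists_fin_snoc {n : ℕ} (Q : Fin (n+1) → Prop) :
    (∃ j, Q j) ↔ (∃ j : Fin n, Q j.castSucc) ∨ Q (Fin.last n) := by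
  constructor
  · rintro ⟨j, hj⟩
    cases j using Fin.lastCases with
    | last => exact Or.inr hj
    | cast i => exact Or.inl ⟨i, hj⟩
  · rintro (⟨j, hj⟩ | h)
    · exact ⟨j.castSucc, hj⟩
    · exact ⟨Fin.last n, h⟩

lemma biUnion_snoc {n : ℕ} (w' : Fin n → Finset Λ) (Z : Finset Λ) :
    Finset.univ.biUnion (Fin.snoc w' Z : Fin (n+1) → Finset Λ)
      = Finset.univ.biUnion w' ∪ Z := by
  ext x
  simp only [Finset.mem_biUnion, Finset.mem_union, Finset.mem_univ, true_and]
  rw [exists_fin_snoc (fun j => x ∈ (Fin.snoc w' Z : Fin (n+1) → Finset Λ) j)]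
  simp

lemma biUnion_filter_snoc {n : ℕ} (w' : Fin (n+1) → Finset Λ) (Z : Finset Λ) (c : ℕ)
    (hc : c ≤ n + 1) :
    ((Finset.univ.filter (fun j' : Fin (n+2) => (j' : ℕ) < c)).biUnion
        (Fin.snoc w' Z : Fin (n+2) → Finset Λ))
      = (Finset.univ.filter (fun j' : Fin (n+1) => (j' : ℕ) < c)).biUnion w' := by
  ext x
  simp only [Finset.mem_biUnion, Finset.mem_filter, Finset.mem_univ, true_and]
  constructor
  · rintro ⟨j', hlt, hx⟩
    have hj' : (j' : ℕ) < n + 1 := lt_of_lt_of_le hlt hc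
    refine ⟨⟨(j' : ℕ), hj'⟩, hlt, ?_⟩
    have he : j' = (Fin.castSucc (⟨(j' : ℕ), hj'⟩ : Fin (n+1))) := by
      apply Fin.ext; simp
    rw [he, Fin.snoc_castSucc] at hx
    exact hx
  · rintro ⟨j'', hlt, hx⟩
    refine ⟨j''.castSucc, by simpa using hlt, ?_⟩
    rw [Fin.snoc_castSucc]
    exact hx

lemma conn_snoc {n : ℕ} {w' : Fin (n+1) → Finset Λ} {Z : Finset Λ}
    (h : SeqConnected (Fin.snoc w' Z : Fin (n+2) → Finset Λ)) :
    SeqConnected w' ∧ (Z ∩ Finset.univ.biUnion w').Nonempty := by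
  constructor
  · intro j hj
    have h1 := h j.castSucc (by simpa using hj)
    rw [Fin.snoc_castSucc] at h1
    have h2 := biUnion_filter_snoc w' Z (j : ℕ) (le_of_lt j.isLt)
    simp only [Fin.coe_castSucc] at h1
    rwa [h2] at h1
  · have h1 := h (Fin.last (n+1)) (by simp)
    rw [Fin.snoc_last] at h1
    have h2 := biUnion_filter_snoc w' Z (n+1) le_rfl
    have h3 : (Finset.univ.filter (fun j' : Fin (n+1) => (j' : ℕ) < n+1)) = Finset.univ :=
      Finset.filter_true_of_mem (fun j' _ => j'.isLt)
    rw [h3] at h2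
    simp only [Fin.val_last] at h1
    rwa [h2] at h1

lemma good_snoc {n k : ℕ} {w' : Fin n → Finset Λ} {Z : Finset Λ}
    (h : ∀ j : Fin (n+1), ((Fin.snoc w' Z : Fin (n+1) → Finset Λ) j).Nonempty
        ∧ ((Fin.snoc w' Z : Fin (n+1) → Finset Λ) j).card ≤ k) :
    (∀ j, (w' j).Nonempty ∧ (w' j).card ≤ k) ∧ Z.card ≤ k := by
  refine ⟨fun j => ?_, ?_⟩
  · have := h j.castSucc; rwa [Fin.snoc_castSucc] at this
  · have := h (Fin.last n); rw [Fin.snoc_last] at this; exact this.2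

lemma prod_snoc {n : ℕ} (a : Finset Λ → ℝ) (w' : Fin n → Finset Λ) (Z : Finset Λ) :
    (∏ j : Fin (n+1), a ((Fin.snoc w' Z : Fin (n+1) → Finset Λ) j))
      = (∏ j, a (w' j)) * a Z := by
  rw [Fin.prod_univ_castSucc]
  simp

lemma biUnion_fin1 (Z : Finset Λ) : Finset.univ.biUnion (fun _ : Fin 1 => Z) = Z := by
  ext x; simp

lemma conn_fin1 (Z : Finset Λ) : SeqConnected (fun _ : Fin 1 => Z) := by
  intro j hj
  have := j.isLt
  omega

lemma sum_fin_one (P : (Fin 1 → Finset Λ) → Prop) (F : (Fin 1 → Finset Λ) → ℝ) :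
    ∑ w ∈ Finset.univ.filter P, F w
      = ∑ Z : Finset Λ, indic (P (fun _ => Z)) (F (fun _ => Z)) := by
  classical
  rw [sum_indic]
  exact (Fintype.sum_equiv (Equiv.funUnique (Fin 1) (Finset Λ)).symm
    (fun Z => indic (P (fun _ => Z)) (F (fun _ => Z)))
    (fun w => indic (P w) (F w)) (fun Z => rfl)).symm

/-! ### The two master estimates for the peeled sums -/

lemma inter_nonempty_iff (Z S : Finset Λ) :
    (Z ∩ S).Nonempty ↔ ∃ i ∈ Z, i ∈ S := by
  constructor
  · rintro ⟨x, hx⟩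
    rw [Finset.mem_inter] at hx
    exact ⟨x, hx.1, hx.2⟩
  · rintro ⟨x, hx1, hx2⟩
    exact ⟨x, Finset.mem_inter.mpr ⟨hx1, hx2⟩⟩

lemma inter_nonempty_iff' (Z S : Finset Λ) :
    (Z ∩ S).Nonempty ↔ ∃ i ∈ S, i ∈ Z := by
  rw [inter_nonempty_iff]
  constructor
  · rintro ⟨x, h1, h2⟩; exact ⟨x, h2, h1⟩
  · rintro ⟨x, h1, h2⟩; exact ⟨x, h2, h1⟩

/-- Prefix-anchored master bound. -/
lemma step_T12 {m : ℕ} (R : (Fin (m+1) → Finset Λ) → Prop) (ZC : Finset Λ → Prop)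
    (V : (Fin (m+1) → Finset Λ) → ℝ) (W : Finset Λ → ℝ)
    (hV : ∀ w', 0 ≤ V w') (hW : ∀ Z, 0 ≤ W Z) :
    (∑ w' : Fin (m+1) → Finset Λ, ∑ Z : Finset Λ,
        indic (R w' ∧ ZC Z ∧ (Z ∩ Finset.univ.biUnion w').Nonempty) (V w' * W Z))
      ≤ ∑ w' : Fin (m+1) → Finset Λ, indic (R w')
          (V w' * ∑ i₁ ∈ Finset.univ.biUnion w',
            ∑ Z : Finset Λ, indic (ZC Z ∧ i₁ ∈ Z) (W Z)) := by
  apply Finset.sum_le_sum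
  intro w' _
  by_cases hR : R w'
  · rw [indic_pos hR]
    have h1 : ∀ Z : Finset Λ,
        indic (R w' ∧ ZC Z ∧ (Z ∩ Finset.univ.biUnion w').Nonempty) (V w' * W Z)
          = V w' * indic (ZC Z ∧ (Z ∩ Finset.univ.biUnion w').Nonempty) (W Z) := by
      intro Z
      by_cases hz : ZC Z ∧ (Z ∩ Finset.univ.biUnion w').Nonempty
      · rw [indic_pos ⟨hR, hz⟩, indic_pos hz]
      · rw [indic_neg (by tauto), indic_neg hz, mul_zero]
    calc (∑ Z : Finset Λ,
          indic (R w' ∧ ZC Z ∧ (Z ∩ Finset.univ.biUnion w').Nonempty) (V w' * W Z))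
        = V w' * ∑ Z : Finset Λ,
            indic (ZC Z ∧ (Z ∩ Finset.univ.biUnion w').Nonempty) (W Z) := by
          rw [Finset.mul_sum]; exact Finset.sum_congr rfl fun Z _ => h1 Z
      _ ≤ _ := by
          refine mul_le_mul_of_nonneg_left ?_ (hV w')
          refine le_trans (le_of_eq (Finset.sum_congr rfl fun Z _ =>
            indic_congr (and_congr_right fun _ => inter_nonempty_iff' _ _) _)) ?_
          exact sum_indic_exists_le (Finset.univ.biUnion w') ZC (fun i₁ Z => i₁ ∈ Z) W hW
  · rw [indic_neg hR]
    refine le_of_eq (Finset.sum_eq_zero fun Z _ => indic_neg (by tauto) _)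

/-- Last-set-anchored master bound. -/
lemma step_T2 {m : ℕ} (R : (Fin (m+1) → Finset Λ) → Prop) (ZC : Finset Λ → Prop)
    (V : (Fin (m+1) → Finset Λ) → ℝ) (W : Finset Λ → ℝ)
    (hV : ∀ w', 0 ≤ V w') (hW : ∀ Z, 0 ≤ W Z) :
    (∑ w' : Fin (m+1) → Finset Λ, ∑ Z : Finset Λ,
        indic (R w' ∧ ZC Z ∧ (Z ∩ Finset.univ.biUnion w').Nonempty) (V w' * W Z))
      ≤ ∑ Z : Finset Λ, indic (ZC Z)
          (W Z * ∑ i₁ ∈ Z, ∑ w' : Fin (m+1) → Finset Λ,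
            indic (R w' ∧ i₁ ∈ Finset.univ.biUnion w') (V w')) := by
  rw [Finset.sum_comm]
  apply Finset.sum_le_sum
  intro Z _
  by_cases hz : ZC Z
  · rw [indic_pos hz]
    have h1 : ∀ w' : Fin (m+1) → Finset Λ,
        indic (R w' ∧ ZC Z ∧ (Z ∩ Finset.univ.biUnion w').Nonempty) (V w' * W Z)
          = W Z * indic (R w' ∧ (Z ∩ Finset.univ.biUnion w').Nonempty) (V w') := by
      intro w'
      by_cases hh : R w' ∧ (Z ∩ Finset.univ.biUnion w').Nonempty
      · rw [indic_pos ⟨hh.1, hz, hh.2⟩, indic_pos hh, mul_comm]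
      · rw [indic_neg (by tauto), indic_neg hh, mul_zero]
    calc (∑ w' : Fin (m+1) → Finset Λ,
          indic (R w' ∧ ZC Z ∧ (Z ∩ Finset.univ.biUnion w').Nonempty) (V w' * W Z))
        = W Z * ∑ w' : Fin (m+1) → Finset Λ,
            indic (R w' ∧ (Z ∩ Finset.univ.biUnion w').Nonempty) (V w') := by
          rw [Finset.mul_sum]; exact Finset.sum_congr rfl fun w' _ => h1 w'
      _ ≤ _ := by
          refine mul_le_mul_of_nonneg_left ?_ (hW Z)
          refine le_trans (le_of_eq (Finset.sum_congr rfl fun w' _ =>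
            indic_congr (and_congr_right fun _ => inter_nonempty_iff _ _) _)) ?_
          exact sum_indic_exists_le Z R (fun i₁ w' => i₁ ∈ Finset.univ.biUnion w') V hV
  · rw [indic_neg hz]
    refine le_of_eq (Finset.sum_eq_zero fun w' _ => indic_neg (by tauto) _)


lemma indic_mul_const (p : Prop) (x c : ℝ) : indic p (x * c) = indic p x * c := by
  by_cases h : p
  · rw [indic_pos h, indic_pos h]
  · rw [indic_neg h, indic_neg h, zero_mul]

lemma indic_payload_mono {p : Prop} {x y : ℝ} (h : p → x ≤ y) (hy : 0 ≤ y) :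
    indic p x ≤ indic p y := by
  by_cases hp : p
  · rw [indic_pos hp, indic_pos hp]; exact h hp
  · rw [indic_neg hp, indic_neg hp]

lemma indic_split4 {p q1 q2 q3 q4 : Prop} {x : ℝ} (h : p → q1 ∨ q2 ∨ q3 ∨ q4) (hx : 0 ≤ x) :
    indic p x ≤ indic q1 x + indic q2 x + indic q3 x + indic q4 x := by
  by_cases hp : p
  · rw [indic_pos hp]
    rcases h hp with h1 | h2 | h3 | h4
    · rw [indic_pos h1]
      have := indic_nonneg (p := q2) hx; have := indic_nonneg (p := q3) hx
      have := indic_nonneg (p := q4) hx; linarith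
    · rw [indic_pos h2]
      have := indic_nonneg (p := q1) hx; have := indic_nonneg (p := q3) hx
      have := indic_nonneg (p := q4) hx; linarith
    · rw [indic_pos h3]
      have := indic_nonneg (p := q1) hx; have := indic_nonneg (p := q2) hx
      have := indic_nonneg (p := q4) hx; linarith
    · rw [indic_pos h4]
      have := indic_nonneg (p := q1) hx; have := indic_nonneg (p := q2) hx
      have := indic_nonneg (p := q3) hx; linarith
  · rw [indic_neg hp]
    have := indic_nonneg (p := q1) hx; have := indic_nonneg (p := q2) hx
    have := indic_nonneg (p := q3) hx; have := indic_nonneg (p := q4) hx; linarith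

variable {Λ : Type} [Fintype Λ] [DecidableEq Λ]

noncomputable def fw (d : Λ → Λ → ℕ) (α : ℝ) (x y : Λ) : ℝ := ((d x y : ℝ) + 1) ^ (-α)

lemma fw_nonneg (d : Λ → Λ → ℕ) (α : ℝ) (x y : Λ) : 0 ≤ fw d α x y :=
  Real.rpow_nonneg (by positivity) _

lemma sum_fw_nonneg (d : Λ → Λ → ℕ) (α : ℝ) (S : Finset Λ) (y : Λ) :
    0 ≤ ∑ x ∈ S, fw d α x y :=
  Finset.sum_nonneg fun x _ => fw_nonneg d α x y

/-- site bound in indicator form -/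
lemma site_indic (a : Finset Λ → ℝ) (g : ℝ)
    (hsite : ∀ i : Λ, ∑ Z ∈ Finset.univ.filter (fun Z : Finset Λ => i ∈ Z), a Z ≤ g)
    (x : Λ) : ∑ Z : Finset Λ, indic (x ∈ Z) (a Z) ≤ g := by
  rw [← sum_indic]; exact hsite x

/-- pair bound in indicator form -/
lemma pair_indic (d : Λ → Λ → ℕ) (α : ℝ) (a : Finset Λ → ℝ) (J : ℝ)
    (hpair : ∀ i i' : Λ,
      ∑ Z ∈ Finset.univ.filter (fun Z : Finset Λ => i ∈ Z ∧ i' ∈ Z), a Z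
        ≤ J * ((d i i' : ℝ) + 1) ^ (-α))
    (x y : Λ) : ∑ Z : Finset Λ, indic (x ∈ Z ∧ y ∈ Z) (a Z) ≤ J * fw d α x y := by
  rw [← sum_indic]; exact hpair x y

/-- convolution bound in indicator form:
`∑_{Z ∋ x} a_Z ∑_{i₀ ∈ Z} f(i₀,y) ≤ λ J f(x,y)`. -/
lemma conv_indic (d : Λ → Λ → ℕ) (α : ℝ) (a : Finset Λ → ℝ) (J lam : ℝ)
    (hJ : 0 < J) (ha : ∀ Z, 0 ≤ a Z)
    (hpair : ∀ i i' : Λ,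
      ∑ Z ∈ Finset.univ.filter (fun Z : Finset Λ => i ∈ Z ∧ i' ∈ Z), a Z
        ≤ J * ((d i i' : ℝ) + 1) ^ (-α))
    (hlam₂ : ∀ i i' : Λ,
      ∑ i₀ : Λ, ((d i i₀ : ℝ) + 1) ^ (-α) * ((d i₀ i' : ℝ) + 1) ^ (-α)
        ≤ lam * ((d i i' : ℝ) + 1) ^ (-α))
    (x y : Λ) :
    ∑ Z : Finset Λ, indic (x ∈ Z) (a Z * ∑ i₀ ∈ Z, fw d α i₀ y)
      ≤ lam * J * fw d α x y := by
  have step1 : ∀ Z : Finset Λ, indic (x ∈ Z) (a Z * ∑ i₀ ∈ Z, fw d α i₀ y)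
      = ∑ i₀ : Λ, indic (x ∈ Z ∧ i₀ ∈ Z) (a Z * fw d α i₀ y) := by
    intro Z
    by_cases hx : x ∈ Z
    · rw [indic_pos hx]
      have h2 : a Z * ∑ i₀ ∈ Z, fw d α i₀ y = ∑ i₀ : Λ, indic (i₀ ∈ Z) (a Z * fw d α i₀ y) := by
        rw [← sum_indic (fun i₀ => i₀ ∈ Z) (fun i₀ => a Z * fw d α i₀ y), Finset.mul_sum]
        congr 1
        ext i₀; simp
      rw [h2]
      exact Finset.sum_congr rfl fun i₀ _ => indic_congr (by simp [hx]) _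
    · rw [indic_neg hx]
      exact (Finset.sum_eq_zero fun i₀ _ => indic_neg (by tauto) _).symm
  calc ∑ Z : Finset Λ, indic (x ∈ Z) (a Z * ∑ i₀ ∈ Z, fw d α i₀ y)
      = ∑ Z : Finset Λ, ∑ i₀ : Λ, indic (x ∈ Z ∧ i₀ ∈ Z) (a Z * fw d α i₀ y) :=
        Finset.sum_congr rfl fun Z _ => step1 Z
    _ = ∑ i₀ : Λ, ∑ Z : Finset Λ, indic (x ∈ Z ∧ i₀ ∈ Z) (a Z * fw d α i₀ y) :=
        Finset.sum_comm
    _ = ∑ i₀ : Λ, (∑ Z : Finset Λ, indic (x ∈ Z ∧ i₀ ∈ Z) (a Z)) * fw d α i₀ y := by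
        refine Finset.sum_congr rfl fun i₀ _ => ?_
        rw [Finset.sum_mul]
        exact Finset.sum_congr rfl fun Z _ => indic_mul_const _ _ _
    _ ≤ ∑ i₀ : Λ, (J * fw d α x i₀) * fw d α i₀ y := by
        refine Finset.sum_le_sum fun i₀ _ => ?_
        exact mul_le_mul_of_nonneg_right (pair_indic d α a J hpair x i₀) (fw_nonneg d α i₀ y)
    _ = J * ∑ i₀ : Λ, fw d α x i₀ * fw d α i₀ y := by
        rw [Finset.mul_sum]; exact Finset.sum_congr rfl fun i₀ _ => by ring
    _ ≤ J * (lam * fw d α x y) := mul_le_mul_of_nonneg_left (hlam₂ x y) hJ.le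
    _ = lam * J * fw d α x y := by ring

lemma card_biUnion_le_real {m k : ℕ} (w' : Fin (m+1) → Finset Λ)
    (hgood : ∀ j, (w' j).Nonempty ∧ (w' j).card ≤ k) :
    ((Finset.univ.biUnion w').card : ℝ) ≤ ((m : ℝ) + 1) * k := by
  have h1 : (Finset.univ.biUnion w').card ≤ (m+1) * k := by
    calc (Finset.univ.biUnion w').card ≤ ∑ j : Fin (m+1), (w' j).card :=
          Finset.card_biUnion_le
      _ ≤ ∑ _j : Fin (m+1), k := Finset.sum_le_sum fun j _ => (hgood j).2
      _ = (m+1) * k := by simp [Finset.sum_const, mul_comm]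
  calc ((Finset.univ.biUnion w').card : ℝ) ≤ (((m+1) * k : ℕ) : ℝ) := by exact_mod_cast h1
    _ = ((m : ℝ) + 1) * k := by push_cast; ring

lemma peel_indic {n : ℕ} (P : (Fin (n+1) → Finset Λ) → Prop)
    (F : (Fin (n+1) → Finset Λ) → ℝ) :
    ∑ w : Fin (n+1) → Finset Λ, indic (P w) (F w)
      = ∑ w' : Fin n → Finset Λ, ∑ Z : Finset Λ,
          indic (P (Fin.snoc w' Z)) (F (Fin.snoc w' Z)) := by
  have h := Fintype.sum_equiv (snocEquiv n (Finset Λ))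
    (fun p => indic (P (Fin.snoc p.1 p.2)) (F (Fin.snoc p.1 p.2)))
    (fun w => indic (P w) (F w)) (fun p => rfl)
  rw [← h, Fintype.sum_prod_type]

lemma fin_one_indic (P : (Fin 1 → Finset Λ) → Prop) (F : (Fin 1 → Finset Λ) → ℝ) :
    ∑ w : Fin 1 → Finset Λ, indic (P w) (F w)
      = ∑ Z : Finset Λ, indic (P (fun _ => Z)) (F (fun _ => Z)) :=
  (Fintype.sum_equiv (Equiv.funUnique (Fin 1) (Finset Λ)).symm
    (fun Z => indic (P (fun _ => Z)) (F (fun _ => Z)))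
    (fun w => indic (P w) (F w)) (fun Z => rfl)).symm

/-! ### The three cluster sums -/

noncomputable def PSum (k : ℕ) (a : Finset Λ → ℝ) (m : ℕ) (i : Λ) : ℝ :=
  ∑ w : Fin (m+1) → Finset Λ,
    indic ((∀ j, (w j).Nonempty ∧ (w j).card ≤ k) ∧ SeqConnected w ∧
      i ∈ Finset.univ.biUnion w) (∏ j, a (w j))

noncomputable def BSum (d : Λ → Λ → ℕ) (α : ℝ) (k : ℕ) (a : Finset Λ → ℝ)
    (m : ℕ) (i i' : Λ) : ℝ :=
  ∑ w : Fin (m+1) → Finset Λ,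
    indic ((∀ j, (w j).Nonempty ∧ (w j).card ≤ k) ∧ SeqConnected w ∧
      i ∈ Finset.univ.biUnion w)
      ((∏ j, a (w j)) * ∑ i₀ ∈ Finset.univ.biUnion w, fw d α i₀ i')

noncomputable def ASum (k : ℕ) (a : Finset Λ → ℝ) (m : ℕ) (i i' : Λ) : ℝ :=
  ∑ w : Fin (m+1) → Finset Λ,
    indic ((∀ j, (w j).Nonempty ∧ (w j).card ≤ k) ∧ SeqConnected w ∧
      i ∈ Finset.univ.biUnion w ∧ i' ∈ Finset.univ.biUnion w) (∏ j, a (w j))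

lemma PSum_nonneg (k : ℕ) (a : Finset Λ → ℝ) (ha : ∀ Z, 0 ≤ a Z) (m : ℕ) (i : Λ) :
    0 ≤ PSum k a m i :=
  Finset.sum_nonneg fun w _ => indic_nonneg (Finset.prod_nonneg fun j _ => ha (w j))

lemma BSum_nonneg (d : Λ → Λ → ℕ) (α : ℝ) (k : ℕ) (a : Finset Λ → ℝ)
    (ha : ∀ Z, 0 ≤ a Z) (m : ℕ) (i i' : Λ) : 0 ≤ BSum d α k a m i i' :=
  Finset.sum_nonneg fun w _ => indic_nonneg
    (mul_nonneg (Finset.prod_nonneg fun j _ => ha (w j)) (sum_fw_nonneg d α _ i'))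

/-! ### The one-point bound -/

lemma PSum_le (k : ℕ) (a : Finset Λ → ℝ) (g : ℝ) (hg : 0 ≤ g) (ha : ∀ Z, 0 ≤ a Z)
    (hsite : ∀ i : Λ, ∑ Z ∈ Finset.univ.filter (fun Z : Finset Λ => i ∈ Z), a Z ≤ g) :
    ∀ m (i : Λ), PSum k a m i ≤ ((m+1).factorial : ℝ) * g * (g * k)^m := by
  intro m
  induction m with
  | zero =>
    intro i
    rw [PSum, fin_one_indic]
    have hb : ∀ Z : Finset Λ,
        indic ((∀ j : Fin 1, ((fun _ => Z) j).Nonempty ∧ ((fun _ => Z) j).card ≤ k) ∧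
            SeqConnected (fun _ : Fin 1 => Z) ∧
            i ∈ Finset.univ.biUnion (fun _ : Fin 1 => Z))
          (∏ _j : Fin 1, a Z) ≤ indic (i ∈ Z) (a Z) := by
      intro Z
      have hpr : (∏ _j : Fin 1, a Z) = a Z := by simp
      rw [hpr]
      refine indic_mono ?_ (ha Z)
      rintro ⟨-, -, hmem⟩
      rwa [biUnion_fin1] at hmem
    have htgt : ((0+1).factorial : ℝ) * g * (g * (k:ℝ))^0 = g := by norm_num
    rw [htgt]
    exact le_trans (Finset.sum_le_sum fun Z _ => hb Z) (site_indic a g hsite i)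
  | succ m ih =>
    intro i
    have hprodnn : ∀ w' : Fin (m+1) → Finset Λ, (0:ℝ) ≤ ∏ j, a (w' j) :=
      fun w' => Finset.prod_nonneg fun j _ => ha (w' j)
    have hPm : (0:ℝ) ≤ ((m+1).factorial : ℝ) * g * (g * k)^m := by positivity
    rw [PSum, peel_indic]
    -- split each term into the two membership cases
    have split : ∀ (w' : Fin (m+1) → Finset Λ) (Z : Finset Λ),
        indic ((∀ j, ((Fin.snoc w' Z : Fin (m+2) → Finset Λ) j).Nonempty ∧
              ((Fin.snoc w' Z : Fin (m+2) → Finset Λ) j).card ≤ k) ∧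
            SeqConnected (Fin.snoc w' Z : Fin (m+2) → Finset Λ) ∧
            i ∈ Finset.univ.biUnion (Fin.snoc w' Z : Fin (m+2) → Finset Λ))
          (∏ j : Fin (m+2), a ((Fin.snoc w' Z : Fin (m+2) → Finset Λ) j))
        ≤ indic (((∀ j, (w' j).Nonempty ∧ (w' j).card ≤ k) ∧ SeqConnected w' ∧
              i ∈ Finset.univ.biUnion w') ∧ True ∧
              (Z ∩ Finset.univ.biUnion w').Nonempty)
            ((∏ j, a (w' j)) * a Z)
          + indic (((∀ j, (w' j).Nonempty ∧ (w' j).card ≤ k) ∧ SeqConnected w') ∧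
              (i ∈ Z ∧ Z.card ≤ k) ∧ (Z ∩ Finset.univ.biUnion w').Nonempty)
            ((∏ j, a (w' j)) * a Z) := by
      intro w' Z
      rw [prod_snoc]
      refine indic_split ?_ (mul_nonneg (hprodnn w') (ha Z))
      rintro ⟨hgood, hconn, hmem⟩
      obtain ⟨hg', hZk⟩ := good_snoc hgood
      obtain ⟨hc', hne⟩ := conn_snoc hconn
      rw [biUnion_snoc] at hmem
      rcases Finset.mem_union.mp hmem with hiU | hiZ
      · exact Or.inl ⟨⟨hg', hc', hiU⟩, trivial, hne⟩
      · exact Or.inr ⟨⟨hg', hc'⟩, ⟨hiZ, hZk⟩, hne⟩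
    calc (∑ w' : Fin (m+1) → Finset Λ, ∑ Z : Finset Λ, indic _ _)
        ≤ ∑ w' : Fin (m+1) → Finset Λ, ∑ Z : Finset Λ,
            (indic (((∀ j, (w' j).Nonempty ∧ (w' j).card ≤ k) ∧ SeqConnected w' ∧
                i ∈ Finset.univ.biUnion w') ∧ True ∧
                (Z ∩ Finset.univ.biUnion w').Nonempty) ((∏ j, a (w' j)) * a Z)
             + indic (((∀ j, (w' j).Nonempty ∧ (w' j).card ≤ k) ∧ SeqConnected w') ∧
                (i ∈ Z ∧ Z.card ≤ k) ∧ (Z ∩ Finset.univ.biUnion w').Nonempty)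
                ((∏ j, a (w' j)) * a Z)) :=
          Finset.sum_le_sum fun w' _ => Finset.sum_le_sum fun Z _ => split w' Z
      _ = (∑ w' : Fin (m+1) → Finset Λ, ∑ Z : Finset Λ,
            indic (((∀ j, (w' j).Nonempty ∧ (w' j).card ≤ k) ∧ SeqConnected w' ∧
                i ∈ Finset.univ.biUnion w') ∧ True ∧
                (Z ∩ Finset.univ.biUnion w').Nonempty) ((∏ j, a (w' j)) * a Z))
          + (∑ w' : Fin (m+1) → Finset Λ, ∑ Z : Finset Λ,
            indic (((∀ j, (w' j).Nonempty ∧ (w' j).card ≤ k) ∧ SeqConnected w') ∧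
                (i ∈ Z ∧ Z.card ≤ k) ∧ (Z ∩ Finset.univ.biUnion w').Nonempty)
                ((∏ j, a (w' j)) * a Z)) := by
          rw [← Finset.sum_add_distrib]
          exact Finset.sum_congr rfl fun w' _ => Finset.sum_add_distrib
      _ ≤ (((m:ℝ)+1) * k * g) * (((m+1).factorial : ℝ) * g * (g * k)^m)
          + (((k:ℝ) * (((m+1).factorial : ℝ) * g * (g * k)^m)) * g) := by
          gcongr ?_ + ?_
          · -- T1 via step_T12
            refine le_trans (step_T12 _ (fun _ => True) _ a hprodnn ha) ?_
            have hsiteI : ∀ i₁ : Λ,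
                (∑ Z : Finset Λ, indic (True ∧ i₁ ∈ Z) (a Z)) ≤ g := by
              intro i₁
              refine le_trans (le_of_eq (Finset.sum_congr rfl fun Z _ =>
                indic_congr (by simp [and_assoc]) _)) (site_indic a g hsite i₁)
            calc (∑ w' : Fin (m+1) → Finset Λ,
                  indic ((∀ j, (w' j).Nonempty ∧ (w' j).card ≤ k) ∧ SeqConnected w' ∧
                      i ∈ Finset.univ.biUnion w')
                    ((∏ j, a (w' j)) * ∑ i₁ ∈ Finset.univ.biUnion w',
                      ∑ Z : Finset Λ, indic (True ∧ i₁ ∈ Z) (a Z)))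
                ≤ ∑ w' : Fin (m+1) → Finset Λ,
                    indic ((∀ j, (w' j).Nonempty ∧ (w' j).card ≤ k) ∧ SeqConnected w' ∧
                        i ∈ Finset.univ.biUnion w')
                      ((∏ j, a (w' j)) * (((m:ℝ)+1) * k * g)) := by
                  refine Finset.sum_le_sum fun w' _ => indic_payload_mono (fun hR => ?_)
                    (mul_nonneg (hprodnn w') (by positivity))
                  refine mul_le_mul_of_nonneg_left ?_ (hprodnn w')
                  calc (∑ i₁ ∈ Finset.univ.biUnion w',
                        ∑ Z : Finset Λ, indic (True ∧ i₁ ∈ Z) (a Z))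
                      ≤ ∑ i₁ ∈ Finset.univ.biUnion w', g :=
                        Finset.sum_le_sum fun i₁ _ => hsiteI i₁
                    _ = ((Finset.univ.biUnion w').card : ℝ) * g := by
                        rw [Finset.sum_const, nsmul_eq_mul]
                    _ ≤ (((m:ℝ)+1) * k) * g :=
                        mul_le_mul_of_nonneg_right (card_biUnion_le_real w' hR.1) hg
                    _ = ((m:ℝ)+1) * k * g := by ring
              _ = (((m:ℝ)+1) * k * g) * PSum k a m i := by
                  rw [PSum, Finset.mul_sum]
                  exact Finset.sum_congr rfl fun w' _ => by
                    rw [indic_mul_const]; ring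
              _ ≤ (((m:ℝ)+1) * k * g) * (((m+1).factorial : ℝ) * g * (g * k)^m) :=
                  mul_le_mul_of_nonneg_left (ih i) (by positivity)
          · -- T2 via step_T2
            refine le_trans (step_T2 _ (fun Z => i ∈ Z ∧ Z.card ≤ k) _ a hprodnn ha) ?_
            have hinner : ∀ (i₁ : Λ),
                (∑ w' : Fin (m+1) → Finset Λ,
                  indic (((∀ j, (w' j).Nonempty ∧ (w' j).card ≤ k) ∧ SeqConnected w') ∧
                    i₁ ∈ Finset.univ.biUnion w') (∏ j, a (w' j)))
                  ≤ ((m+1).factorial : ℝ) * g * (g * k)^m := by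
              intro i₁
              have he : (∑ w' : Fin (m+1) → Finset Λ,
                  indic (((∀ j, (w' j).Nonempty ∧ (w' j).card ≤ k) ∧ SeqConnected w') ∧
                    i₁ ∈ Finset.univ.biUnion w') (∏ j, a (w' j)))
                  = PSum k a m i₁ := by
                rw [PSum]
                exact Finset.sum_congr rfl fun w' _ => indic_congr and_assoc _
              rw [he]; exact ih i₁
            calc (∑ Z : Finset Λ, indic (i ∈ Z ∧ Z.card ≤ k)
                  (a Z * ∑ i₁ ∈ Z, ∑ w' : Fin (m+1) → Finset Λ,
                    indic (((∀ j, (w' j).Nonempty ∧ (w' j).card ≤ k) ∧ SeqConnected w') ∧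
                      i₁ ∈ Finset.univ.biUnion w') (∏ j, a (w' j))))
                ≤ ∑ Z : Finset Λ, indic (i ∈ Z ∧ Z.card ≤ k)
                    (a Z * ((k:ℝ) * (((m+1).factorial : ℝ) * g * (g * k)^m))) := by
                  refine Finset.sum_le_sum fun Z _ => indic_payload_mono (fun hZC => ?_)
                    (mul_nonneg (ha Z) (by positivity))
                  refine mul_le_mul_of_nonneg_left ?_ (ha Z)
                  calc (∑ i₁ ∈ Z, ∑ w' : Fin (m+1) → Finset Λ, indic _ _)
                      ≤ ∑ _i₁ ∈ Z, ((m+1).factorial : ℝ) * g * (g * k)^m :=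
                        Finset.sum_le_sum fun i₁ _ => hinner i₁
                    _ = (Z.card : ℝ) * (((m+1).factorial : ℝ) * g * (g * k)^m) := by
                        rw [Finset.sum_const, nsmul_eq_mul]
                    _ ≤ (k:ℝ) * (((m+1).factorial : ℝ) * g * (g * k)^m) := by
                        refine mul_le_mul_of_nonneg_right ?_ hPm
                        exact_mod_cast hZC.2
              _ = ((k:ℝ) * (((m+1).factorial : ℝ) * g * (g * k)^m))
                    * ∑ Z : Finset Λ, indic (i ∈ Z ∧ Z.card ≤ k) (a Z) := by
                  rw [Finset.mul_sum]
                  refine Finset.sum_congr rfl fun Z _ => ?_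
                  rw [indic_mul_const]; ring
              _ ≤ ((k:ℝ) * (((m+1).factorial : ℝ) * g * (g * k)^m)) * g := by
                  refine mul_le_mul_of_nonneg_left ?_ (by positivity)
                  refine le_trans (Finset.sum_le_sum fun Z _ =>
                    indic_mono (fun h => h.1) (ha Z)) (site_indic a g hsite i)
      _ = ((m+1+1).factorial : ℝ) * g * (g * k)^(m+1) := by
          have hfact : ((m+1+1).factorial : ℝ) = ((m:ℝ)+2) * ((m+1).factorial : ℝ) := by
            rw [Nat.factorial_succ]; push_cast; ring
          rw [hfact]
          ring



/-- finisher for prefix-anchored terms with a constant inner bound -/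
lemma T12_finish_const {m k : ℕ} (g : ℝ) (hg : 0 ≤ g)
    (R : (Fin (m+1) → Finset Λ) → Prop) (V : (Fin (m+1) → Finset Λ) → ℝ)
    (hV : ∀ w', 0 ≤ V w')
    (hRgood : ∀ w', R w' → ∀ j, (w' j).Nonempty ∧ (w' j).card ≤ k)
    (T : Λ → ℝ) (hT : ∀ i₁, T i₁ ≤ g) :
    (∑ w' : Fin (m+1) → Finset Λ,
        indic (R w') (V w' * ∑ i₁ ∈ Finset.univ.biUnion w', T i₁))
      ≤ (((m:ℝ)+1) * k * g) * ∑ w' : Fin (m+1) → Finset Λ, indic (R w') (V w') := by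
  calc (∑ w' : Fin (m+1) → Finset Λ,
        indic (R w') (V w' * ∑ i₁ ∈ Finset.univ.biUnion w', T i₁))
      ≤ ∑ w' : Fin (m+1) → Finset Λ,
          indic (R w') (V w' * (((m:ℝ)+1) * k * g)) := by
        refine Finset.sum_le_sum fun w' _ => indic_payload_mono (fun hR => ?_)
          (mul_nonneg (hV w') (by positivity))
        refine mul_le_mul_of_nonneg_left ?_ (hV w')
        calc (∑ i₁ ∈ Finset.univ.biUnion w', T i₁)
            ≤ ∑ _i₁ ∈ Finset.univ.biUnion w', g :=
              Finset.sum_le_sum fun i₁ _ => hT i₁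
          _ = ((Finset.univ.biUnion w').card : ℝ) * g := by
              rw [Finset.sum_const, nsmul_eq_mul]
          _ ≤ (((m:ℝ)+1) * k) * g :=
              mul_le_mul_of_nonneg_right (card_biUnion_le_real w' (hRgood w' hR)) hg
          _ = ((m:ℝ)+1) * k * g := by ring
    _ = (((m:ℝ)+1) * k * g) * ∑ w' : Fin (m+1) → Finset Λ, indic (R w') (V w') := by
        rw [Finset.mul_sum]
        exact Finset.sum_congr rfl fun w' _ => by rw [indic_mul_const]; ring

/-- finisher for prefix-anchored terms with an `fw`-type inner bound -/
lemma T12_finish_fw {m : ℕ} (d : Λ → Λ → ℕ) (α : ℝ) (i' : Λ)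
    (R : (Fin (m+1) → Finset Λ) → Prop) (V : (Fin (m+1) → Finset Λ) → ℝ)
    (hV : ∀ w', 0 ≤ V w') (c : ℝ) (hc : 0 ≤ c)
    (T : Λ → ℝ) (hT : ∀ i₁, T i₁ ≤ c * fw d α i₁ i') :
    (∑ w' : Fin (m+1) → Finset Λ,
        indic (R w') (V w' * ∑ i₁ ∈ Finset.univ.biUnion w', T i₁))
      ≤ c * ∑ w' : Fin (m+1) → Finset Λ,
          indic (R w') (V w' * ∑ i₁ ∈ Finset.univ.biUnion w', fw d α i₁ i') := by
  calc (∑ w' : Fin (m+1) → Finset Λ,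
        indic (R w') (V w' * ∑ i₁ ∈ Finset.univ.biUnion w', T i₁))
      ≤ ∑ w' : Fin (m+1) → Finset Λ,
          indic (R w') (V w' * (c * ∑ i₁ ∈ Finset.univ.biUnion w', fw d α i₁ i')) := by
        refine Finset.sum_le_sum fun w' _ => indic_payload_mono (fun _ => ?_)
          (mul_nonneg (hV w') (mul_nonneg hc (sum_fw_nonneg d α _ i')))
        refine mul_le_mul_of_nonneg_left ?_ (hV w')
        calc (∑ i₁ ∈ Finset.univ.biUnion w', T i₁)
            ≤ ∑ i₁ ∈ Finset.univ.biUnion w', c * fw d α i₁ i' :=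
              Finset.sum_le_sum fun i₁ _ => hT i₁
          _ = c * ∑ i₁ ∈ Finset.univ.biUnion w', fw d α i₁ i' := by rw [Finset.mul_sum]
    _ = c * ∑ w' : Fin (m+1) → Finset Λ,
          indic (R w') (V w' * ∑ i₁ ∈ Finset.univ.biUnion w', fw d α i₁ i') := by
        rw [Finset.mul_sum]
        refine Finset.sum_congr rfl fun w' _ => ?_
        rw [show V w' * (c * ∑ i₁ ∈ Finset.univ.biUnion w', fw d α i₁ i')
            = (V w' * ∑ i₁ ∈ Finset.univ.biUnion w', fw d α i₁ i') * c from by ring,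
          indic_mul_const]
        ring

/-- finisher for last-set-anchored terms with constant inner bound -/
lemma T2_finish_const {k : ℕ} (ZC : Finset Λ → Prop) (W : Finset Λ → ℝ)
    (hW : ∀ Z, 0 ≤ W Z) (p : ℝ) (hp : 0 ≤ p)
    (hk : ∀ Z, ZC Z → Z.card ≤ k)
    (T : Λ → ℝ) (hT : ∀ i₁, T i₁ ≤ p) :
    (∑ Z : Finset Λ, indic (ZC Z) (W Z * ∑ i₁ ∈ Z, T i₁))
      ≤ ((k:ℝ) * p) * ∑ Z : Finset Λ, indic (ZC Z) (W Z) := by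
  calc (∑ Z : Finset Λ, indic (ZC Z) (W Z * ∑ i₁ ∈ Z, T i₁))
      ≤ ∑ Z : Finset Λ, indic (ZC Z) (W Z * ((k:ℝ) * p)) := by
        refine Finset.sum_le_sum fun Z _ => indic_payload_mono (fun hZC => ?_)
          (mul_nonneg (hW Z) (by positivity))
        refine mul_le_mul_of_nonneg_left ?_ (hW Z)
        calc (∑ i₁ ∈ Z, T i₁) ≤ ∑ _i₁ ∈ Z, p := Finset.sum_le_sum fun i₁ _ => hT i₁
          _ = (Z.card : ℝ) * p := by rw [Finset.sum_const, nsmul_eq_mul]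
          _ ≤ (k:ℝ) * p := by
              refine mul_le_mul_of_nonneg_right ?_ hp
              exact_mod_cast hk Z hZC
    _ = ((k:ℝ) * p) * ∑ Z : Finset Λ, indic (ZC Z) (W Z) := by
        rw [Finset.mul_sum]
        exact Finset.sum_congr rfl fun Z _ => by rw [indic_mul_const]; ring

/-- finisher for last-set-anchored terms with `fw`-type inner bound -/
lemma T2_finish_fw (d : Λ → Λ → ℕ) (α : ℝ) (i' : Λ) (ZC : Finset Λ → Prop)
    (W : Finset Λ → ℝ) (hW : ∀ Z, 0 ≤ W Z) (c : ℝ) (hc : 0 ≤ c)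
    (T : Λ → ℝ) (hT : ∀ i₁, T i₁ ≤ c * fw d α i₁ i') :
    (∑ Z : Finset Λ, indic (ZC Z) (W Z * ∑ i₁ ∈ Z, T i₁))
      ≤ c * ∑ Z : Finset Λ, indic (ZC Z) (W Z * ∑ i₁ ∈ Z, fw d α i₁ i') := by
  calc (∑ Z : Finset Λ, indic (ZC Z) (W Z * ∑ i₁ ∈ Z, T i₁))
      ≤ ∑ Z : Finset Λ, indic (ZC Z) (W Z * (c * ∑ i₁ ∈ Z, fw d α i₁ i')) := by
        refine Finset.sum_le_sum fun Z _ => indic_payload_mono (fun _ => ?_)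
          (mul_nonneg (hW Z) (mul_nonneg hc (sum_fw_nonneg d α _ i')))
        refine mul_le_mul_of_nonneg_left ?_ (hW Z)
        calc (∑ i₁ ∈ Z, T i₁) ≤ ∑ i₁ ∈ Z, c * fw d α i₁ i' :=
              Finset.sum_le_sum fun i₁ _ => hT i₁
          _ = c * ∑ i₁ ∈ Z, fw d α i₁ i' := by rw [Finset.mul_sum]
    _ = c * ∑ Z : Finset Λ, indic (ZC Z) (W Z * ∑ i₁ ∈ Z, fw d α i₁ i') := by
        rw [Finset.mul_sum]
        refine Finset.sum_congr rfl fun Z _ => ?_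
        rw [show W Z * (c * ∑ i₁ ∈ Z, fw d α i₁ i')
            = (W Z * ∑ i₁ ∈ Z, fw d α i₁ i') * c from by ring, indic_mul_const]
        ring



lemma sum_union_le_real {β : Type*} [DecidableEq β] (s t : Finset β) (F : β → ℝ)
    (hF : ∀ b, 0 ≤ F b) : ∑ b ∈ s ∪ t, F b ≤ ∑ b ∈ s, F b + ∑ b ∈ t, F b := by
  have h := Finset.sum_union_inter (s₁ := s) (s₂ := t) (f := F)
  have h2 : 0 ≤ ∑ b ∈ s ∩ t, F b := Finset.sum_nonneg fun b _ => hF b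
  linarith

lemma BSum_le (d : Λ → Λ → ℕ) (α : ℝ) (k : ℕ) (a : Finset Λ → ℝ) (J g lam : ℝ)
    (hJ : 0 < J) (hg : 0 ≤ g) (hlam : 1 ≤ lam) (ha : ∀ Z, 0 ≤ a Z)
    (hsite : ∀ i : Λ, ∑ Z ∈ Finset.univ.filter (fun Z : Finset Λ => i ∈ Z), a Z ≤ g)
    (hpair : ∀ i i' : Λ,
      ∑ Z ∈ Finset.univ.filter (fun Z : Finset Λ => i ∈ Z ∧ i' ∈ Z), a Z
        ≤ J * ((d i i' : ℝ) + 1) ^ (-α))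
    (hlam₂ : ∀ i i' : Λ,
      ∑ i₀ : Λ, ((d i i₀ : ℝ) + 1) ^ (-α) * ((d i₀ i' : ℝ) + 1) ^ (-α)
        ≤ lam * ((d i i' : ℝ) + 1) ^ (-α)) :
    ∀ m (i i' : Λ), BSum d α k a m i i'
      ≤ (((m+2).factorial : ℝ) - ((m+1).factorial : ℝ))
          * (max (g * (k:ℝ)) (lam * J))^m * (lam * J) * fw d α i i' := by
  have hlJ : (0:ℝ) ≤ lam * J := mul_nonneg (by linarith) hJ.le
  have hG0 : (0:ℝ) ≤ max (g * (k:ℝ)) (lam * J) := le_trans hlJ (le_max_right _ _)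
  intro m
  induction m with
  | zero =>
    intro i i'
    have htgt : (((0+2).factorial : ℝ) - ((0+1).factorial : ℝ))
        * (max (g * (k:ℝ)) (lam * J))^0 * (lam * J) * fw d α i i'
        = lam * J * fw d α i i' := by
      norm_num [Nat.factorial]
    rw [BSum, fin_one_indic, htgt]
    have hb : ∀ Z : Finset Λ,
        indic ((∀ j : Fin 1, ((fun _ => Z) j).Nonempty ∧ ((fun _ => Z) j).card ≤ k) ∧
            SeqConnected (fun _ : Fin 1 => Z) ∧
            i ∈ Finset.univ.biUnion (fun _ : Fin 1 => Z))
          ((∏ _j : Fin 1, a Z) * ∑ i₀ ∈ Finset.univ.biUnion (fun _ : Fin 1 => Z), fw d α i₀ i')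
          ≤ indic (i ∈ Z) (a Z * ∑ i₀ ∈ Z, fw d α i₀ i') := by
      intro Z
      rw [biUnion_fin1, show (∏ _j : Fin 1, a Z) = a Z from by simp]
      exact indic_mono (fun h => h.2.2) (mul_nonneg (ha Z) (sum_fw_nonneg d α Z i'))
    exact le_trans (Finset.sum_le_sum fun Z _ => hb Z)
      (conv_indic d α a J lam hJ ha hpair hlam₂ i i')
  | succ m ih =>
    intro i i'
    have hprodnn : ∀ w' : Fin (m+1) → Finset Λ, (0:ℝ) ≤ ∏ j, a (w' j) :=
      fun w' => Finset.prod_nonneg fun j _ => ha (w' j)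
    have hVnn : ∀ w' : Fin (m+1) → Finset Λ,
        (0:ℝ) ≤ (∏ j, a (w' j)) * ∑ i₀ ∈ Finset.univ.biUnion w', fw d α i₀ i' :=
      fun w' => mul_nonneg (hprodnn w') (sum_fw_nonneg d α _ i')
    have hWnn : ∀ Z : Finset Λ, (0:ℝ) ≤ a Z * ∑ i₀ ∈ Z, fw d α i₀ i' :=
      fun Z => mul_nonneg (ha Z) (sum_fw_nonneg d α Z i')
    have hβ : (0:ℝ) ≤ ((m+2).factorial : ℝ) - ((m+1).factorial : ℝ) := by
      have h0 := Nat.factorial_le (show m+1 ≤ m+2 by omega)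
      have h1 : ((m+1).factorial : ℝ) ≤ ((m+2).factorial : ℝ) := by exact_mod_cast h0
      linarith
    have hGm : (0:ℝ) ≤ (max (g * (k:ℝ)) (lam * J))^m := pow_nonneg hG0 m
    have hc0 : (0:ℝ) ≤ (((m+2).factorial : ℝ) - ((m+1).factorial : ℝ))
        * (max (g * (k:ℝ)) (lam * J))^m * (lam * J) :=
      mul_nonneg (mul_nonneg hβ hGm) hlJ
    have hpm : (0:ℝ) ≤ ((m+1).factorial : ℝ) * g * (g * k)^m := by positivity
    rw [BSum, peel_indic]
    have split : ∀ (w' : Fin (m+1) → Finset Λ) (Z : Finset Λ),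
        indic ((∀ j, ((Fin.snoc w' Z : Fin (m+2) → Finset Λ) j).Nonempty ∧
              ((Fin.snoc w' Z : Fin (m+2) → Finset Λ) j).card ≤ k) ∧
            SeqConnected (Fin.snoc w' Z : Fin (m+2) → Finset Λ) ∧
            i ∈ Finset.univ.biUnion (Fin.snoc w' Z : Fin (m+2) → Finset Λ))
          ((∏ j : Fin (m+2), a ((Fin.snoc w' Z : Fin (m+2) → Finset Λ) j))
            * ∑ i₀ ∈ Finset.univ.biUnion (Fin.snoc w' Z : Fin (m+2) → Finset Λ), fw d α i₀ i')
        ≤ (indic (((∀ j, (w' j).Nonempty ∧ (w' j).card ≤ k) ∧ SeqConnected w' ∧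
              i ∈ Finset.univ.biUnion w') ∧ True ∧ (Z ∩ Finset.univ.biUnion w').Nonempty)
            (((∏ j, a (w' j)) * ∑ i₀ ∈ Finset.univ.biUnion w', fw d α i₀ i') * a Z)
          + indic (((∀ j, (w' j).Nonempty ∧ (w' j).card ≤ k) ∧ SeqConnected w') ∧
              (i ∈ Z ∧ Z.card ≤ k) ∧ (Z ∩ Finset.univ.biUnion w').Nonempty)
            (((∏ j, a (w' j)) * ∑ i₀ ∈ Finset.univ.biUnion w', fw d α i₀ i') * a Z))
          + (indic (((∀ j, (w' j).Nonempty ∧ (w' j).card ≤ k) ∧ SeqConnected w' ∧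
              i ∈ Finset.univ.biUnion w') ∧ True ∧ (Z ∩ Finset.univ.biUnion w').Nonempty)
            ((∏ j, a (w' j)) * (a Z * ∑ i₀ ∈ Z, fw d α i₀ i'))
          + indic (((∀ j, (w' j).Nonempty ∧ (w' j).card ≤ k) ∧ SeqConnected w') ∧
              (i ∈ Z ∧ Z.card ≤ k) ∧ (Z ∩ Finset.univ.biUnion w').Nonempty)
            ((∏ j, a (w' j)) * (a Z * ∑ i₀ ∈ Z, fw d α i₀ i'))) := by
      intro w' Z
      rw [prod_snoc, biUnion_snoc]
      have hY1nn : (0:ℝ) ≤ ((∏ j, a (w' j)) * ∑ i₀ ∈ Finset.univ.biUnion w', fw d α i₀ i') * a Z :=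
        mul_nonneg (hVnn w') (ha Z)
      have hY2nn : (0:ℝ) ≤ (∏ j, a (w' j)) * (a Z * ∑ i₀ ∈ Z, fw d α i₀ i') :=
        mul_nonneg (hprodnn w') (hWnn Z)
      have hY : (∏ j, a (w' j)) * a Z
            * ∑ i₀ ∈ (Finset.univ.biUnion w' ∪ Z), fw d α i₀ i'
          ≤ ((∏ j, a (w' j)) * ∑ i₀ ∈ Finset.univ.biUnion w', fw d α i₀ i') * a Z
            + (∏ j, a (w' j)) * (a Z * ∑ i₀ ∈ Z, fw d α i₀ i') := by
        have h1 := sum_union_le_real (Finset.univ.biUnion w') Z (fun i₀ => fw d α i₀ i')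
          (fun i₀ => fw_nonneg d α i₀ i')
        have h2 : (0:ℝ) ≤ (∏ j, a (w' j)) * a Z := mul_nonneg (hprodnn w') (ha Z)
        nlinarith [h1, h2]
      have hmemsplit : ((∀ j, ((Fin.snoc w' Z : Fin (m+2) → Finset Λ) j).Nonempty ∧
              ((Fin.snoc w' Z : Fin (m+2) → Finset Λ) j).card ≤ k) ∧
            SeqConnected (Fin.snoc w' Z : Fin (m+2) → Finset Λ) ∧
            i ∈ Finset.univ.biUnion w' ∪ Z)
          → (((∀ j, (w' j).Nonempty ∧ (w' j).card ≤ k) ∧ SeqConnected w' ∧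
              i ∈ Finset.univ.biUnion w') ∧ True ∧ (Z ∩ Finset.univ.biUnion w').Nonempty)
            ∨ (((∀ j, (w' j).Nonempty ∧ (w' j).card ≤ k) ∧ SeqConnected w') ∧
              (i ∈ Z ∧ Z.card ≤ k) ∧ (Z ∩ Finset.univ.biUnion w').Nonempty) := by
        rintro ⟨hgood, hconn, hmem⟩
        obtain ⟨hg', hZk⟩ := good_snoc hgood
        obtain ⟨hc', hne⟩ := conn_snoc hconn
        rcases Finset.mem_union.mp hmem with hiU | hiZ
        · exact Or.inl ⟨⟨hg', hc', hiU⟩, trivial, hne⟩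
        · exact Or.inr ⟨⟨hg', hc'⟩, ⟨hiZ, hZk⟩, hne⟩
      refine le_trans (indic_add (fun _ => hY) hY1nn hY2nn) ?_
      exact add_le_add (indic_split hmemsplit hY1nn) (indic_split hmemsplit hY2nn)
    have hsiteT : ∀ i₁ : Λ, (∑ Z : Finset Λ, indic (True ∧ i₁ ∈ Z) (a Z)) ≤ g := by
      intro i₁
      exact le_trans (le_of_eq (Finset.sum_congr rfl fun Z _ =>
        indic_congr (by simp) _)) (site_indic a g hsite i₁)
    have hBid : (∑ w' : Fin (m+1) → Finset Λ,
        indic ((∀ j, (w' j).Nonempty ∧ (w' j).card ≤ k) ∧ SeqConnected w' ∧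
          i ∈ Finset.univ.biUnion w')
          ((∏ j, a (w' j)) * ∑ i₀ ∈ Finset.univ.biUnion w', fw d α i₀ i'))
        = BSum d α k a m i i' := by rw [BSum]
    have hS11 : (∑ w' : Fin (m+1) → Finset Λ, ∑ Z : Finset Λ,
        indic (((∀ j, (w' j).Nonempty ∧ (w' j).card ≤ k) ∧ SeqConnected w' ∧
            i ∈ Finset.univ.biUnion w') ∧ True ∧ (Z ∩ Finset.univ.biUnion w').Nonempty)
          (((∏ j, a (w' j)) * ∑ i₀ ∈ Finset.univ.biUnion w', fw d α i₀ i') * a Z))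
        ≤ (((m:ℝ)+1) * k * g) * ((((m+2).factorial : ℝ) - ((m+1).factorial : ℝ))
          * (max (g * (k:ℝ)) (lam * J))^m * (lam * J) * fw d α i i') := by
      refine le_trans (step_T12 _ (fun _ => True) _ a hVnn ha) ?_
      refine le_trans (T12_finish_const g hg _ _ hVnn (fun w' hR => hR.1) _ hsiteT) ?_
      rw [hBid]
      exact mul_le_mul_of_nonneg_left (ih i i') (by positivity)
    have hS21 : (∑ w' : Fin (m+1) → Finset Λ, ∑ Z : Finset Λ,
        indic (((∀ j, (w' j).Nonempty ∧ (w' j).card ≤ k) ∧ SeqConnected w') ∧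
            (i ∈ Z ∧ Z.card ≤ k) ∧ (Z ∩ Finset.univ.biUnion w').Nonempty)
          (((∏ j, a (w' j)) * ∑ i₀ ∈ Finset.univ.biUnion w', fw d α i₀ i') * a Z))
        ≤ ((((m+2).factorial : ℝ) - ((m+1).factorial : ℝ))
            * (max (g * (k:ℝ)) (lam * J))^m * (lam * J)) * (lam * J * fw d α i i') := by
      refine le_trans (step_T2 _ (fun Z => i ∈ Z ∧ Z.card ≤ k) _ a hVnn ha) ?_
      refine le_trans (T2_finish_fw d α i' _ a ha
        ((((m+2).factorial : ℝ) - ((m+1).factorial : ℝ))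
          * (max (g * (k:ℝ)) (lam * J))^m * (lam * J)) hc0 _ (fun i₁ => ?_)) ?_
      · have he : (∑ w' : Fin (m+1) → Finset Λ,
            indic (((∀ j, (w' j).Nonempty ∧ (w' j).card ≤ k) ∧ SeqConnected w') ∧
              i₁ ∈ Finset.univ.biUnion w')
              ((∏ j, a (w' j)) * ∑ i₀ ∈ Finset.univ.biUnion w', fw d α i₀ i'))
            = BSum d α k a m i₁ i' := by
          rw [BSum]
          exact Finset.sum_congr rfl fun w' _ => indic_congr and_assoc _
        rw [he]; exact ih i₁ i'
      · refine mul_le_mul_of_nonneg_left ?_ hc0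
        refine le_trans (Finset.sum_le_sum fun Z _ =>
          indic_mono (fun h => h.1) (hWnn Z)) ?_
        exact conv_indic d α a J lam hJ ha hpair hlam₂ i i'
    have hS12 : (∑ w' : Fin (m+1) → Finset Λ, ∑ Z : Finset Λ,
        indic (((∀ j, (w' j).Nonempty ∧ (w' j).card ≤ k) ∧ SeqConnected w' ∧
            i ∈ Finset.univ.biUnion w') ∧ True ∧ (Z ∩ Finset.univ.biUnion w').Nonempty)
          ((∏ j, a (w' j)) * (a Z * ∑ i₀ ∈ Z, fw d α i₀ i')))
        ≤ (lam * J) * ((((m+2).factorial : ℝ) - ((m+1).factorial : ℝ))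
          * (max (g * (k:ℝ)) (lam * J))^m * (lam * J) * fw d α i i') := by
      refine le_trans (step_T12 _ (fun _ => True) _
        (fun Z => a Z * ∑ i₀ ∈ Z, fw d α i₀ i') hprodnn hWnn) ?_
      refine le_trans (T12_finish_fw d α i' _ _ hprodnn (lam * J) hlJ _ (fun i₁ => ?_)) ?_
      · have he2 : (∑ Z : Finset Λ, indic (True ∧ i₁ ∈ Z) (a Z * ∑ i₀ ∈ Z, fw d α i₀ i'))
            = ∑ Z : Finset Λ, indic (i₁ ∈ Z) (a Z * ∑ i₀ ∈ Z, fw d α i₀ i') :=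
          Finset.sum_congr rfl fun Z _ => indic_congr (by simp) _
        rw [he2]
        exact conv_indic d α a J lam hJ ha hpair hlam₂ i₁ i'
      · rw [hBid]
        exact mul_le_mul_of_nonneg_left (ih i i') hlJ
    have hS22 : (∑ w' : Fin (m+1) → Finset Λ, ∑ Z : Finset Λ,
        indic (((∀ j, (w' j).Nonempty ∧ (w' j).card ≤ k) ∧ SeqConnected w') ∧
            (i ∈ Z ∧ Z.card ≤ k) ∧ (Z ∩ Finset.univ.biUnion w').Nonempty)
          ((∏ j, a (w' j)) * (a Z * ∑ i₀ ∈ Z, fw d α i₀ i')))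
        ≤ ((k:ℝ) * (((m+1).factorial : ℝ) * g * (g * k)^m)) * (lam * J * fw d α i i') := by
      refine le_trans (step_T2 _ (fun Z => i ∈ Z ∧ Z.card ≤ k) _
        (fun Z => a Z * ∑ i₀ ∈ Z, fw d α i₀ i') hprodnn hWnn) ?_
      refine le_trans (T2_finish_const _ _ hWnn
        (((m+1).factorial : ℝ) * g * (g * k)^m) hpm (fun Z h => h.2) _ (fun i₁ => ?_)) ?_
      · have he : (∑ w' : Fin (m+1) → Finset Λ,
            indic (((∀ j, (w' j).Nonempty ∧ (w' j).card ≤ k) ∧ SeqConnected w') ∧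
              i₁ ∈ Finset.univ.biUnion w') (∏ j, a (w' j)))
            = PSum k a m i₁ := by
          rw [PSum]
          exact Finset.sum_congr rfl fun w' _ => indic_congr and_assoc _
        rw [he]; exact PSum_le k a g hg ha hsite m i₁
      · refine mul_le_mul_of_nonneg_left ?_ (by positivity)
        refine le_trans (Finset.sum_le_sum fun Z _ =>
          indic_mono (fun h => h.1) (hWnn Z)) ?_
        exact conv_indic d α a J lam hJ ha hpair hlam₂ i i'
    have hstep : (∑ w' : Fin (m+1) → Finset Λ, ∑ Z : Finset Λ,
        indic ((∀ j, ((Fin.snoc w' Z : Fin (m+2) → Finset Λ) j).Nonempty ∧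
              ((Fin.snoc w' Z : Fin (m+2) → Finset Λ) j).card ≤ k) ∧
            SeqConnected (Fin.snoc w' Z : Fin (m+2) → Finset Λ) ∧
            i ∈ Finset.univ.biUnion (Fin.snoc w' Z : Fin (m+2) → Finset Λ))
          ((∏ j : Fin (m+2), a ((Fin.snoc w' Z : Fin (m+2) → Finset Λ) j))
            * ∑ i₀ ∈ Finset.univ.biUnion (Fin.snoc w' Z : Fin (m+2) → Finset Λ), fw d α i₀ i'))
        ≤ ((((m:ℝ)+1) * k * g) * ((((m+2).factorial : ℝ) - ((m+1).factorial : ℝ))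
            * (max (g * (k:ℝ)) (lam * J))^m * (lam * J) * fw d α i i')
          + ((((m+2).factorial : ℝ) - ((m+1).factorial : ℝ))
            * (max (g * (k:ℝ)) (lam * J))^m * (lam * J)) * (lam * J * fw d α i i'))
          + ((lam * J) * ((((m+2).factorial : ℝ) - ((m+1).factorial : ℝ))
            * (max (g * (k:ℝ)) (lam * J))^m * (lam * J) * fw d α i i')
          + ((k:ℝ) * (((m+1).factorial : ℝ) * g * (g * k)^m)) * (lam * J * fw d α i i')) := by
      refine le_trans (Finset.sum_le_sum fun w' _ => Finset.sum_le_sum fun Z _ => split w' Z) ?_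
      simp only [Finset.sum_add_distrib]
      exact add_le_add (add_le_add hS11 hS21) (add_le_add hS12 hS22)
    refine le_trans hstep ?_
    have hkgG : g * (k:ℝ) ≤ max (g * (k:ℝ)) (lam * J) := le_max_left _ _
    have hlJG : lam * J ≤ max (g * (k:ℝ)) (lam * J) := le_max_right _ _
    have hFnn : (0:ℝ) ≤ fw d α i i' := fw_nonneg d α i i'
    have hX : (0:ℝ) ≤ (((m+2).factorial : ℝ) - ((m+1).factorial : ℝ))
        * (max (g * (k:ℝ)) (lam * J))^m * (lam * J) * fw d α i i' :=
      mul_nonneg hc0 hFnn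
    have hpow : (g * (k:ℝ))^(m+1) ≤ (max (g * (k:ℝ)) (lam * J))^(m+1) :=
      pow_le_pow_left₀ (by positivity) hkgG (m+1)
    have h11 : (((m:ℝ)+1) * k * g) * ((((m+2).factorial : ℝ) - ((m+1).factorial : ℝ))
        * (max (g * (k:ℝ)) (lam * J))^m * (lam * J) * fw d α i i')
        ≤ (((m:ℝ)+1) * max (g * (k:ℝ)) (lam * J))
          * ((((m+2).factorial : ℝ) - ((m+1).factorial : ℝ))
            * (max (g * (k:ℝ)) (lam * J))^m * (lam * J) * fw d α i i') := by
      refine mul_le_mul_of_nonneg_right ?_ hX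
      calc ((m:ℝ)+1) * k * g = ((m:ℝ)+1) * (g * (k:ℝ)) := by ring
        _ ≤ ((m:ℝ)+1) * max (g * (k:ℝ)) (lam * J) :=
            mul_le_mul_of_nonneg_left hkgG (by positivity)
    have h21 : ((((m+2).factorial : ℝ) - ((m+1).factorial : ℝ))
          * (max (g * (k:ℝ)) (lam * J))^m * (lam * J)) * (lam * J * fw d α i i')
        ≤ ((((m+2).factorial : ℝ) - ((m+1).factorial : ℝ))
          * (max (g * (k:ℝ)) (lam * J))^m * (lam * J))
          * (max (g * (k:ℝ)) (lam * J) * fw d α i i') := by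
      refine mul_le_mul_of_nonneg_left ?_ hc0
      exact mul_le_mul_of_nonneg_right hlJG hFnn
    have h12 : (lam * J) * ((((m+2).factorial : ℝ) - ((m+1).factorial : ℝ))
        * (max (g * (k:ℝ)) (lam * J))^m * (lam * J) * fw d α i i')
        ≤ max (g * (k:ℝ)) (lam * J) * ((((m+2).factorial : ℝ) - ((m+1).factorial : ℝ))
          * (max (g * (k:ℝ)) (lam * J))^m * (lam * J) * fw d α i i') :=
      mul_le_mul_of_nonneg_right hlJG hX
    have h22 : ((k:ℝ) * (((m+1).factorial : ℝ) * g * (g * k)^m)) * (lam * J * fw d α i i')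
        ≤ (((m+1).factorial : ℝ) * (max (g * (k:ℝ)) (lam * J))^(m+1))
          * (lam * J * fw d α i i') := by
      refine mul_le_mul_of_nonneg_right ?_ (mul_nonneg hlJ hFnn)
      calc (k:ℝ) * (((m+1).factorial : ℝ) * g * (g * k)^m)
          = ((m+1).factorial : ℝ) * (g * (k:ℝ))^(m+1) := by ring
        _ ≤ ((m+1).factorial : ℝ) * (max (g * (k:ℝ)) (lam * J))^(m+1) :=
            mul_le_mul_of_nonneg_left hpow (by positivity)
    have hf3 : ((m+1+2).factorial : ℝ) = ((m:ℝ)+3) * ((m+2).factorial : ℝ) := by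
      rw [show m+1+2 = (m+2)+1 from rfl, Nat.factorial_succ]; push_cast; ring
    have hf2 : ((m+1+1).factorial : ℝ) = ((m:ℝ)+2) * ((m+1).factorial : ℝ) := by
      rw [show m+1+1 = (m+1)+1 from rfl, Nat.factorial_succ]; push_cast; ring
    have hfin : (((m:ℝ)+1) * max (g * (k:ℝ)) (lam * J))
          * ((((m+2).factorial : ℝ) - ((m+1).factorial : ℝ))
            * (max (g * (k:ℝ)) (lam * J))^m * (lam * J) * fw d α i i')
        + ((((m+2).factorial : ℝ) - ((m+1).factorial : ℝ))
          * (max (g * (k:ℝ)) (lam * J))^m * (lam * J))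
          * (max (g * (k:ℝ)) (lam * J) * fw d α i i')
        + max (g * (k:ℝ)) (lam * J) * ((((m+2).factorial : ℝ) - ((m+1).factorial : ℝ))
          * (max (g * (k:ℝ)) (lam * J))^m * (lam * J) * fw d α i i')
        + (((m+1).factorial : ℝ) * (max (g * (k:ℝ)) (lam * J))^(m+1))
          * (lam * J * fw d α i i')
        = (((m+1+2).factorial : ℝ) - ((m+1+1).factorial : ℝ))
          * (max (g * (k:ℝ)) (lam * J))^(m+1) * (lam * J) * fw d α i i' := by
      rw [hf3, hf2]; ring
    linarith [h11, h21, h12, h22]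



lemma fw_symm (d : Λ → Λ → ℕ) (hmet : IsLatticeMetric d) (α : ℝ) (x y : Λ) :
    fw d α x y = fw d α y x := by
  unfold fw; rw [hmet.1 x y]

lemma ASum_le (d : Λ → Λ → ℕ) (hmet : IsLatticeMetric d) (α : ℝ) (k : ℕ)
    (a : Finset Λ → ℝ) (J g lam : ℝ)
    (hJ : 0 < J) (hg : 0 ≤ g) (hlam : 1 ≤ lam) (ha : ∀ Z, 0 ≤ a Z)
    (hsite : ∀ i : Λ, ∑ Z ∈ Finset.univ.filter (fun Z : Finset Λ => i ∈ Z), a Z ≤ g)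
    (hpair : ∀ i i' : Λ,
      ∑ Z ∈ Finset.univ.filter (fun Z : Finset Λ => i ∈ Z ∧ i' ∈ Z), a Z
        ≤ J * ((d i i' : ℝ) + 1) ^ (-α))
    (hlam₂ : ∀ i i' : Λ,
      ∑ i₀ : Λ, ((d i i₀ : ℝ) + 1) ^ (-α) * ((d i₀ i' : ℝ) + 1) ^ (-α)
        ≤ lam * ((d i i' : ℝ) + 1) ^ (-α)) :
    ∀ m (i i' : Λ), ASum k a m i i'
      ≤ (m.factorial : ℝ) * ((m:ℝ)+1)^2 * (max (g * (k:ℝ)) (lam * J))^(m+1)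
          * fw d α i i' := by
  have hlJ : (0:ℝ) ≤ lam * J := mul_nonneg (by linarith) hJ.le
  have hG0 : (0:ℝ) ≤ max (g * (k:ℝ)) (lam * J) := le_trans hlJ (le_max_right _ _)
  have hJG : J ≤ max (g * (k:ℝ)) (lam * J) :=
    le_trans (le_mul_of_one_le_left hJ.le hlam) (le_max_right _ _)
  have hlJG : lam * J ≤ max (g * (k:ℝ)) (lam * J) := le_max_right _ _
  have hkgG : g * (k:ℝ) ≤ max (g * (k:ℝ)) (lam * J) := le_max_left _ _
  intro m
  induction m with
  | zero =>
    intro i i'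
    have hFnn : (0:ℝ) ≤ fw d α i i' := fw_nonneg d α i i'
    have htgt : ((0:ℕ).factorial : ℝ) * (((0:ℕ):ℝ)+1)^2
        * (max (g * (k:ℝ)) (lam * J))^(0+1) * fw d α i i'
        = max (g * (k:ℝ)) (lam * J) * fw d α i i' := by
      norm_num [Nat.factorial]
    rw [ASum, fin_one_indic, htgt]
    have hb : ∀ Z : Finset Λ,
        indic ((∀ j : Fin 1, ((fun _ => Z) j).Nonempty ∧ ((fun _ => Z) j).card ≤ k) ∧
            SeqConnected (fun _ : Fin 1 => Z) ∧
            i ∈ Finset.univ.biUnion (fun _ : Fin 1 => Z) ∧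
            i' ∈ Finset.univ.biUnion (fun _ : Fin 1 => Z))
          (∏ _j : Fin 1, a Z)
          ≤ indic (i ∈ Z ∧ i' ∈ Z) (a Z) := by
      intro Z
      rw [biUnion_fin1, show (∏ _j : Fin 1, a Z) = a Z from by simp]
      exact indic_mono (fun h => ⟨h.2.2.1, h.2.2.2⟩) (ha Z)
    calc (∑ Z : Finset Λ, indic _ _)
        ≤ ∑ Z : Finset Λ, indic (i ∈ Z ∧ i' ∈ Z) (a Z) :=
          Finset.sum_le_sum fun Z _ => hb Z
      _ ≤ J * fw d α i i' := pair_indic d α a J hpair i i'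
      _ ≤ max (g * (k:ℝ)) (lam * J) * fw d α i i' :=
          mul_le_mul_of_nonneg_right hJG hFnn
  | succ m ih =>
    intro i i'
    have hprodnn : ∀ w' : Fin (m+1) → Finset Λ, (0:ℝ) ≤ ∏ j, a (w' j) :=
      fun w' => Finset.prod_nonneg fun j _ => ha (w' j)
    have hFnn : (0:ℝ) ≤ fw d α i i' := fw_nonneg d α i i'
    have hβ : (0:ℝ) ≤ ((m+2).factorial : ℝ) - ((m+1).factorial : ℝ) := by
      have h0 := Nat.factorial_le (show m+1 ≤ m+2 by omega)
      have h1 : ((m+1).factorial : ℝ) ≤ ((m+2).factorial : ℝ) := by exact_mod_cast h0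
      linarith
    have hGm : (0:ℝ) ≤ (max (g * (k:ℝ)) (lam * J))^m := pow_nonneg hG0 m
    have hpm : (0:ℝ) ≤ ((m+1).factorial : ℝ) * g * (g * k)^m := by positivity
    rw [ASum, peel_indic]
    have split : ∀ (w' : Fin (m+1) → Finset Λ) (Z : Finset Λ),
        indic ((∀ j, ((Fin.snoc w' Z : Fin (m+2) → Finset Λ) j).Nonempty ∧
              ((Fin.snoc w' Z : Fin (m+2) → Finset Λ) j).card ≤ k) ∧
            SeqConnected (Fin.snoc w' Z : Fin (m+2) → Finset Λ) ∧
            i ∈ Finset.univ.biUnion (Fin.snoc w' Z : Fin (m+2) → Finset Λ) ∧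
            i' ∈ Finset.univ.biUnion (Fin.snoc w' Z : Fin (m+2) → Finset Λ))
          (∏ j : Fin (m+2), a ((Fin.snoc w' Z : Fin (m+2) → Finset Λ) j))
        ≤ indic (((∀ j, (w' j).Nonempty ∧ (w' j).card ≤ k) ∧ SeqConnected w' ∧
              i ∈ Finset.univ.biUnion w' ∧ i' ∈ Finset.univ.biUnion w') ∧
              True ∧ (Z ∩ Finset.univ.biUnion w').Nonempty)
            ((∏ j, a (w' j)) * a Z)
          + indic (((∀ j, (w' j).Nonempty ∧ (w' j).card ≤ k) ∧ SeqConnected w' ∧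
              i ∈ Finset.univ.biUnion w') ∧
              (i' ∈ Z) ∧ (Z ∩ Finset.univ.biUnion w').Nonempty)
            ((∏ j, a (w' j)) * a Z)
          + indic (((∀ j, (w' j).Nonempty ∧ (w' j).card ≤ k) ∧ SeqConnected w' ∧
              i' ∈ Finset.univ.biUnion w') ∧
              (i ∈ Z) ∧ (Z ∩ Finset.univ.biUnion w').Nonempty)
            ((∏ j, a (w' j)) * a Z)
          + indic (((∀ j, (w' j).Nonempty ∧ (w' j).card ≤ k) ∧ SeqConnected w') ∧
              ((i ∈ Z ∧ i' ∈ Z) ∧ Z.card ≤ k) ∧ (Z ∩ Finset.univ.biUnion w').Nonempty)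
            ((∏ j, a (w' j)) * a Z) := by
      intro w' Z
      rw [prod_snoc, biUnion_snoc]
      refine indic_split4 ?_ (mul_nonneg (hprodnn w') (ha Z))
      rintro ⟨hgood, hconn, hmem, hmem'⟩
      obtain ⟨hg', hZk⟩ := good_snoc hgood
      obtain ⟨hc', hne⟩ := conn_snoc hconn
      rcases Finset.mem_union.mp hmem with hiU | hiZ
      · rcases Finset.mem_union.mp hmem' with hiU' | hiZ'
        · exact Or.inl ⟨⟨hg', hc', hiU, hiU'⟩, trivial, hne⟩
        · exact Or.inr (Or.inl ⟨⟨hg', hc', hiU⟩, hiZ', hne⟩)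
      · rcases Finset.mem_union.mp hmem' with hiU' | hiZ'
        · exact Or.inr (Or.inr (Or.inl ⟨⟨hg', hc', hiU'⟩, hiZ, hne⟩))
        · exact Or.inr (Or.inr (Or.inr ⟨⟨hg', hc'⟩, ⟨⟨hiZ, hiZ'⟩, hZk⟩, hne⟩))
    have hsiteT : ∀ i₁ : Λ, (∑ Z : Finset Λ, indic (True ∧ i₁ ∈ Z) (a Z)) ≤ g := by
      intro i₁
      exact le_trans (le_of_eq (Finset.sum_congr rfl fun Z _ =>
        indic_congr (by simp) _)) (site_indic a g hsite i₁)
    have hS11 : (∑ w' : Fin (m+1) → Finset Λ, ∑ Z : Finset Λ,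
        indic (((∀ j, (w' j).Nonempty ∧ (w' j).card ≤ k) ∧ SeqConnected w' ∧
            i ∈ Finset.univ.biUnion w' ∧ i' ∈ Finset.univ.biUnion w') ∧
            True ∧ (Z ∩ Finset.univ.biUnion w').Nonempty)
          ((∏ j, a (w' j)) * a Z))
        ≤ (((m:ℝ)+1) * k * g) * ((m.factorial : ℝ) * ((m:ℝ)+1)^2
          * (max (g * (k:ℝ)) (lam * J))^(m+1) * fw d α i i') := by
      refine le_trans (step_T12 _ (fun _ => True) _ a hprodnn ha) ?_
      refine le_trans (T12_finish_const g hg _ _ hprodnn (fun w' hR => hR.1) _ hsiteT) ?_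
      have hAid : (∑ w' : Fin (m+1) → Finset Λ,
          indic ((∀ j, (w' j).Nonempty ∧ (w' j).card ≤ k) ∧ SeqConnected w' ∧
            i ∈ Finset.univ.biUnion w' ∧ i' ∈ Finset.univ.biUnion w')
            (∏ j, a (w' j))) = ASum k a m i i' := by rw [ASum]
      rw [hAid]
      exact mul_le_mul_of_nonneg_left (ih i i') (by positivity)
    have hS12 : (∑ w' : Fin (m+1) → Finset Λ, ∑ Z : Finset Λ,
        indic (((∀ j, (w' j).Nonempty ∧ (w' j).card ≤ k) ∧ SeqConnected w' ∧
            i ∈ Finset.univ.biUnion w') ∧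
            (i' ∈ Z) ∧ (Z ∩ Finset.univ.biUnion w').Nonempty)
          ((∏ j, a (w' j)) * a Z))
        ≤ J * ((((m+2).factorial : ℝ) - ((m+1).factorial : ℝ))
          * (max (g * (k:ℝ)) (lam * J))^m * (lam * J) * fw d α i i') := by
      refine le_trans (step_T12 _ (fun Z => i' ∈ Z) _ a hprodnn ha) ?_
      refine le_trans (T12_finish_fw d α i' _ _ hprodnn J hJ.le _ (fun i₁ => ?_)) ?_
      · have he2 : (∑ Z : Finset Λ, indic (i' ∈ Z ∧ i₁ ∈ Z) (a Z))
            = ∑ Z : Finset Λ, indic (i₁ ∈ Z ∧ i' ∈ Z) (a Z) :=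
          Finset.sum_congr rfl fun Z _ => indic_congr and_comm _
        rw [he2]
        exact pair_indic d α a J hpair i₁ i'
      · have hBid : (∑ w' : Fin (m+1) → Finset Λ,
            indic ((∀ j, (w' j).Nonempty ∧ (w' j).card ≤ k) ∧ SeqConnected w' ∧
              i ∈ Finset.univ.biUnion w')
              ((∏ j, a (w' j)) * ∑ i₁ ∈ Finset.univ.biUnion w', fw d α i₁ i'))
            = BSum d α k a m i i' := by rw [BSum]
        rw [hBid]
        exact mul_le_mul_of_nonneg_left
          (BSum_le d α k a J g lam hJ hg hlam ha hsite hpair hlam₂ m i i') hJ.le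
    have hS21 : (∑ w' : Fin (m+1) → Finset Λ, ∑ Z : Finset Λ,
        indic (((∀ j, (w' j).Nonempty ∧ (w' j).card ≤ k) ∧ SeqConnected w' ∧
            i' ∈ Finset.univ.biUnion w') ∧
            (i ∈ Z) ∧ (Z ∩ Finset.univ.biUnion w').Nonempty)
          ((∏ j, a (w' j)) * a Z))
        ≤ J * ((((m+2).factorial : ℝ) - ((m+1).factorial : ℝ))
          * (max (g * (k:ℝ)) (lam * J))^m * (lam * J) * fw d α i i') := by
      refine le_trans (step_T12 _ (fun Z => i ∈ Z) _ a hprodnn ha) ?_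
      refine le_trans (T12_finish_fw d α i _ _ hprodnn J hJ.le _ (fun i₁ => ?_)) ?_
      · have he2 : (∑ Z : Finset Λ, indic (i ∈ Z ∧ i₁ ∈ Z) (a Z))
            = ∑ Z : Finset Λ, indic (i₁ ∈ Z ∧ i ∈ Z) (a Z) :=
          Finset.sum_congr rfl fun Z _ => indic_congr and_comm _
        rw [he2]
        exact pair_indic d α a J hpair i₁ i
      · have hBid : (∑ w' : Fin (m+1) → Finset Λ,
            indic ((∀ j, (w' j).Nonempty ∧ (w' j).card ≤ k) ∧ SeqConnected w' ∧
              i' ∈ Finset.univ.biUnion w')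
              ((∏ j, a (w' j)) * ∑ i₁ ∈ Finset.univ.biUnion w', fw d α i₁ i))
            = BSum d α k a m i' i := by rw [BSum]
        rw [hBid]
        have := BSum_le d α k a J g lam hJ hg hlam ha hsite hpair hlam₂ m i' i
        rw [fw_symm d hmet α i' i] at this
        exact mul_le_mul_of_nonneg_left this hJ.le
    have hS22 : (∑ w' : Fin (m+1) → Finset Λ, ∑ Z : Finset Λ,
        indic (((∀ j, (w' j).Nonempty ∧ (w' j).card ≤ k) ∧ SeqConnected w') ∧
            ((i ∈ Z ∧ i' ∈ Z) ∧ Z.card ≤ k) ∧ (Z ∩ Finset.univ.biUnion w').Nonempty)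
          ((∏ j, a (w' j)) * a Z))
        ≤ ((k:ℝ) * (((m+1).factorial : ℝ) * g * (g * k)^m)) * (J * fw d α i i') := by
      refine le_trans (step_T2 _ (fun Z => (i ∈ Z ∧ i' ∈ Z) ∧ Z.card ≤ k) _ a hprodnn ha) ?_
      refine le_trans (T2_finish_const _ _ ha
        (((m+1).factorial : ℝ) * g * (g * k)^m) hpm (fun Z h => h.2) _ (fun i₁ => ?_)) ?_
      · have he : (∑ w' : Fin (m+1) → Finset Λ,
            indic (((∀ j, (w' j).Nonempty ∧ (w' j).card ≤ k) ∧ SeqConnected w') ∧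
              i₁ ∈ Finset.univ.biUnion w') (∏ j, a (w' j)))
            = PSum k a m i₁ := by
          rw [PSum]
          exact Finset.sum_congr rfl fun w' _ => indic_congr and_assoc _
        rw [he]; exact PSum_le k a g hg ha hsite m i₁
      · refine mul_le_mul_of_nonneg_left ?_ (by positivity)
        refine le_trans (Finset.sum_le_sum fun Z _ =>
          indic_mono (fun h => h.1) (ha Z)) ?_
        exact pair_indic d α a J hpair i i'
    have hstep : (∑ w' : Fin (m+1) → Finset Λ, ∑ Z : Finset Λ,
        indic ((∀ j, ((Fin.snoc w' Z : Fin (m+2) → Finset Λ) j).Nonempty ∧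
              ((Fin.snoc w' Z : Fin (m+2) → Finset Λ) j).card ≤ k) ∧
            SeqConnected (Fin.snoc w' Z : Fin (m+2) → Finset Λ) ∧
            i ∈ Finset.univ.biUnion (Fin.snoc w' Z : Fin (m+2) → Finset Λ) ∧
            i' ∈ Finset.univ.biUnion (Fin.snoc w' Z : Fin (m+2) → Finset Λ))
          (∏ j : Fin (m+2), a ((Fin.snoc w' Z : Fin (m+2) → Finset Λ) j)))
        ≤ (((m:ℝ)+1) * k * g) * ((m.factorial : ℝ) * ((m:ℝ)+1)^2
            * (max (g * (k:ℝ)) (lam * J))^(m+1) * fw d α i i')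
          + J * ((((m+2).factorial : ℝ) - ((m+1).factorial : ℝ))
            * (max (g * (k:ℝ)) (lam * J))^m * (lam * J) * fw d α i i')
          + J * ((((m+2).factorial : ℝ) - ((m+1).factorial : ℝ))
            * (max (g * (k:ℝ)) (lam * J))^m * (lam * J) * fw d α i i')
          + ((k:ℝ) * (((m+1).factorial : ℝ) * g * (g * k)^m)) * (J * fw d α i i') := by
      refine le_trans (Finset.sum_le_sum fun w' _ => Finset.sum_le_sum fun Z _ => split w' Z) ?_
      simp only [Finset.sum_add_distrib]
      exact add_le_add (add_le_add (add_le_add hS11 hS12) hS21) hS22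
    refine le_trans hstep ?_
    have hX : (0:ℝ) ≤ (((m+2).factorial : ℝ) - ((m+1).factorial : ℝ))
        * (max (g * (k:ℝ)) (lam * J))^m * (lam * J) * fw d α i i' :=
      mul_nonneg (mul_nonneg (mul_nonneg hβ hGm) hlJ) hFnn
    have hA : (0:ℝ) ≤ (m.factorial : ℝ) * ((m:ℝ)+1)^2
        * (max (g * (k:ℝ)) (lam * J))^(m+1) * fw d α i i' := by positivity
    have hpow : (g * (k:ℝ))^(m+1) ≤ (max (g * (k:ℝ)) (lam * J))^(m+1) :=
      pow_le_pow_left₀ (by positivity) hkgG (m+1)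
    have h11 : (((m:ℝ)+1) * k * g) * ((m.factorial : ℝ) * ((m:ℝ)+1)^2
          * (max (g * (k:ℝ)) (lam * J))^(m+1) * fw d α i i')
        ≤ (((m:ℝ)+1) * max (g * (k:ℝ)) (lam * J)) * ((m.factorial : ℝ) * ((m:ℝ)+1)^2
          * (max (g * (k:ℝ)) (lam * J))^(m+1) * fw d α i i') := by
      refine mul_le_mul_of_nonneg_right ?_ hA
      calc ((m:ℝ)+1) * k * g = ((m:ℝ)+1) * (g * (k:ℝ)) := by ring
        _ ≤ ((m:ℝ)+1) * max (g * (k:ℝ)) (lam * J) :=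
            mul_le_mul_of_nonneg_left hkgG (by positivity)
    have h12 : J * ((((m+2).factorial : ℝ) - ((m+1).factorial : ℝ))
          * (max (g * (k:ℝ)) (lam * J))^m * (lam * J) * fw d α i i')
        ≤ max (g * (k:ℝ)) (lam * J) * ((((m+2).factorial : ℝ) - ((m+1).factorial : ℝ))
          * (max (g * (k:ℝ)) (lam * J))^m * (max (g * (k:ℝ)) (lam * J)) * fw d α i i') := by
      refine mul_le_mul hJG ?_ hX hG0
      refine mul_le_mul_of_nonneg_right ?_ hFnn
      exact mul_le_mul_of_nonneg_left hlJG (mul_nonneg hβ hGm)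
    have h22 : ((k:ℝ) * (((m+1).factorial : ℝ) * g * (g * k)^m)) * (J * fw d α i i')
        ≤ (((m+1).factorial : ℝ) * (max (g * (k:ℝ)) (lam * J))^(m+1))
          * (max (g * (k:ℝ)) (lam * J) * fw d α i i') := by
      refine mul_le_mul ?_ (mul_le_mul_of_nonneg_right hJG hFnn)
        (mul_nonneg hJ.le hFnn) (by positivity)
      calc (k:ℝ) * (((m+1).factorial : ℝ) * g * (g * k)^m)
          = ((m+1).factorial : ℝ) * (g * (k:ℝ))^(m+1) := by ring
        _ ≤ ((m+1).factorial : ℝ) * (max (g * (k:ℝ)) (lam * J))^(m+1) :=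
            mul_le_mul_of_nonneg_left hpow (by positivity)
    have hf2 : ((m+2).factorial : ℝ) = ((m:ℝ)+2) * ((m+1).factorial : ℝ) := by
      rw [show m+2 = (m+1)+1 from rfl, Nat.factorial_succ]; push_cast; ring
    have hf1 : ((m+1).factorial : ℝ) = ((m:ℝ)+1) * (m.factorial : ℝ) := by
      rw [Nat.factorial_succ]; push_cast; ring
    have hfin : (((m:ℝ)+1) * max (g * (k:ℝ)) (lam * J)) * ((m.factorial : ℝ) * ((m:ℝ)+1)^2
          * (max (g * (k:ℝ)) (lam * J))^(m+1) * fw d α i i')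
        + max (g * (k:ℝ)) (lam * J) * ((((m+2).factorial : ℝ) - ((m+1).factorial : ℝ))
          * (max (g * (k:ℝ)) (lam * J))^m * (max (g * (k:ℝ)) (lam * J)) * fw d α i i')
        + max (g * (k:ℝ)) (lam * J) * ((((m+2).factorial : ℝ) - ((m+1).factorial : ℝ))
          * (max (g * (k:ℝ)) (lam * J))^m * (max (g * (k:ℝ)) (lam * J)) * fw d α i i')
        + (((m+1).factorial : ℝ) * (max (g * (k:ℝ)) (lam * J))^(m+1))
          * (max (g * (k:ℝ)) (lam * J) * fw d α i i')
        = ((m+1).factorial : ℝ) * (((m:ℝ)+1)+1)^2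
          * (max (g * (k:ℝ)) (lam * J))^(m+1+1) * fw d α i i' := by
      rw [hf2, hf1]; ring
    have hgoal : ((m+1).factorial : ℝ) * ((((m+1):ℕ):ℝ)+1)^2
          * (max (g * (k:ℝ)) (lam * J))^(m+1+1) * fw d α i i'
        = ((m+1).factorial : ℝ) * (((m:ℝ)+1)+1)^2
          * (max (g * (k:ℝ)) (lam * J))^(m+1+1) * fw d α i i' := by
      push_cast; ring
    rw [hgoal]
    linarith [h11, h12, h22]

end TPAux

/-- **Two-point string-sum bound** (Lemma 3 of the Supplement):
the sum over connected sequences `(Z₀,…,Z_m)` of subsets (nonempty, size ≤ k)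
whose union contains both `i` and `i'`, of `∏_j a_{Z_j}`, is at most
`m! (m+1)² g̃^{m+1} (d(i,i')+1)^{-α}` with `g̃ = max(gk, λJ)`. -/
theorem two_point_string_sum_bound
    {Λ : Type} [Fintype Λ] [DecidableEq Λ] (d : Λ → Λ → ℕ)
    (hmet : IsLatticeMetric d) (k : ℕ) (α D : ℝ) (hD : 0 < D) (hα : D < α)
    (J g lam : ℝ) (hJ : 0 < J) (hg : 0 ≤ g) (hlam : 1 ≤ lam)
    (a : Finset Λ → ℝ) (ha : ∀ Z, 0 ≤ a Z)
    (hpair : ∀ i i' : Λ,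
      ∑ Z ∈ Finset.univ.filter (fun Z : Finset Λ => i ∈ Z ∧ i' ∈ Z), a Z
        ≤ J * ((d i i' : ℝ) + 1) ^ (-α))
    (hsite : ∀ i : Λ,
      ∑ Z ∈ Finset.univ.filter (fun Z : Finset Λ => i ∈ Z), a Z ≤ g)
    (hlam₂ : ∀ i i' : Λ,
      ∑ i₀ : Λ, ((d i i₀ : ℝ) + 1) ^ (-α) * ((d i₀ i' : ℝ) + 1) ^ (-α)
        ≤ lam * ((d i i' : ℝ) + 1) ^ (-α))
    (m : ℕ) (i i' : Λ) :
    ∑ w ∈ Finset.univ.filter (fun w : Fin (m + 1) → Finset Λ =>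
        (∀ j, (w j).Nonempty ∧ (w j).card ≤ k) ∧ SeqConnected w ∧
        i ∈ Finset.univ.biUnion w ∧ i' ∈ Finset.univ.biUnion w),
      ∏ j, a (w j)
      ≤ (m.factorial : ℝ) * ((m : ℝ) + 1) ^ 2 * max (g * k) (lam * J) ^ (m + 1) *
          ((d i i' : ℝ) + 1) ^ (-α) := by
  classical
  have hkey := TPAux.ASum_le d hmet α k a J g lam hJ hg hlam ha hsite hpair hlam₂ m i i'
  have hid : (∑ w ∈ Finset.univ.filter (fun w : Fin (m + 1) → Finset Λ =>
        (∀ j, (w j).Nonempty ∧ (w j).card ≤ k) ∧ SeqConnected w ∧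
        i ∈ Finset.univ.biUnion w ∧ i' ∈ Finset.univ.biUnion w),
      ∏ j, a (w j)) = TPAux.ASum k a m i i' := by
    rw [TPAux.ASum]
    exact TPAux.sum_indic _ _
  rw [hid]
  simpa [TPAux.fw] using hkey
end

section
/- Decomposition of a connected Pauli string sequence (Lemma 4 of the Supplement). Let m ≥ 1 and let P₀, P₁, …, P_m be Pauli strings with supports Z₀, Z₁, …, Z_m satisfying Z_j ∩ (Z₀ ∪ ⋯ ∪ Z_{j−1}) ≠ ∅ for every 1 ≤ j ≤ m, and suppose the nested commutator C := ad_{P_m} ⋯ ad_{P_2} ad_{P_1}(P₀) is nonzero; let Λ_w := supp(C). Then there exists a partition {0, 1, …, m} = I₁ ⊔ I₂ into two nonempty sets such that: (1) for each part I ∈ {I₁, I₂}, the intersection graph on the index set I ∪ {0} (vertices j, with an edge between j and j' whenever Z_j ∩ Z_{j'} ≠ ∅) is connected, so every element of I is joined to Z₀ by a path through subsets indexed by I; and (2) Λ_w ∩ (⋃_{j∈I₁} Z_j) ≠ ∅ and Λ_w ∩ (⋃_{j∈I₂} Z_j) ≠ ∅. -/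
open scoped Classical ENNReal Matrix ComplexOrder
open Complex

/-- The nested commutator `ad_{P_m} ⋯ ad_{P_1}(P_0)`. -/
noncomputable def nestedComm {n : Type} [Fintype n] [DecidableEq n]
    (P : ℕ → Matrix n n ℂ) : ℕ → Matrix n n ℂ
  | 0 => P 0
  | m + 1 => commM (P (m + 1)) (nestedComm P m)

section PSDaux

variable {Λ : Type} [Fintype Λ] [DecidableEq Λ]

def pmul (a b : Fin 4) : Fin 4 := ![![0,1,2,3], ![1,0,3,2], ![2,3,0,1], ![3,2,1,0]] a b
def omg (a b : Fin 4) : ℂ := ![![1,1,1,1],![1,1,Complex.I,-Complex.I],![1,-Complex.I,1,Complex.I],![1,Complex.I,-Complex.I,1]] a b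

lemma pauli_mul (a b : Fin 4) : pauli a * pauli b = omg a b • pauli (pmul a b) := by
  fin_cases a <;> fin_cases b <;>
    simp [pauli, pmul, omg, Matrix.one_fin_two] <;>
    · ext i j
      fin_cases i <;> fin_cases j <;>
        simp [Matrix.mul_apply, Fin.sum_univ_two, Matrix.vecHead, Matrix.vecTail, Complex.I_mul_I] <;> ring

variable {Λ : Type} [Fintype Λ] [DecidableEq Λ]

lemma pauliString_mul (p q : Λ → Fin 4) :
    pauliString p * pauliString q =
      (∏ i, omg (p i) (q i)) • pauliString (fun i => pmul (p i) (q i)) := by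
  ext a b
  simp only [Matrix.mul_apply, pauliString, Matrix.smul_apply, smul_eq_mul]
  have h1 : ∀ c : SpinConf Λ,
      (∏ i, pauli (p i) (a i) (c i)) * ∏ i, pauli (q i) (c i) (b i)
        = ∏ i, (pauli (p i) (a i) (c i) * pauli (q i) (c i) (b i)) := fun c =>
    (Finset.prod_mul_distrib).symm
  simp only [h1]
  rw [show (Finset.univ : Finset (SpinConf Λ)) = Fintype.piFinset (fun _ : Λ => (Finset.univ : Finset (Fin 2))) from (Fintype.piFinset_univ).symm]
  rw [← Finset.prod_univ_sum (t := fun _ : Λ => (Finset.univ : Finset (Fin 2))) (f := fun i v => pauli (p i) (a i) v * pauli (q i) v (b i))]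
  have h2 : ∀ i, (∑ x : Fin 2, pauli (p i) (a i) x * pauli (q i) x (b i))
      = omg (p i) (q i) * pauli (pmul (p i) (q i)) (a i) (b i) := by
    intro i
    rw [← Matrix.mul_apply, pauli_mul, Matrix.smul_apply, smul_eq_mul]
  simp only [h2]
  rw [Finset.prod_mul_distrib]

lemma pmul_comm : ∀ a b, pmul a b = pmul b a := by decide

lemma commM_pauliString (p q : Λ → Fin 4) :
    commM (pauliString p) (pauliString q) =
      ((∏ i, omg (p i) (q i)) - ∏ i, omg (q i) (p i)) •
        pauliString (fun i => pmul (p i) (q i)) := by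
  unfold commM
  rw [pauliString_mul, pauliString_mul]
  have : (fun i => pmul (q i) (p i)) = fun i => pmul (p i) (q i) := by
    funext i; rw [pmul_comm]
  rw [this, sub_smul]

def qseq (p : ℕ → Λ → Fin 4) : ℕ → Λ → Fin 4
  | 0 => p 0
  | m + 1 => fun i => pmul (p (m + 1) i) (qseq p m i)

noncomputable def cseq (p : ℕ → Λ → Fin 4) : ℕ → ℂ
  | 0 => 1
  | m + 1 => ((∏ i, omg (p (m + 1) i) (qseq p m i)) -
      ∏ i, omg (qseq p m i) (p (m + 1) i)) * cseq p m

lemma commM_smul (A B : Matrix (SpinConf Λ) (SpinConf Λ) ℂ) (c : ℂ) :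
    commM A (c • B) = c • commM A B := by
  simp only [commM, Matrix.mul_smul, Matrix.smul_mul, smul_sub]

lemma nested_eq (p : ℕ → Λ → Fin 4) (m : ℕ) :
    nestedComm (fun j => pauliString (p j)) m = cseq p m • pauliString (qseq p m) := by
  induction m with
  | zero => simp [nestedComm, cseq, qseq]
  | succ m ih =>
      rw [show nestedComm (fun j => pauliString (p j)) (m+1)
            = commM (pauliString (p (m+1))) (nestedComm (fun j => pauliString (p j)) m) from rfl,
        ih, commM_smul, commM_pauliString]
      rw [smul_smul, show qseq p (m+1) = fun i => pmul (p (m+1) i) (qseq p m i) from rfl]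
      rw [show cseq p (m+1) = ((∏ i, omg (p (m + 1) i) (qseq p m i)) -
        ∏ i, omg (qseq p m i) (p (m + 1) i)) * cseq p m from rfl]
      ring_nf

lemma pauli_entry_ne (a : Fin 4) :
    pauli a 0 (if a = 1 ∨ a = 2 then 1 else 0) ≠ 0 := by
  fin_cases a <;> simp [pauli, Matrix.one_fin_two, Complex.I_ne_zero]

lemma pauliString_ne_zero (q : Λ → Fin 4) : pauliString q ≠ 0 := by
  intro h
  have h0 : pauliString q (fun _ => 0) (fun i => if q i = 1 ∨ q i = 2 then 1 else 0) = 0 := by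
    rw [h]; rfl
  rw [pauliString] at h0
  exact (Finset.prod_ne_zero_iff.2 (fun i _ => pauli_entry_ne (q i))) h0

def Sset (q : Λ → Fin 4) : Finset Λ := Finset.univ.filter (fun i => q i ≠ 0)

lemma pauli_zero_apply (x y : Fin 2) : pauli 0 x y = if x = y then 1 else 0 := by
  fin_cases x <;> fin_cases y <;> simp [pauli, Matrix.one_fin_two]

lemma supportedOn_smul_pauliString (c : ℂ) (q : Λ → Fin 4) :
    IsSupportedOn (c • pauliString q) (Sset q) := by
  constructor
  · rintro a b ⟨i, hi, hab⟩
    have hqi : q i = 0 := by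
      by_contra h; exact hi (Finset.mem_filter.2 ⟨Finset.mem_univ i, h⟩)
    have : pauli (q i) (a i) (b i) = 0 := by
      rw [hqi, pauli_zero_apply, if_neg hab]
    simp only [Matrix.smul_apply, pauliString, smul_eq_mul]
    rw [Finset.prod_eq_zero (Finset.mem_univ i) this, mul_zero]
  · intro a b a' b' ha hb hout hout'
    simp only [Matrix.smul_apply, pauliString, smul_eq_mul]
    congr 1
    apply Finset.prod_congr rfl
    intro i _
    by_cases hi : i ∈ Sset q
    · rw [ha i hi, hb i hi]
    · have hqi : q i = 0 := by
        by_contra h; exact hi (Finset.mem_filter.2 ⟨Finset.mem_univ i, h⟩)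
      rw [hqi, pauli_zero_apply, pauli_zero_apply, hout i hi, hout' i hi]
      simp

lemma pauli_three_one : pauli 3 1 1 = -1 := by simp [pauli]
lemma pauli_three_zero : pauli 3 0 0 = 1 := by simp [pauli]

lemma sset_subset_of_supported (c : ℂ) (hc : c ≠ 0) (q : Λ → Fin 4) (S : Finset Λ)
    (h : IsSupportedOn (c • pauliString q) S) : Sset q ⊆ S := by
  intro i₀ hi₀mem
  have hqi₀ : q i₀ ≠ 0 := (Finset.mem_filter.1 hi₀mem).2
  by_contra hi₀
  set τ : SpinConf Λ := fun i => if q i = 1 ∨ q i = 2 then 1 else 0 with hτ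
  by_cases hcase : ∃ j, j ∉ S ∧ (q j = 1 ∨ q j = 2)
  · obtain ⟨j, hj, hqj⟩ := hcase
    have hne : (fun _ : Λ => (0 : Fin 2)) j ≠ τ j := by
      simp only [hτ, if_pos hqj]; decide
    have h0 := h.1 (fun _ => 0) τ ⟨j, hj, hne⟩
    rw [Matrix.smul_apply, smul_eq_mul] at h0
    rcases mul_eq_zero.1 h0 with h' | h'
    · exact hc h'
    · exact (Finset.prod_ne_zero_iff.2 (fun i _ => pauli_entry_ne (q i))) h'
  · push_neg at hcase
    have hq3 : q i₀ = 3 := by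
      have h3 : ∀ x : Fin 4, x ≠ 0 → x ≠ 1 → x ≠ 2 → x = 3 := by decide
      exact h3 _ hqi₀ (hcase i₀ hi₀).1 (hcase i₀ hi₀).2
    set a : SpinConf Λ := fun i => if i = i₀ then 1 else 0 with ha
    set b : SpinConf Λ := fun i => if i = i₀ then 1 else τ i with hb
    have key := h.2 a b (fun _ => 0) τ
      (fun i hi => by
        have hne : i ≠ i₀ := fun hh => hi₀ (hh ▸ hi)
        simp [ha, hne])
      (fun i hi => by
        have hne : i ≠ i₀ := fun hh => hi₀ (hh ▸ hi)
        simp [hb, hne])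
      (fun i hi => by
        by_cases hii : i = i₀
        · simp [ha, hb, hii]
        · simp only [ha, hb, if_neg hii, hτ]
          obtain ⟨h1, h2⟩ := hcase i hi
          simp [h1, h2])
      (fun i hi => by
        simp only [hτ]
        obtain ⟨h1, h2⟩ := hcase i hi
        simp [h1, h2])
    simp only [Matrix.smul_apply, smul_eq_mul, pauliString] at key
    rw [← Finset.mul_prod_erase Finset.univ _ (Finset.mem_univ i₀),
        ← Finset.mul_prod_erase Finset.univ
          (fun i => pauli (q i) ((fun _ : Λ => (0:Fin 2)) i) (τ i)) (Finset.mem_univ i₀)] at key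
    have hrest : ∏ i ∈ Finset.univ.erase i₀, pauli (q i) (a i) (b i)
        = ∏ i ∈ Finset.univ.erase i₀, pauli (q i) 0 (τ i) := by
      apply Finset.prod_congr rfl
      intro i hi
      have hii : i ≠ i₀ := Finset.ne_of_mem_erase hi
      simp [ha, hb, hii]
    have hfac : pauli (q i₀) (a i₀) (b i₀) = -1 := by
      rw [hq3]; simp [ha, hb, pauli_three_one]
    have hfac' : pauli (q i₀) ((fun _ : Λ => (0:Fin 2)) i₀) (τ i₀) = 1 := by
      rw [hq3]; simp [hτ, hq3, pauli_three_zero]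
    rw [hrest, hfac, hfac'] at key
    have hR : (∏ i ∈ Finset.univ.erase i₀, pauli (q i) 0 (τ i)) ≠ 0 :=
      Finset.prod_ne_zero_iff.2 (fun i _ => pauli_entry_ne (q i))
    have : c * ∏ i ∈ Finset.univ.erase i₀, pauli (q i) 0 (τ i) = 0 := by
      have := key
      ring_nf at this ⊢
      linear_combination (-(1:ℂ)/2) * this
    rcases mul_eq_zero.1 this with h' | h'
    · exact hc h'
    · exact hR h'

lemma omg_comm_of (a b : Fin 4) (h : a = 0 ∨ b = 0 ∨ a = b) : omg a b = omg b a := by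
  fin_cases a <;> fin_cases b <;> first | rfl | (exfalso; simp_all)

lemma pmul_ne_zero (a b : Fin 4) (ha : a ≠ 0) (hb : b ≠ 0) (hab : a ≠ b) :
    pmul a b ≠ 0 := by revert ha hb hab; revert a b; decide

lemma pmul_zero_left (b : Fin 4) : pmul 0 b = b := by fin_cases b <;> rfl

lemma cseq_succ_ne_zero_exists (p : ℕ → Λ → Fin 4) (m : ℕ) (h : cseq p (m + 1) ≠ 0) :
    ∃ i, p (m + 1) i ≠ 0 ∧ qseq p m i ≠ 0 ∧ p (m + 1) i ≠ qseq p m i := by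
  by_contra hno
  push_neg at hno
  have heq : ∀ i : Λ, omg (p (m+1) i) (qseq p m i) = omg (qseq p m i) (p (m+1) i) := by
    intro i
    apply omg_comm_of
    by_cases h1 : p (m+1) i = 0
    · exact Or.inl h1
    by_cases h2 : qseq p m i = 0
    · exact Or.inr (Or.inl h2)
    · exact Or.inr (Or.inr (hno i h1 h2))
  apply h
  rw [show cseq p (m+1) = ((∏ i, omg (p (m + 1) i) (qseq p m i)) -
      ∏ i, omg (qseq p m i) (p (m + 1) i)) * cseq p m from rfl]
  rw [Finset.prod_congr rfl (fun i _ => heq i)]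
  ring

lemma cseq_ne_zero_of_succ (p : ℕ → Λ → Fin 4) (m : ℕ) (h : cseq p (m + 1) ≠ 0) :
    cseq p m ≠ 0 := fun h0 => h (by
  rw [show cseq p (m+1) = ((∏ i, omg (p (m + 1) i) (qseq p m i)) -
      ∏ i, omg (qseq p m i) (p (m + 1) i)) * cseq p m from rfl, h0, mul_zero])

lemma qseq_support (p : ℕ → Λ → Fin 4) (m : ℕ) (i : Λ) (h : qseq p m i ≠ 0) :
    ∃ j ≤ m, p j i ≠ 0 := by
  induction m with
  | zero => exact ⟨0, le_refl 0, h⟩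
  | succ m ih =>
      rw [show qseq p (m+1) i = pmul (p (m+1) i) (qseq p m i) from rfl] at h
      by_cases h1 : p (m+1) i = 0
      · rw [h1, pmul_zero_left] at h
        obtain ⟨j, hj, hpj⟩ := ih h
        exact ⟨j, le_trans hj (Nat.le_succ m), hpj⟩
      · exact ⟨m+1, le_refl _, h1⟩

lemma qseq_persist (p : ℕ → Λ → Fin 4) (m : ℕ) (i : Λ)
    (h : qseq p m i ≠ 0) (h2 : qseq p (m+1) i = 0) : p (m+1) i ≠ 0 := by
  intro h0
  rw [show qseq p (m+1) i = pmul (p (m+1) i) (qseq p m i) from rfl, h0, pmul_zero_left] at h2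
  exact h h2

def Conn (Z : ℕ → Finset Λ) (I : Finset ℕ) : Prop :=
  ∀ j ∈ I, ∃ (l : ℕ) (seq : ℕ → ℕ), seq 0 = j ∧ seq l = 0 ∧
    (∀ b : ℕ, b ≤ l → seq b ∈ insert 0 I) ∧
    (∀ b : ℕ, b < l → (Z (seq b) ∩ Z (seq (b + 1))).Nonempty)

def Good (Z : ℕ → Finset Λ) (S : Finset Λ) (m : ℕ) (I₁ I₂ : Finset ℕ) : Prop :=
  I₁.Nonempty ∧ I₂.Nonempty ∧ Disjoint I₁ I₂ ∧ I₁ ∪ I₂ = Finset.range (m + 1) ∧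
    Conn Z I₁ ∧ Conn Z I₂ ∧ (S ∩ I₁.biUnion Z).Nonempty ∧ (S ∩ I₂.biUnion Z).Nonempty

lemma Good.swap {Z : ℕ → Finset Λ} {S : Finset Λ} {m : ℕ} {I₁ I₂ : Finset ℕ}
    (h : Good Z S m I₁ I₂) : Good Z S m I₂ I₁ := by
  obtain ⟨h1, h2, h3, h4, h5, h6, h7, h8⟩ := h
  exact ⟨h2, h1, h3.symm, by rw [Finset.union_comm]; exact h4, h6, h5, h8, h7⟩

lemma Conn.insert_new {Z : ℕ → Finset Λ} {I : Finset ℕ} (hI : Conn Z I)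
    (n r : ℕ) (hr : r ∈ I) (hedge : (Z n ∩ Z r).Nonempty) : Conn Z (insert n I) := by
  intro j hj
  rcases Finset.mem_insert.1 hj with hj | hj
  · subst hj
    obtain ⟨l, seq, hs0, hsl, hmem, hedges⟩ := hI r hr
    refine ⟨l + 1, fun b => Nat.casesOn b j seq, rfl, hsl, ?_, ?_⟩
    · intro b hb
      cases b with
      | zero => exact Finset.mem_insert.2 (Or.inr (Finset.mem_insert_self j I))
      | succ b' =>
          have := hmem b' (Nat.le_of_succ_le_succ hb)
          rcases Finset.mem_insert.1 this with h | h
          · exact Finset.mem_insert.2 (Or.inl h)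
          · exact Finset.mem_insert.2 (Or.inr (Finset.mem_insert.2 (Or.inr h)))
    · intro b hb
      cases b with
      | zero => simpa [hs0] using hedge
      | succ b' => exact hedges b' (Nat.lt_of_succ_lt_succ hb)
  · obtain ⟨l, seq, hs0, hsl, hmem, hedges⟩ := hI j hj
    refine ⟨l, seq, hs0, hsl, fun b hb => ?_, hedges⟩
    have := hmem b hb
    rcases Finset.mem_insert.1 this with h | h
    · exact Finset.mem_insert.2 (Or.inl h)
    · exact Finset.mem_insert.2 (Or.inr (Finset.mem_insert.2 (Or.inr h)))

lemma Good.step {Z : ℕ → Finset Λ} {S S' : Finset Λ} {m : ℕ} {I₁ I₂ : Finset ℕ}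
    (h : Good Z S m I₁ I₂) (istar : Λ) (k : ℕ) (hk : k ∈ I₁)
    (hi1 : istar ∈ Z (m + 1)) (hi2 : istar ∈ Z k) (hiS' : istar ∈ S')
    (hsub : ∀ x ∈ S, x ∉ S' → x ∈ Z (m + 1)) :
    ∃ A B : Finset ℕ, Good Z S' (m + 1) A B := by
  obtain ⟨h1, h2, h3, h4, h5, h6, h7, h8⟩ := h
  have hm1 : (m + 1) ∉ I₁ ∪ I₂ := by rw [h4]; simp
  by_cases hcase : (S' ∩ I₂.biUnion Z).Nonempty
  · refine ⟨insert (m + 1) I₁, I₂, ?_, h2, ?_, ?_, h5.insert_new (m+1) k hk ⟨istar, Finset.mem_inter.2 ⟨hi1, hi2⟩⟩, h6, ?_, hcase⟩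
    · exact Finset.insert_nonempty _ _
    · rw [Finset.disjoint_insert_left]
      exact ⟨fun hh => hm1 (Finset.mem_union.2 (Or.inr hh)), h3⟩
    · rw [Finset.insert_union, h4, ← Finset.range_add_one]
    · exact ⟨istar, Finset.mem_inter.2 ⟨hiS', Finset.mem_biUnion.2 ⟨k, Finset.mem_insert.2 (Or.inr hk), hi2⟩⟩⟩
  · obtain ⟨w, hw⟩ := h8
    have hwS : w ∈ S := (Finset.mem_inter.1 hw).1
    obtain ⟨r, hr, hwr⟩ := Finset.mem_biUnion.1 (Finset.mem_inter.1 hw).2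
    have hwS' : w ∉ S' := fun hh =>
      hcase ⟨w, Finset.mem_inter.2 ⟨hh, Finset.mem_biUnion.2 ⟨r, hr, hwr⟩⟩⟩
    have hwZ : w ∈ Z (m + 1) := hsub w hwS hwS'
    refine ⟨I₁, insert (m + 1) I₂, h1, Finset.insert_nonempty _ _, ?_, ?_, h5,
      h6.insert_new (m+1) r hr ⟨w, Finset.mem_inter.2 ⟨hwZ, hwr⟩⟩, ?_, ?_⟩
    · rw [Finset.disjoint_insert_right]
      exact ⟨fun hh => hm1 (Finset.mem_union.2 (Or.inl hh)), h3⟩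
    · rw [Finset.union_insert, h4, ← Finset.range_add_one]
    · exact ⟨istar, Finset.mem_inter.2 ⟨hiS', Finset.mem_biUnion.2 ⟨k, hk, hi2⟩⟩⟩
    · exact ⟨istar, Finset.mem_inter.2 ⟨hiS', Finset.mem_biUnion.2 ⟨m+1, Finset.mem_insert_self _ _, hi1⟩⟩⟩

lemma aux_good (p : ℕ → Λ → Fin 4) (Z : ℕ → Finset Λ)
    (hZ : ∀ j, Z j = Finset.univ.filter (fun i : Λ => p j i ≠ 0)) :
    ∀ m : ℕ, 1 ≤ m → cseq p m ≠ 0 →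
      ∃ I₁ I₂ : Finset ℕ, Good Z (Sset (qseq p m)) m I₁ I₂ := by
  intro m hm1
  induction m, hm1 using Nat.le_induction with
  | base =>
      intro hc
      obtain ⟨istar, hp1, hp0, hne⟩ := cseq_succ_ne_zero_exists p 0 hc
      have hq0 : qseq p 0 istar = p 0 istar := rfl
      have hiZ1 : istar ∈ Z 1 := by rw [hZ]; exact Finset.mem_filter.2 ⟨Finset.mem_univ _, hp1⟩
      have hiZ0 : istar ∈ Z 0 := by
        rw [hZ]; exact Finset.mem_filter.2 ⟨Finset.mem_univ _, by rw [← hq0]; exact hp0⟩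
      have hiS : istar ∈ Sset (qseq p 1) := by
        refine Finset.mem_filter.2 ⟨Finset.mem_univ _, ?_⟩
        show pmul (p 1 istar) (qseq p 0 istar) ≠ 0
        exact pmul_ne_zero _ _ hp1 hp0 hne
      refine ⟨{0}, {1}, Finset.singleton_nonempty _, Finset.singleton_nonempty _, by decide, by decide, ?_, ?_, ?_, ?_⟩
      · intro j hj
        rw [Finset.mem_singleton] at hj
        exact ⟨0, fun _ => 0, hj ▸ rfl, rfl, fun b _ => Finset.mem_insert_self 0 _,
          fun b hb => absurd hb (Nat.not_lt_zero b)⟩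
      · intro j hj
        rw [Finset.mem_singleton] at hj
        subst hj
        refine ⟨1, fun b => Nat.casesOn b 1 (fun _ => 0), rfl, rfl, ?_, ?_⟩
        · intro b _
          cases b with
          | zero => exact Finset.mem_insert.2 (Or.inr (Finset.mem_singleton_self 1))
          | succ b' => exact Finset.mem_insert_self 0 _
        · intro b hb
          interval_cases b
          exact ⟨istar, Finset.mem_inter.2 ⟨hiZ1, hiZ0⟩⟩
      · exact ⟨istar, Finset.mem_inter.2 ⟨hiS, Finset.mem_biUnion.2 ⟨0, Finset.mem_singleton_self 0, hiZ0⟩⟩⟩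
      · exact ⟨istar, Finset.mem_inter.2 ⟨hiS, Finset.mem_biUnion.2 ⟨1, Finset.mem_singleton_self 1, hiZ1⟩⟩⟩
  | succ m hm ih =>
      intro hc
      obtain ⟨I₁, I₂, hGood⟩ := ih (cseq_ne_zero_of_succ p m hc)
      obtain ⟨istar, hp1, hp0, hne⟩ := cseq_succ_ne_zero_exists p m hc
      obtain ⟨k, hkm, hpk⟩ := qseq_support p m istar hp0
      have hiZ1 : istar ∈ Z (m + 1) := by
        rw [hZ]; exact Finset.mem_filter.2 ⟨Finset.mem_univ _, hp1⟩
      have hiZk : istar ∈ Z k := by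
        rw [hZ]; exact Finset.mem_filter.2 ⟨Finset.mem_univ _, hpk⟩
      have hiS' : istar ∈ Sset (qseq p (m + 1)) := by
        refine Finset.mem_filter.2 ⟨Finset.mem_univ _, ?_⟩
        show pmul (p (m+1) istar) (qseq p m istar) ≠ 0
        exact pmul_ne_zero _ _ hp1 hp0 hne
      have hsub : ∀ x ∈ Sset (qseq p m), x ∉ Sset (qseq p (m + 1)) → x ∈ Z (m + 1) := by
        intro x hx hx'
        have h1 : qseq p m x ≠ 0 := (Finset.mem_filter.1 hx).2
        have h2 : qseq p (m + 1) x = 0 := by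
          by_contra hh
          exact hx' (Finset.mem_filter.2 ⟨Finset.mem_univ _, hh⟩)
        rw [hZ]
        exact Finset.mem_filter.2 ⟨Finset.mem_univ _, qseq_persist p m x h1 h2⟩
      have hkmem : k ∈ I₁ ∪ I₂ := by
        rw [hGood.2.2.2.1]; exact Finset.mem_range.2 (Nat.lt_succ_of_le hkm)
      rcases Finset.mem_union.1 hkmem with hk | hk
      · exact hGood.step istar k hk hiZ1 hiZk hiS' hsub
      · obtain ⟨A, B, hAB⟩ := hGood.swap.step istar k hk hiZ1 hiZk hiS' hsub
        exact ⟨A, B, hAB⟩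


end PSDaux

/-- **Decomposition of a connected Pauli string sequence**
(Lemma 4 of the Supplement): if the nested commutator
`C = ad_{P_m}⋯ad_{P_1}(P₀)` of a connected sequence of Pauli strings is nonzero,
then the index set `{0,…,m}` can be partitioned into two nonempty parts `I₁, I₂`,
each connected to `Z₀` through intersecting supports, and the (minimal) support
`Λ_w` of `C` intersects the union of the supports of each part. -/
theorem pauli_string_decomposition
    {Λ : Type} [Fintype Λ] [DecidableEq Λ]
    (m : ℕ) (hm : 1 ≤ m) (p : ℕ → Λ → Fin 4)
    (Z : ℕ → Finset Λ)
    (hZ : ∀ j, Z j = Finset.univ.filter (fun i : Λ => p j i ≠ 0))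
    (hconn : ∀ j : ℕ, 1 ≤ j → j ≤ m → (Z j ∩ (Finset.range j).biUnion Z).Nonempty)
    (C : SpinOp Λ) (hC : C = nestedComm (fun j => pauliString (p j)) m)
    (hC0 : C ≠ 0)
    (Λw : Finset Λ) (hΛw : IsSupportedOn C Λw)
    (hmin : ∀ S : Finset Λ, IsSupportedOn C S → Λw ⊆ S) :
    ∃ I₁ I₂ : Finset ℕ, I₁.Nonempty ∧ I₂.Nonempty ∧ Disjoint I₁ I₂ ∧
      I₁ ∪ I₂ = Finset.range (m + 1) ∧
      (∀ I ∈ ([I₁, I₂] : List (Finset ℕ)), ∀ j ∈ I,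
        ∃ (l : ℕ) (seq : ℕ → ℕ), seq 0 = j ∧ seq l = 0 ∧
          (∀ b : ℕ, b ≤ l → seq b ∈ insert 0 I) ∧
          (∀ b : ℕ, b < l → (Z (seq b) ∩ Z (seq (b + 1))).Nonempty)) ∧
      (Λw ∩ I₁.biUnion Z).Nonempty ∧ (Λw ∩ I₂.biUnion Z).Nonempty := by
  have hCeq : C = cseq p m • pauliString (qseq p m) := by rw [hC, nested_eq]
  have hc : cseq p m ≠ 0 := by
    intro h0
    exact hC0 (by rw [hCeq, h0, zero_smul])
  have hΛweq : Λw = Sset (qseq p m) := by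
    apply Finset.Subset.antisymm
    · exact hmin _ (by rw [hCeq]; exact supportedOn_smul_pauliString _ _)
    · exact sset_subset_of_supported (cseq p m) hc (qseq p m) Λw (hCeq ▸ hΛw)
  obtain ⟨I₁, I₂, h1, h2, h3, h4, h5, h6, h7, h8⟩ := aux_good p Z hZ m hm hc
  refine ⟨I₁, I₂, h1, h2, h3, h4, ?_, hΛweq ▸ h7, hΛweq ▸ h8⟩
  intro I hI
  rcases List.mem_pair.1 hI with h | h
  · exact h ▸ h5
  · exact h ▸ h6
end

section
/- Exponentially weighted two-point string-sum bound (first-step inequality of the Supplement). For all sites i, i' ∈ Λ and every t with 2e·g̃·|t| ≤ 1, Σ_{m'=0}^{∞} ((2|t|)^{m'}/m'!) · Σ_{(Z₀,…,Z_{m'}) connected, {i,i'} ⊆ Z₀∪⋯∪Z_{m'}} ∏_{j=0}^{m'} a_{Z_j} ≤ 6 g̃ (d(i,i')+1)^{−α}. -/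
open scoped Classical ENNReal Matrix ComplexOrder
open Complex

set_option linter.unusedSectionVars false
set_option linter.unusedVariables false
set_option maxHeartbeats 1600000

namespace StrSum
variable {Λ : Type} [Fintype Λ] [DecidableEq Λ]

def UU {m : ℕ} (w : Fin (m + 1) → Finset Λ) : Finset Λ := Finset.univ.biUnion w

lemma biUnion_snoc_lt {m : ℕ} (v : Fin (m + 1) → Finset Λ) (Z : Finset Λ) {c : ℕ}
    (hc : c ≤ m + 1) :
    ((Finset.univ.filter (fun j' : Fin (m + 2) => (j' : ℕ) < c)).biUnion (Fin.snoc v Z))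
      = (Finset.univ.filter (fun j' : Fin (m + 1) => (j' : ℕ) < c)).biUnion v := by
  ext x
  simp only [Finset.mem_biUnion, Finset.mem_filter, Finset.mem_univ, true_and]
  constructor
  · rintro ⟨j, hj, hx⟩
    have hj' : (j : ℕ) < m + 1 := lt_of_lt_of_le hj hc
    refine ⟨⟨(j : ℕ), hj'⟩, hj, ?_⟩
    have hcast : (⟨(j : ℕ), hj'⟩ : Fin (m + 1)).castSucc = j := by
      ext; simp
    rw [← hcast, Fin.snoc_castSucc] at hx
    exact hx
  · rintro ⟨j, hj, hx⟩
    exact ⟨j.castSucc, by simpa using hj, by rwa [Fin.snoc_castSucc]⟩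

lemma UU_snoc {m : ℕ} (v : Fin (m + 1) → Finset Λ) (Z : Finset Λ) :
    UU (Fin.snoc v Z) = UU v ∪ Z := by
  ext x
  simp only [UU, Finset.mem_biUnion, Finset.mem_univ, true_and, Finset.mem_union]
  constructor
  · rintro ⟨j, hx⟩
    rcases Fin.eq_castSucc_or_eq_last j with ⟨j₀, rfl⟩ | rfl
    · rw [Fin.snoc_castSucc] at hx; exact Or.inl ⟨j₀, hx⟩
    · rw [Fin.snoc_last] at hx; exact Or.inr hx
  · rintro (⟨j₀, hx⟩ | hx)
    · exact ⟨j₀.castSucc, by rwa [Fin.snoc_castSucc]⟩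
    · exact ⟨Fin.last _, by rwa [Fin.snoc_last]⟩

lemma seqConnected_zero (w : Fin 1 → Finset Λ) : SeqConnected w := by
  intro j hj
  have := j.isLt
  omega

lemma filter_univ_eq {m : ℕ} :
    (Finset.univ.filter (fun j' : Fin (m + 1) => (j' : ℕ) < m + 1)) = Finset.univ := by
  apply Finset.filter_true_of_mem
  intro j _
  exact j.isLt

lemma seqConnected_snoc {m : ℕ} (v : Fin (m + 1) → Finset Λ) (Z : Finset Λ) :
    SeqConnected (Fin.snoc v Z) ↔ SeqConnected v ∧ (Z ∩ UU v).Nonempty := by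
  constructor
  · intro H
    constructor
    · intro j hj
      have h := H j.castSucc (by simpa using hj)
      rwa [Fin.snoc_castSucc, Fin.coe_castSucc,
        biUnion_snoc_lt v Z (le_of_lt j.isLt)] at h
    · have h := H (Fin.last (m + 1)) (by simp)
      rwa [Fin.snoc_last, Fin.val_last, biUnion_snoc_lt v Z (le_refl (m + 1)),
        filter_univ_eq] at h
  · rintro ⟨H1, H2⟩ j hj
    rcases Fin.eq_castSucc_or_eq_last j with ⟨j₀, rfl⟩ | rfl
    · have := H1 j₀ (by simpa using hj)
      rwa [Fin.snoc_castSucc, Fin.coe_castSucc,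
        biUnion_snoc_lt v Z (le_of_lt j₀.isLt)]
    · rwa [Fin.snoc_last, Fin.val_last, biUnion_snoc_lt v Z (le_refl (m + 1)),
        filter_univ_eq]

lemma forall_snoc {m : ℕ} (P : Finset Λ → Prop) (v : Fin (m + 1) → Finset Λ) (Z : Finset Λ) :
    (∀ j : Fin (m + 2), P ((Fin.snoc v Z : Fin (m + 2) → Finset Λ) j)) ↔
      (∀ j, P (v j)) ∧ P Z := by
  constructor
  · intro H
    refine ⟨fun j => ?_, ?_⟩
    · have := H j.castSucc; rwa [Fin.snoc_castSucc] at this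
    · have := H (Fin.last _); rwa [Fin.snoc_last] at this
  · rintro ⟨H1, H2⟩ j
    rcases Fin.eq_castSucc_or_eq_last j with ⟨j₀, rfl⟩ | rfl
    · rw [Fin.snoc_castSucc]; exact H1 j₀
    · rwa [Fin.snoc_last]

variable (k : ℕ) (a : Finset Λ → ℝ) (d : Λ → Λ → ℕ) (α : ℝ) (J g lam : ℝ)

noncomputable def dec (x y : Λ) : ℝ := ((d x y : ℝ) + 1) ^ (-α)

noncomputable def hS (S : Finset Λ) (i : Λ) : ℝ := ∑ x ∈ S, dec d α x i

def okZ (Z : Finset Λ) : Prop := Z.Nonempty ∧ Z.card ≤ k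

noncomputable def Wt {m : ℕ} (w : Fin (m + 1) → Finset Λ) : ℝ :=
  if (∀ j, okZ k (w j)) ∧ SeqConnected w then ∏ j, a (w j) else 0

noncomputable def att {m : ℕ} (v : Fin (m + 1) → Finset Λ) (Z : Finset Λ) : ℝ :=
  if okZ k Z ∧ (Z ∩ UU v).Nonempty then a Z else 0

noncomputable def Npin (m : ℕ) (x : Λ) : ℝ :=
  ∑ w : Fin (m + 1) → Finset Λ, if x ∈ UU w then Wt k a w else 0

noncomputable def Mw (m : ℕ) (x i : Λ) : ℝ :=
  ∑ w : Fin (m + 1) → Finset Λ, (if x ∈ UU w then Wt k a w else 0) * hS d α (UU w) i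

lemma dec_nonneg (x y : Λ) : 0 ≤ dec d α x y := Real.rpow_nonneg (by positivity) _

lemma hS_nonneg (S : Finset Λ) (i : Λ) : 0 ≤ hS d α S i :=
  Finset.sum_nonneg fun x _ => dec_nonneg d α x i

lemma Wt_nonneg (ha : ∀ Z, 0 ≤ a Z) {m : ℕ} (w : Fin (m + 1) → Finset Λ) :
    0 ≤ Wt k a w := by
  unfold Wt; split
  · exact Finset.prod_nonneg fun j _ => ha _
  · exact le_refl 0

lemma att_nonneg (ha : ∀ Z, 0 ≤ a Z) {m : ℕ} (v : Fin (m + 1) → Finset Λ) (Z : Finset Λ) :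
    0 ≤ att k a v Z := by
  unfold att; split
  · exact ha _
  · exact le_refl 0

lemma iWt_nonneg (ha : ∀ Z, 0 ≤ a Z) {m : ℕ} (w : Fin (m + 1) → Finset Λ) (x : Λ) :
    0 ≤ (if x ∈ UU w then Wt k a w else 0) := by
  split
  · exact Wt_nonneg k a ha w
  · exact le_refl 0

lemma Wt_snoc {m : ℕ} (v : Fin (m + 1) → Finset Λ) (Z : Finset Λ) :
    Wt k a (Fin.snoc v Z) = Wt k a v * att k a v Z := by
  unfold Wt att
  by_cases h1 : (∀ j, okZ k (v j)) ∧ SeqConnected v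
  · by_cases h2 : okZ k Z ∧ (Z ∩ UU v).Nonempty
    · rw [if_pos ⟨(forall_snoc (okZ k) v Z).2 ⟨h1.1, h2.1⟩,
        (seqConnected_snoc v Z).2 ⟨h1.2, h2.2⟩⟩, if_pos h1, if_pos h2,
        Fin.prod_univ_castSucc]
      simp
    · rw [if_neg, if_pos h1, if_neg h2, mul_zero]
      rintro ⟨hA, hB⟩
      exact h2 ⟨(forall_snoc (okZ k) v Z).1 hA |>.2, ((seqConnected_snoc v Z).1 hB).2⟩
  · rw [if_neg, if_neg h1, zero_mul]
    rintro ⟨hA, hB⟩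
    exact h1 ⟨fun j => (forall_snoc (okZ k) v Z).1 hA |>.1 j,
      ((seqConnected_snoc v Z).1 hB).1⟩

lemma sum_snoc {m : ℕ} (F : (Fin (m + 2) → Finset Λ) → ℝ) :
    ∑ w : Fin (m + 2) → Finset Λ, F w
      = ∑ v : Fin (m + 1) → Finset Λ, ∑ Z : Finset Λ, F (Fin.snoc v Z) := by
  rw [← Equiv.sum_comp (Fin.snocEquiv (fun _ => Finset Λ)) F, Fintype.sum_prod_type]
  rw [Finset.sum_comm]
  rfl

lemma siteSum (hsite : ∀ i : Λ,
      ∑ Z ∈ Finset.univ.filter (fun Z : Finset Λ => i ∈ Z), a Z ≤ g) (x : Λ) :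
    ∑ Z : Finset Λ, (if x ∈ Z then a Z else 0) ≤ g := by
  rw [← Finset.sum_filter]; exact hsite x

lemma pairSum (hpair : ∀ i i' : Λ,
      ∑ Z ∈ Finset.univ.filter (fun Z : Finset Λ => i ∈ Z ∧ i' ∈ Z), a Z
        ≤ J * ((d i i' : ℝ) + 1) ^ (-α)) (x y : Λ) :
    ∑ Z : Finset Λ, (if x ∈ Z ∧ y ∈ Z then a Z else 0) ≤ J * dec d α x y := by
  rw [← Finset.sum_filter]; exact hpair x y

lemma hS_union_le (A B : Finset Λ) (i : Λ) :
    hS d α (A ∪ B) i ≤ hS d α A i + hS d α B i := by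
  have h := Finset.sum_union_inter (s₁ := A) (s₂ := B) (f := fun x => dec d α x i)
  have h2 : 0 ≤ ∑ x ∈ A ∩ B, dec d α x i :=
    Finset.sum_nonneg fun x _ => dec_nonneg d α x i
  unfold hS; linarith

lemma convSum (ha : ∀ Z, 0 ≤ a Z) (hJ : 0 < J)
    (hpair : ∀ i i' : Λ,
      ∑ Z ∈ Finset.univ.filter (fun Z : Finset Λ => i ∈ Z ∧ i' ∈ Z), a Z
        ≤ J * ((d i i' : ℝ) + 1) ^ (-α))
    (hlam₂ : ∀ i i' : Λ,
      ∑ i₀ : Λ, ((d i i₀ : ℝ) + 1) ^ (-α) * ((d i₀ i' : ℝ) + 1) ^ (-α)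
        ≤ lam * ((d i i' : ℝ) + 1) ^ (-α))
    (x i : Λ) :
    ∑ Z : Finset Λ, (if x ∈ Z then a Z else 0) * hS d α Z i ≤ lam * J * dec d α x i := by
  have step1 : ∀ Z : Finset Λ, (if x ∈ Z then a Z else 0) * hS d α Z i
      = ∑ y : Λ, (if x ∈ Z ∧ y ∈ Z then a Z else 0) * dec d α y i := by
    intro Z
    by_cases hx : x ∈ Z
    · rw [if_pos hx, hS, Finset.mul_sum]
      have e : ∀ y : Λ, (if x ∈ Z ∧ y ∈ Z then a Z else 0) * dec d α y i
          = if y ∈ Z then a Z * dec d α y i else 0 := by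
        intro y; by_cases hy : y ∈ Z <;> simp [hx, hy]
      simp only [e]
      rw [Finset.sum_ite_mem, Finset.univ_inter]
    · simp [hx]
  calc ∑ Z : Finset Λ, (if x ∈ Z then a Z else 0) * hS d α Z i
      = ∑ Z : Finset Λ, ∑ y : Λ, (if x ∈ Z ∧ y ∈ Z then a Z else 0) * dec d α y i :=
        Finset.sum_congr rfl fun Z _ => step1 Z
    _ = ∑ y : Λ, (∑ Z : Finset Λ, (if x ∈ Z ∧ y ∈ Z then a Z else 0)) * dec d α y i := by
        rw [Finset.sum_comm]
        exact Finset.sum_congr rfl fun y _ => (Finset.sum_mul ..).symm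
    _ ≤ ∑ y : Λ, (J * dec d α x y) * dec d α y i := by
        refine Finset.sum_le_sum fun y _ => ?_
        exact mul_le_mul_of_nonneg_right (pairSum a d α J hpair x y) (dec_nonneg d α y i)
    _ = J * ∑ y : Λ, dec d α x y * dec d α y i := by
        rw [Finset.mul_sum]; exact Finset.sum_congr rfl fun y _ => by ring
    _ ≤ J * (lam * dec d α x i) :=
        mul_le_mul_of_nonneg_left (hlam₂ x i) hJ.le
    _ = lam * J * dec d α x i := by ring

lemma indicator_att_le (ha : ∀ Z, 0 ≤ a Z) (S Z : Finset Λ) :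
    (if okZ k Z ∧ (Z ∩ S).Nonempty then a Z else 0)
      ≤ ∑ y ∈ S, (if y ∈ Z then a Z else 0) := by
  split
  · next h =>
    obtain ⟨y, hy⟩ := h.2
    rw [Finset.mem_inter] at hy
    have hyz : (if y ∈ Z then a Z else 0) = a Z := if_pos hy.1
    calc a Z = (if y ∈ Z then a Z else 0) := hyz.symm
      _ ≤ ∑ y ∈ S, (if y ∈ Z then a Z else 0) :=
        Finset.single_le_sum (f := fun z => if z ∈ Z then a Z else 0)
          (fun z _ => by by_cases hz : z ∈ Z <;> simp [hz, ha Z]) hy.2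
  · exact Finset.sum_nonneg fun z _ => by by_cases hz : z ∈ Z <;> simp [hz, ha Z]

lemma attachSum (ha : ∀ Z, 0 ≤ a Z)
    (hsite : ∀ i : Λ, ∑ Z ∈ Finset.univ.filter (fun Z : Finset Λ => i ∈ Z), a Z ≤ g)
    (S : Finset Λ) :
    ∑ Z : Finset Λ, (if okZ k Z ∧ (Z ∩ S).Nonempty then a Z else 0) ≤ g * S.card := by
  calc ∑ Z : Finset Λ, (if okZ k Z ∧ (Z ∩ S).Nonempty then a Z else 0)
      ≤ ∑ Z : Finset Λ, ∑ y ∈ S, (if y ∈ Z then a Z else 0) :=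
        Finset.sum_le_sum fun Z _ => indicator_att_le k a ha S Z
    _ = ∑ y ∈ S, ∑ Z : Finset Λ, (if y ∈ Z then a Z else 0) := Finset.sum_comm
    _ ≤ ∑ y ∈ S, g := Finset.sum_le_sum fun y _ => siteSum a g hsite y
    _ = g * S.card := by rw [Finset.sum_const, nsmul_eq_mul, mul_comm]

lemma attachHSum (ha : ∀ Z, 0 ≤ a Z) (hJ : 0 < J)
    (hpair : ∀ i i' : Λ,
      ∑ Z ∈ Finset.univ.filter (fun Z : Finset Λ => i ∈ Z ∧ i' ∈ Z), a Z
        ≤ J * ((d i i' : ℝ) + 1) ^ (-α))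
    (hlam₂ : ∀ i i' : Λ,
      ∑ i₀ : Λ, ((d i i₀ : ℝ) + 1) ^ (-α) * ((d i₀ i' : ℝ) + 1) ^ (-α)
        ≤ lam * ((d i i' : ℝ) + 1) ^ (-α))
    (S : Finset Λ) (i : Λ) :
    ∑ Z : Finset Λ, (if okZ k Z ∧ (Z ∩ S).Nonempty then a Z else 0) * hS d α Z i
      ≤ lam * J * hS d α S i := by
  calc ∑ Z : Finset Λ, (if okZ k Z ∧ (Z ∩ S).Nonempty then a Z else 0) * hS d α Z i
      ≤ ∑ Z : Finset Λ, (∑ y ∈ S, (if y ∈ Z then a Z else 0)) * hS d α Z i :=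
        Finset.sum_le_sum fun Z _ =>
          mul_le_mul_of_nonneg_right (indicator_att_le k a ha S Z) (hS_nonneg d α Z i)
    _ = ∑ y ∈ S, ∑ Z : Finset Λ, (if y ∈ Z then a Z else 0) * hS d α Z i := by
        rw [Finset.sum_comm]
        exact Finset.sum_congr rfl fun Z _ => Finset.sum_mul ..
    _ ≤ ∑ y ∈ S, lam * J * dec d α y i :=
        Finset.sum_le_sum fun y _ => convSum a d α J lam ha hJ hpair hlam₂ y i
    _ = lam * J * hS d α S i := by rw [hS, Finset.mul_sum]

lemma tripleSum (ha : ∀ Z, 0 ≤ a Z)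
    (hpair : ∀ i i' : Λ,
      ∑ Z ∈ Finset.univ.filter (fun Z : Finset Λ => i ∈ Z ∧ i' ∈ Z), a Z
        ≤ J * ((d i i' : ℝ) + 1) ^ (-α))
    (x y : Λ) :
    ∑ Z : Finset Λ, (if okZ k Z ∧ x ∈ Z ∧ y ∈ Z then a Z else 0) ≤ J * dec d α x y := by
  calc ∑ Z : Finset Λ, (if okZ k Z ∧ x ∈ Z ∧ y ∈ Z then a Z else 0)
      ≤ ∑ Z : Finset Λ, (if x ∈ Z ∧ y ∈ Z then a Z else 0) := by
        refine Finset.sum_le_sum fun Z _ => ?_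
        by_cases h : okZ k Z ∧ x ∈ Z ∧ y ∈ Z
        · rw [if_pos h, if_pos h.2]
        · rw [if_neg h]; by_cases h2 : x ∈ Z ∧ y ∈ Z <;> simp [h2, ha Z]
    _ ≤ J * dec d α x y := by rw [← Finset.sum_filter]; exact hpair x y

lemma sum_y_triple (x : Λ) (Z : Finset Λ) :
    ∑ y : Λ, (if okZ k Z ∧ x ∈ Z ∧ y ∈ Z then a Z else 0)
      = (if okZ k Z ∧ x ∈ Z then a Z * (Z.card : ℝ) else 0) := by
  by_cases h : okZ k Z ∧ x ∈ Z
  · rw [if_pos h]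
    have e : ∀ y : Λ, (if okZ k Z ∧ x ∈ Z ∧ y ∈ Z then a Z else 0)
        = if y ∈ Z then a Z else 0 := by
      intro y; by_cases hy : y ∈ Z <;> simp [h.1, h.2, hy]
    simp only [e]
    rw [Finset.sum_ite_mem, Finset.univ_inter, Finset.sum_const, nsmul_eq_mul, mul_comm]
  · rw [if_neg h]
    refine Finset.sum_eq_zero fun y _ => ?_
    rw [if_neg]
    rintro ⟨h1, h2, h3⟩
    exact h ⟨h1, h2⟩

lemma card_indicator_le (ha : ∀ Z, 0 ≤ a Z) (x : Λ) (Z : Finset Λ) :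
    (if okZ k Z ∧ x ∈ Z then a Z * (Z.card : ℝ) else 0)
      ≤ (k : ℝ) * (if x ∈ Z then a Z else 0) := by
  by_cases h : okZ k Z ∧ x ∈ Z
  · rw [if_pos h, if_pos h.2, mul_comm ((k : ℝ))]
    exact mul_le_mul_of_nonneg_left (by exact_mod_cast Nat.cast_le.mpr h.1.2) (ha Z)
  · rw [if_neg h]
    by_cases h2 : x ∈ Z
    · rw [if_pos h2]; exact mul_nonneg (by positivity) (ha Z)
    · simp [h2]

lemma cardHSum (ha : ∀ Z, 0 ≤ a Z) (hJ : 0 < J)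
    (hpair : ∀ i i' : Λ,
      ∑ Z ∈ Finset.univ.filter (fun Z : Finset Λ => i ∈ Z ∧ i' ∈ Z), a Z
        ≤ J * ((d i i' : ℝ) + 1) ^ (-α))
    (hlam₂ : ∀ i i' : Λ,
      ∑ i₀ : Λ, ((d i i₀ : ℝ) + 1) ^ (-α) * ((d i₀ i' : ℝ) + 1) ^ (-α)
        ≤ lam * ((d i i' : ℝ) + 1) ^ (-α))
    (x i : Λ) :
    ∑ Z : Finset Λ, (if okZ k Z ∧ x ∈ Z then a Z * (Z.card : ℝ) else 0) * hS d α Z i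
      ≤ (k : ℝ) * (lam * J * dec d α x i) := by
  calc ∑ Z : Finset Λ, (if okZ k Z ∧ x ∈ Z then a Z * (Z.card : ℝ) else 0) * hS d α Z i
      ≤ ∑ Z : Finset Λ, ((k : ℝ) * (if x ∈ Z then a Z else 0)) * hS d α Z i :=
        Finset.sum_le_sum fun Z _ =>
          mul_le_mul_of_nonneg_right (card_indicator_le k a ha x Z) (hS_nonneg d α Z i)
    _ = (k : ℝ) * ∑ Z : Finset Λ, (if x ∈ Z then a Z else 0) * hS d α Z i := by
        rw [Finset.mul_sum]; exact Finset.sum_congr rfl fun Z _ => by ring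
    _ ≤ (k : ℝ) * (lam * J * dec d α x i) :=
        mul_le_mul_of_nonneg_left (convSum a d α J lam ha hJ hpair hlam₂ x i) (by positivity)

end StrSum

namespace StrSum
variable {Λ : Type} [Fintype Λ] [DecidableEq Λ]
variable (k : ℕ) (a : Finset Λ → ℝ) (d : Λ → Λ → ℕ) (α : ℝ) (J g lam : ℝ)

lemma Npin_nonneg (ha : ∀ Z, 0 ≤ a Z) (m : ℕ) (x : Λ) : 0 ≤ Npin k a m x :=
  Finset.sum_nonneg fun w _ => iWt_nonneg k a ha w x

lemma Mw_nonneg (ha : ∀ Z, 0 ≤ a Z) (m : ℕ) (x i : Λ) : 0 ≤ Mw k a d α m x i :=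
  Finset.sum_nonneg fun w _ =>
    mul_nonneg (iWt_nonneg k a ha w x) (hS_nonneg d α (UU w) i)

lemma ite_union_le {c : ℝ} (hc : 0 ≤ c) (A B : Finset Λ) (x : Λ) :
    (if x ∈ A ∪ B then c else 0)
      ≤ (if x ∈ A then c else 0) + (if x ∈ B then c else 0) := by
  by_cases hA : x ∈ A
  · by_cases hB : x ∈ B <;> simp [hA, hB, hc]
  · by_cases hB : x ∈ B <;> simp [hA, hB, hc]

lemma card_UU_le {m : ℕ} (v : Fin (m + 1) → Finset Λ) (hv : ∀ j, okZ k (v j)) :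
    ((UU v).card : ℝ) ≤ (k : ℝ) * ((m : ℝ) + 1) := by
  have h1 : (UU v).card ≤ ∑ j : Fin (m + 1), (v j).card := Finset.card_biUnion_le
  have h2 : ∑ j : Fin (m + 1), (v j).card ≤ ∑ j : Fin (m + 1), k :=
    Finset.sum_le_sum fun j _ => (hv j).2
  have h3 : (UU v).card ≤ (m + 1) * k := by
    simpa [Finset.sum_const, Finset.card_univ] using le_trans h1 h2
  calc ((UU v).card : ℝ) ≤ (((m + 1) * k : ℕ) : ℝ) := by exact_mod_cast h3
    _ = (k : ℝ) * ((m : ℝ) + 1) := by push_cast; ring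

lemma triple_factor {A B C : Type} [Fintype A] [Fintype B] [Fintype C]
    (f : A → C → ℝ) (q : B → C → ℝ) :
    ∑ v : A, ∑ Z : B, ∑ y : C, f v y * q Z y
      = ∑ y : C, (∑ v : A, f v y) * (∑ Z : B, q Z y) := by
  calc ∑ v : A, ∑ Z : B, ∑ y : C, f v y * q Z y
      = ∑ v : A, ∑ y : C, ∑ Z : B, f v y * q Z y :=
        Finset.sum_congr rfl fun v _ => Finset.sum_comm
    _ = ∑ v : A, ∑ y : C, f v y * ∑ Z : B, q Z y := by
        refine Finset.sum_congr rfl fun v _ => Finset.sum_congr rfl fun y _ => ?_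
        rw [← Finset.mul_sum]
    _ = ∑ y : C, ∑ v : A, f v y * ∑ Z : B, q Z y := Finset.sum_comm
    _ = ∑ y : C, (∑ v : A, f v y) * ∑ Z : B, q Z y :=
        Finset.sum_congr rfl fun y _ => (Finset.sum_mul ..).symm

/-- key pointwise bound: last-set pinning -/
lemma pointN2 (ha : ∀ Z, 0 ≤ a Z) {m : ℕ} (v : Fin (m + 1) → Finset Λ) (Z : Finset Λ)
    (x : Λ) :
    (if x ∈ Z then Wt k a v * att k a v Z else 0)
      ≤ ∑ y : Λ, (if y ∈ UU v then Wt k a v else 0)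
          * (if okZ k Z ∧ x ∈ Z ∧ y ∈ Z then a Z else 0) := by
  have hnn : ∀ y : Λ, 0 ≤ (if y ∈ UU v then Wt k a v else 0)
      * (if okZ k Z ∧ x ∈ Z ∧ y ∈ Z then a Z else 0) := fun y =>
    mul_nonneg (iWt_nonneg k a ha v y) (by split <;> [exact ha Z; exact le_refl 0])
  by_cases hx : x ∈ Z
  · rw [if_pos hx]
    unfold att
    by_cases hc : okZ k Z ∧ (Z ∩ UU v).Nonempty
    · rw [if_pos hc]
      obtain ⟨y, hy⟩ := hc.2
      rw [Finset.mem_inter] at hy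
      have hterm : (if y ∈ UU v then Wt k a v else 0)
          * (if okZ k Z ∧ x ∈ Z ∧ y ∈ Z then a Z else 0) = Wt k a v * a Z := by
        rw [if_pos hy.2, if_pos ⟨hc.1, hx, hy.1⟩]
      calc Wt k a v * a Z
          = (if y ∈ UU v then Wt k a v else 0)
            * (if okZ k Z ∧ x ∈ Z ∧ y ∈ Z then a Z else 0) := hterm.symm
        _ ≤ _ := Finset.single_le_sum (fun z _ => hnn z) (Finset.mem_univ y)
    · rw [if_neg hc, mul_zero]
      exact Finset.sum_nonneg fun y _ => hnn y
  · rw [if_neg hx]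
    exact Finset.sum_nonneg fun y _ => hnn y

lemma Npin_le (ha : ∀ Z, 0 ≤ a Z) (hg : 0 ≤ g)
    (hsite : ∀ i : Λ, ∑ Z ∈ Finset.univ.filter (fun Z : Finset Λ => i ∈ Z), a Z ≤ g)
    (gt : ℝ) (hgk : g * k ≤ gt) (hgt : 0 ≤ gt) :
    ∀ m : ℕ, ∀ x : Λ, Npin k a m x ≤ g * (Nat.factorial (m + 1) : ℝ) * gt ^ m := by
  intro m
  induction m with
  | zero =>
    intro x
    have e0 : Npin k a 0 x
        = ∑ Z : Finset Λ, (if x ∈ Z then (if okZ k Z then a Z else 0) else 0) := by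
      rw [Npin, ← Equiv.sum_comp (Equiv.funUnique (Fin 1) (Finset Λ)).symm]
      refine Finset.sum_congr rfl fun Z _ => ?_
      have hU : UU ((Equiv.funUnique (Fin 1) (Finset Λ)).symm Z) = Z := by
        ext y
        simp [UU, Equiv.funUnique, Finset.mem_biUnion]
      have hW : Wt k a ((Equiv.funUnique (Fin 1) (Finset Λ)).symm Z)
          = if okZ k Z then a Z else 0 := by
        unfold Wt
        by_cases h : okZ k Z
        · rw [if_pos, if_pos h]
          · exact Fin.prod_univ_one _
          · exact ⟨fun _ => h, seqConnected_zero _⟩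
        · rw [if_neg, if_neg h]
          intro hco
          exact h (hco.1 0)
      rw [hU, hW]
    rw [e0]
    have hdrop : ∑ Z : Finset Λ, (if x ∈ Z then (if okZ k Z then a Z else 0) else 0)
        ≤ ∑ Z : Finset Λ, (if x ∈ Z then a Z else 0) := by
      refine Finset.sum_le_sum fun Z _ => ?_
      by_cases hx : x ∈ Z
      · by_cases ho : okZ k Z <;> simp [hx, ho, ha Z]
      · simp [hx]
    calc ∑ Z : Finset Λ, (if x ∈ Z then (if okZ k Z then a Z else 0) else 0)
        ≤ g := le_trans hdrop (siteSum a g hsite x)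
      _ = g * (Nat.factorial 1 : ℝ) * gt ^ 0 := by norm_num
  | succ m ih =>
    intro x
    have hNBnn : (0:ℝ) ≤ g * (Nat.factorial (m + 1) : ℝ) * gt ^ m := by positivity
    have e1 : Npin k a (m + 1) x
        = ∑ v : Fin (m + 1) → Finset Λ, ∑ Z : Finset Λ,
            (if x ∈ UU v ∪ Z then Wt k a v * att k a v Z else 0) := by
      rw [Npin, sum_snoc]
      exact Finset.sum_congr rfl fun v _ => Finset.sum_congr rfl fun Z _ => by
        rw [UU_snoc, Wt_snoc]
    rw [e1]
    have e2 : ∑ v : Fin (m + 1) → Finset Λ, ∑ Z : Finset Λ,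
          (if x ∈ UU v ∪ Z then Wt k a v * att k a v Z else 0)
        ≤ (∑ v : Fin (m + 1) → Finset Λ, ∑ Z : Finset Λ,
            (if x ∈ UU v then Wt k a v * att k a v Z else 0))
          + ∑ v : Fin (m + 1) → Finset Λ, ∑ Z : Finset Λ,
            (if x ∈ Z then Wt k a v * att k a v Z else 0) := by
      rw [← Finset.sum_add_distrib]
      refine Finset.sum_le_sum fun v _ => ?_
      rw [← Finset.sum_add_distrib]
      refine Finset.sum_le_sum fun Z _ => ?_
      exact ite_union_le (mul_nonneg (Wt_nonneg k a ha v) (att_nonneg k a ha v Z)) _ _ x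
    refine le_trans e2 ?_
    -- term N1
    have hN1 : ∑ v : Fin (m + 1) → Finset Λ, ∑ Z : Finset Λ,
          (if x ∈ UU v then Wt k a v * att k a v Z else 0)
        ≤ (g * ((k : ℝ) * ((m : ℝ) + 1))) * Npin k a m x := by
      have step : ∀ v : Fin (m + 1) → Finset Λ,
          ∑ Z : Finset Λ, (if x ∈ UU v then Wt k a v * att k a v Z else 0)
            ≤ (g * ((k : ℝ) * ((m : ℝ) + 1))) * (if x ∈ UU v then Wt k a v else 0) := by
        intro v
        have hfact : ∑ Z : Finset Λ, (if x ∈ UU v then Wt k a v * att k a v Z else 0)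
            = (if x ∈ UU v then Wt k a v else 0) * ∑ Z : Finset Λ, att k a v Z := by
          by_cases hx : x ∈ UU v
          · simp only [if_pos hx, Finset.mul_sum]
          · simp [hx]
        rw [hfact]
        by_cases hC : (∀ j, okZ k (v j)) ∧ SeqConnected v
        · have hattle : ∑ Z : Finset Λ, att k a v Z ≤ g * ((k : ℝ) * ((m : ℝ) + 1)) := by
            have h1 : ∑ Z : Finset Λ, att k a v Z ≤ g * ((UU v).card : ℝ) := by
              simpa [att] using attachSum k a g ha hsite (UU v)
            exact le_trans h1 (mul_le_mul_of_nonneg_left (card_UU_le k v hC.1) hg)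
          calc (if x ∈ UU v then Wt k a v else 0) * ∑ Z : Finset Λ, att k a v Z
              ≤ (if x ∈ UU v then Wt k a v else 0) * (g * ((k : ℝ) * ((m : ℝ) + 1))) :=
                mul_le_mul_of_nonneg_left hattle (iWt_nonneg k a ha v x)
            _ = (g * ((k : ℝ) * ((m : ℝ) + 1))) * (if x ∈ UU v then Wt k a v else 0) := by
                ring
        · simp [Wt, hC]
      calc ∑ v : Fin (m + 1) → Finset Λ, ∑ Z : Finset Λ,
            (if x ∈ UU v then Wt k a v * att k a v Z else 0)
          ≤ ∑ v : Fin (m + 1) → Finset Λ,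
              (g * ((k : ℝ) * ((m : ℝ) + 1))) * (if x ∈ UU v then Wt k a v else 0) :=
            Finset.sum_le_sum fun v _ => step v
        _ = (g * ((k : ℝ) * ((m : ℝ) + 1))) * Npin k a m x := by
            rw [Npin, Finset.mul_sum]
    -- term N2
    have hN2 : ∑ v : Fin (m + 1) → Finset Λ, ∑ Z : Finset Λ,
          (if x ∈ Z then Wt k a v * att k a v Z else 0)
        ≤ (g * (Nat.factorial (m + 1) : ℝ) * gt ^ m) * ((k : ℝ) * g) := by
      have step1 : ∑ v : Fin (m + 1) → Finset Λ, ∑ Z : Finset Λ,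
            (if x ∈ Z then Wt k a v * att k a v Z else 0)
          ≤ ∑ v : Fin (m + 1) → Finset Λ, ∑ Z : Finset Λ, ∑ y : Λ,
              (if y ∈ UU v then Wt k a v else 0)
                * (if okZ k Z ∧ x ∈ Z ∧ y ∈ Z then a Z else 0) :=
        Finset.sum_le_sum fun v _ => Finset.sum_le_sum fun Z _ => pointN2 k a ha v Z x
      refine le_trans step1 ?_
      rw [triple_factor (fun v y => if y ∈ UU v then Wt k a v else 0)
        (fun Z y => if okZ k Z ∧ x ∈ Z ∧ y ∈ Z then a Z else 0)]
      have hq : ∀ y : Λ, 0 ≤ ∑ Z : Finset Λ, (if okZ k Z ∧ x ∈ Z ∧ y ∈ Z then a Z else 0) :=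
        fun y => Finset.sum_nonneg fun Z _ => by split <;> [exact ha Z; exact le_refl 0]
      calc ∑ y : Λ, (∑ v : Fin (m + 1) → Finset Λ, (if y ∈ UU v then Wt k a v else 0))
            * (∑ Z : Finset Λ, (if okZ k Z ∧ x ∈ Z ∧ y ∈ Z then a Z else 0))
          ≤ ∑ y : Λ, (g * (Nat.factorial (m + 1) : ℝ) * gt ^ m)
              * (∑ Z : Finset Λ, (if okZ k Z ∧ x ∈ Z ∧ y ∈ Z then a Z else 0)) := by
            refine Finset.sum_le_sum fun y _ => ?_
            exact mul_le_mul_of_nonneg_right (ih y) (hq y)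
        _ = (g * (Nat.factorial (m + 1) : ℝ) * gt ^ m) * ∑ Z : Finset Λ,
              (if okZ k Z ∧ x ∈ Z then a Z * (Z.card : ℝ) else 0) := by
            rw [← Finset.mul_sum, Finset.sum_comm]
            congr 1
            exact Finset.sum_congr rfl fun Z _ => sum_y_triple k a x Z
        _ ≤ (g * (Nat.factorial (m + 1) : ℝ) * gt ^ m) * ((k : ℝ) * g) := by
            refine mul_le_mul_of_nonneg_left ?_ hNBnn
            calc ∑ Z : Finset Λ, (if okZ k Z ∧ x ∈ Z then a Z * (Z.card : ℝ) else 0)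
                ≤ ∑ Z : Finset Λ, (k : ℝ) * (if x ∈ Z then a Z else 0) :=
                  Finset.sum_le_sum fun Z _ => card_indicator_le k a ha x Z
              _ = (k : ℝ) * ∑ Z : Finset Λ, (if x ∈ Z then a Z else 0) := by
                  rw [Finset.mul_sum]
              _ ≤ (k : ℝ) * g :=
                  mul_le_mul_of_nonneg_left (siteSum a g hsite x) (by positivity)
    -- combine
    have hNp : Npin k a m x ≤ g * (Nat.factorial (m + 1) : ℝ) * gt ^ m := ih x
    have hNpnn : 0 ≤ Npin k a m x := Npin_nonneg k a ha m x
    have hfac : (Nat.factorial (m + 2) : ℝ) = ((m : ℝ) + 2) * (Nat.factorial (m + 1) : ℝ) := by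
      rw [Nat.factorial_succ]; push_cast; ring
    have hkg : 0 ≤ (k : ℝ) * g := by positivity
    have target : (g * ((k : ℝ) * ((m : ℝ) + 1))) * Npin k a m x
          + (g * (Nat.factorial (m + 1) : ℝ) * gt ^ m) * ((k : ℝ) * g)
        ≤ g * (Nat.factorial (m + 1 + 1) : ℝ) * gt ^ (m + 1) := by
      have h1 : (g * ((k : ℝ) * ((m : ℝ) + 1))) * Npin k a m x
          ≤ (gt * ((m : ℝ) + 1)) * (g * (Nat.factorial (m + 1) : ℝ) * gt ^ m) := by
        have hgk' : g * (k : ℝ) * ((m : ℝ) + 1) ≤ gt * ((m : ℝ) + 1) :=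
          mul_le_mul_of_nonneg_right hgk (by positivity)
        calc (g * ((k : ℝ) * ((m : ℝ) + 1))) * Npin k a m x
            ≤ (g * ((k : ℝ) * ((m : ℝ) + 1)))
                * (g * (Nat.factorial (m + 1) : ℝ) * gt ^ m) := by
              refine mul_le_mul_of_nonneg_left hNp (by positivity)
          _ ≤ (gt * ((m : ℝ) + 1)) * (g * (Nat.factorial (m + 1) : ℝ) * gt ^ m) := by
              refine mul_le_mul_of_nonneg_right ?_ hNBnn
              calc g * ((k : ℝ) * ((m : ℝ) + 1)) = g * (k : ℝ) * ((m : ℝ) + 1) := by ring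
                _ ≤ gt * ((m : ℝ) + 1) := hgk'
      have h2 : (g * (Nat.factorial (m + 1) : ℝ) * gt ^ m) * ((k : ℝ) * g)
          ≤ gt * (g * (Nat.factorial (m + 1) : ℝ) * gt ^ m) := by
        calc (g * (Nat.factorial (m + 1) : ℝ) * gt ^ m) * ((k : ℝ) * g)
            ≤ (g * (Nat.factorial (m + 1) : ℝ) * gt ^ m) * gt := by
              refine mul_le_mul_of_nonneg_left ?_ hNBnn
              calc (k : ℝ) * g = g * (k : ℝ) := by ring
                _ ≤ gt := hgk
          _ = gt * (g * (Nat.factorial (m + 1) : ℝ) * gt ^ m) := by ring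
      have : (gt * ((m : ℝ) + 1)) * (g * (Nat.factorial (m + 1) : ℝ) * gt ^ m)
            + gt * (g * (Nat.factorial (m + 1) : ℝ) * gt ^ m)
          = g * (Nat.factorial (m + 1 + 1) : ℝ) * gt ^ (m + 1) := by
        have : (m:ℕ) + 1 + 1 = m + 2 := rfl
        rw [this, hfac]
        ring
      linarith
    calc (∑ v : Fin (m + 1) → Finset Λ, ∑ Z : Finset Λ,
            (if x ∈ UU v then Wt k a v * att k a v Z else 0))
          + ∑ v : Fin (m + 1) → Finset Λ, ∑ Z : Finset Λ,
            (if x ∈ Z then Wt k a v * att k a v Z else 0)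
        ≤ (g * ((k : ℝ) * ((m : ℝ) + 1))) * Npin k a m x
          + (g * (Nat.factorial (m + 1) : ℝ) * gt ^ m) * ((k : ℝ) * g) := add_le_add hN1 hN2
      _ ≤ g * (Nat.factorial (m + 1 + 1) : ℝ) * gt ^ (m + 1) := target

end StrSum

namespace StrSum
variable {Λ : Type} [Fintype Λ] [DecidableEq Λ]
variable (k : ℕ) (a : Finset Λ → ℝ) (d : Λ → Λ → ℕ) (α : ℝ) (J g lam : ℝ)

lemma Mw_le (ha : ∀ Z, 0 ≤ a Z) (hg : 0 ≤ g) (hJ : 0 < J) (hlam : 1 ≤ lam)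
    (hsite : ∀ i : Λ, ∑ Z ∈ Finset.univ.filter (fun Z : Finset Λ => i ∈ Z), a Z ≤ g)
    (hpair : ∀ i i' : Λ,
      ∑ Z ∈ Finset.univ.filter (fun Z : Finset Λ => i ∈ Z ∧ i' ∈ Z), a Z
        ≤ J * ((d i i' : ℝ) + 1) ^ (-α))
    (hlam₂ : ∀ i i' : Λ,
      ∑ i₀ : Λ, ((d i i₀ : ℝ) + 1) ^ (-α) * ((d i₀ i' : ℝ) + 1) ^ (-α)
        ≤ lam * ((d i i' : ℝ) + 1) ^ (-α))
    (gt : ℝ) (hgk : g * k ≤ gt) (hlJ : lam * J ≤ gt) (hgt : 0 ≤ gt) :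
    ∀ m : ℕ, ∀ x i : Λ,
      Mw k a d α m x i
        ≤ ((m : ℝ) + 1) * (Nat.factorial (m + 1) : ℝ) * gt ^ (m + 1) * dec d α x i := by
  have hlJ0 : 0 ≤ lam * J := mul_nonneg (by linarith) hJ.le
  intro m
  induction m with
  | zero =>
    intro x i
    have e0 : Mw k a d α 0 x i
        = ∑ Z : Finset Λ,
            (if x ∈ Z then (if okZ k Z then a Z else 0) else 0) * hS d α Z i := by
      rw [Mw, ← Equiv.sum_comp (Equiv.funUnique (Fin 1) (Finset Λ)).symm]
      refine Finset.sum_congr rfl fun Z _ => ?_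
      have hU : UU ((Equiv.funUnique (Fin 1) (Finset Λ)).symm Z) = Z := by
        ext y
        simp [UU, Equiv.funUnique, Finset.mem_biUnion]
      have hW : Wt k a ((Equiv.funUnique (Fin 1) (Finset Λ)).symm Z)
          = if okZ k Z then a Z else 0 := by
        unfold Wt
        by_cases h : okZ k Z
        · rw [if_pos, if_pos h]
          · exact Fin.prod_univ_one _
          · exact ⟨fun _ => h, seqConnected_zero _⟩
        · rw [if_neg, if_neg h]
          intro hco
          exact h (hco.1 0)
      rw [hU, hW]
    rw [e0]
    have hdrop : ∑ Z : Finset Λ,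
          (if x ∈ Z then (if okZ k Z then a Z else 0) else 0) * hS d α Z i
        ≤ ∑ Z : Finset Λ, (if x ∈ Z then a Z else 0) * hS d α Z i := by
      refine Finset.sum_le_sum fun Z _ => ?_
      refine mul_le_mul_of_nonneg_right ?_ (hS_nonneg d α Z i)
      by_cases hx : x ∈ Z
      · by_cases ho : okZ k Z <;> simp [hx, ho, ha Z]
      · simp [hx]
    calc ∑ Z : Finset Λ, (if x ∈ Z then (if okZ k Z then a Z else 0) else 0) * hS d α Z i
        ≤ lam * J * dec d α x i :=
          le_trans hdrop (convSum a d α J lam ha hJ hpair hlam₂ x i)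
      _ ≤ ((0 : ℝ) + 1) * (Nat.factorial 1 : ℝ) * gt ^ 1 * dec d α x i := by
          have h : lam * J ≤ ((0 : ℝ) + 1) * (Nat.factorial 1 : ℝ) * gt ^ 1 := by
            simpa using hlJ
          exact mul_le_mul_of_nonneg_right h (dec_nonneg d α x i)
      _ = (((0:ℕ) : ℝ) + 1) * (Nat.factorial (0 + 1) : ℝ) * gt ^ (0 + 1) * dec d α x i := by
          norm_num
  | succ m ih =>
    intro x i
    set F : ℝ := (Nat.factorial (m + 1) : ℝ) with hF
    have hFnn : (0:ℝ) ≤ F := by positivity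
    set μ : ℝ := ((m : ℝ) + 1) * F * gt ^ (m + 1) with hμ
    have hμnn : 0 ≤ μ := by positivity
    set NB : ℝ := g * F * gt ^ m with hNB2
    have hNBnn : 0 ≤ NB := by positivity
    have hD : 0 ≤ dec d α x i := dec_nonneg d α x i
    have e1 : Mw k a d α (m + 1) x i
        = ∑ v : Fin (m + 1) → Finset Λ, ∑ Z : Finset Λ,
            (if x ∈ UU v ∪ Z then Wt k a v * att k a v Z else 0)
              * hS d α (UU v ∪ Z) i := by
      rw [Mw, sum_snoc]
      exact Finset.sum_congr rfl fun v _ => Finset.sum_congr rfl fun Z _ => by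
        rw [UU_snoc, Wt_snoc]
    -- notation shortcuts as local defs
    have e2 : Mw k a d α (m + 1) x i
        ≤ (∑ v : Fin (m + 1) → Finset Λ, ∑ Z : Finset Λ,
            (if x ∈ UU v then Wt k a v * att k a v Z else 0) * hS d α (UU v) i)
          + ((∑ v : Fin (m + 1) → Finset Λ, ∑ Z : Finset Λ,
            (if x ∈ UU v then Wt k a v * att k a v Z else 0) * hS d α Z i)
          + ((∑ v : Fin (m + 1) → Finset Λ, ∑ Z : Finset Λ,
            (if x ∈ Z then Wt k a v * att k a v Z else 0) * hS d α (UU v) i)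
          + (∑ v : Fin (m + 1) → Finset Λ, ∑ Z : Finset Λ,
            (if x ∈ Z then Wt k a v * att k a v Z else 0) * hS d α Z i))) := by
      rw [e1]
      simp only [← Finset.sum_add_distrib]
      refine Finset.sum_le_sum fun v _ => Finset.sum_le_sum fun Z _ => ?_
      have hWA : 0 ≤ Wt k a v * att k a v Z :=
        mul_nonneg (Wt_nonneg k a ha v) (att_nonneg k a ha v Z)
      have h1 : (if x ∈ UU v ∪ Z then Wt k a v * att k a v Z else 0)
          ≤ (if x ∈ UU v then Wt k a v * att k a v Z else 0)
            + (if x ∈ Z then Wt k a v * att k a v Z else 0) := ite_union_le hWA _ _ x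
      have h2 : hS d α (UU v ∪ Z) i ≤ hS d α (UU v) i + hS d α Z i := hS_union_le d α _ _ i
      have hmul := mul_le_mul h1 h2 (hS_nonneg d α (UU v ∪ Z) i)
        (by positivity)
      calc (if x ∈ UU v ∪ Z then Wt k a v * att k a v Z else 0) * hS d α (UU v ∪ Z) i
          ≤ ((if x ∈ UU v then Wt k a v * att k a v Z else 0)
              + (if x ∈ Z then Wt k a v * att k a v Z else 0))
            * (hS d α (UU v) i + hS d α Z i) := hmul
        _ = (if x ∈ UU v then Wt k a v * att k a v Z else 0) * hS d α (UU v) i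
            + ((if x ∈ UU v then Wt k a v * att k a v Z else 0) * hS d α Z i
            + ((if x ∈ Z then Wt k a v * att k a v Z else 0) * hS d α (UU v) i
            + (if x ∈ Z then Wt k a v * att k a v Z else 0) * hS d α Z i)) := by ring
    refine le_trans e2 ?_
    -- S1
    have hS1 : ∑ v : Fin (m + 1) → Finset Λ, ∑ Z : Finset Λ,
          (if x ∈ UU v then Wt k a v * att k a v Z else 0) * hS d α (UU v) i
        ≤ (g * ((k : ℝ) * ((m : ℝ) + 1))) * Mw k a d α m x i := by
      have step : ∀ v : Fin (m + 1) → Finset Λ,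
          ∑ Z : Finset Λ, (if x ∈ UU v then Wt k a v * att k a v Z else 0) * hS d α (UU v) i
            ≤ (g * ((k : ℝ) * ((m : ℝ) + 1)))
              * ((if x ∈ UU v then Wt k a v else 0) * hS d α (UU v) i) := by
        intro v
        have hfact : ∑ Z : Finset Λ,
            (if x ∈ UU v then Wt k a v * att k a v Z else 0) * hS d α (UU v) i
            = ((if x ∈ UU v then Wt k a v else 0) * ∑ Z : Finset Λ, att k a v Z)
              * hS d α (UU v) i := by
          by_cases hx : x ∈ UU v
          · simp only [if_pos hx, Finset.mul_sum, Finset.sum_mul]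
          · simp [hx]
        rw [hfact]
        by_cases hC : (∀ j, okZ k (v j)) ∧ SeqConnected v
        · have hattle : ∑ Z : Finset Λ, att k a v Z ≤ g * ((k : ℝ) * ((m : ℝ) + 1)) := by
            have h1 : ∑ Z : Finset Λ, att k a v Z ≤ g * ((UU v).card : ℝ) := by
              simpa [att] using attachSum k a g ha hsite (UU v)
            exact le_trans h1 (mul_le_mul_of_nonneg_left (card_UU_le k v hC.1) hg)
          calc ((if x ∈ UU v then Wt k a v else 0) * ∑ Z : Finset Λ, att k a v Z)
                * hS d α (UU v) i
              ≤ ((if x ∈ UU v then Wt k a v else 0) * (g * ((k : ℝ) * ((m : ℝ) + 1))))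
                * hS d α (UU v) i := by
                refine mul_le_mul_of_nonneg_right ?_ (hS_nonneg d α (UU v) i)
                exact mul_le_mul_of_nonneg_left hattle (iWt_nonneg k a ha v x)
            _ = (g * ((k : ℝ) * ((m : ℝ) + 1)))
                * ((if x ∈ UU v then Wt k a v else 0) * hS d α (UU v) i) := by ring
        · simp [Wt, hC]
      calc ∑ v : Fin (m + 1) → Finset Λ, ∑ Z : Finset Λ,
            (if x ∈ UU v then Wt k a v * att k a v Z else 0) * hS d α (UU v) i
          ≤ ∑ v : Fin (m + 1) → Finset Λ, (g * ((k : ℝ) * ((m : ℝ) + 1)))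
              * ((if x ∈ UU v then Wt k a v else 0) * hS d α (UU v) i) :=
            Finset.sum_le_sum fun v _ => step v
        _ = (g * ((k : ℝ) * ((m : ℝ) + 1))) * Mw k a d α m x i := by
            rw [Mw, Finset.mul_sum]
    -- S2
    have hS2 : ∑ v : Fin (m + 1) → Finset Λ, ∑ Z : Finset Λ,
          (if x ∈ UU v then Wt k a v * att k a v Z else 0) * hS d α Z i
        ≤ (lam * J) * Mw k a d α m x i := by
      have step : ∀ v : Fin (m + 1) → Finset Λ,
          ∑ Z : Finset Λ, (if x ∈ UU v then Wt k a v * att k a v Z else 0) * hS d α Z i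
            ≤ (lam * J) * ((if x ∈ UU v then Wt k a v else 0) * hS d α (UU v) i) := by
        intro v
        by_cases hx : x ∈ UU v
        · simp only [if_pos hx]
          have : ∑ Z : Finset Λ, Wt k a v * att k a v Z * hS d α Z i
              = Wt k a v * ∑ Z : Finset Λ, att k a v Z * hS d α Z i := by
            rw [Finset.mul_sum]
            exact Finset.sum_congr rfl fun Z _ => by ring
          rw [this]
          have hinner : ∑ Z : Finset Λ, att k a v Z * hS d α Z i
              ≤ lam * J * hS d α (UU v) i := by
            simpa [att] using attachHSum k a d α J lam ha hJ hpair hlam₂ (UU v) i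
          calc Wt k a v * ∑ Z : Finset Λ, att k a v Z * hS d α Z i
              ≤ Wt k a v * (lam * J * hS d α (UU v) i) :=
                mul_le_mul_of_nonneg_left hinner (Wt_nonneg k a ha v)
            _ = (lam * J) * (Wt k a v * hS d α (UU v) i) := by ring
        · simp only [if_neg hx]
          simp
      calc ∑ v : Fin (m + 1) → Finset Λ, ∑ Z : Finset Λ,
            (if x ∈ UU v then Wt k a v * att k a v Z else 0) * hS d α Z i
          ≤ ∑ v : Fin (m + 1) → Finset Λ, (lam * J)
              * ((if x ∈ UU v then Wt k a v else 0) * hS d α (UU v) i) :=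
            Finset.sum_le_sum fun v _ => step v
        _ = (lam * J) * Mw k a d α m x i := by rw [Mw, Finset.mul_sum]
    -- S3
    have hS3 : ∑ v : Fin (m + 1) → Finset Λ, ∑ Z : Finset Λ,
          (if x ∈ Z then Wt k a v * att k a v Z else 0) * hS d α (UU v) i
        ≤ (lam * J) * (μ * dec d α x i) := by
      have step : ∀ (v : Fin (m + 1) → Finset Λ) (Z : Finset Λ),
          (if x ∈ Z then Wt k a v * att k a v Z else 0) * hS d α (UU v) i
            ≤ ∑ y : Λ, ((if y ∈ UU v then Wt k a v else 0) * hS d α (UU v) i)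
                * (if okZ k Z ∧ x ∈ Z ∧ y ∈ Z then a Z else 0) := by
        intro v Z
        have h := mul_le_mul_of_nonneg_right (pointN2 k a ha v Z x)
          (hS_nonneg d α (UU v) i)
        refine le_trans h (le_of_eq ?_)
        rw [Finset.sum_mul]
        exact Finset.sum_congr rfl fun y _ => by ring
      calc ∑ v : Fin (m + 1) → Finset Λ, ∑ Z : Finset Λ,
            (if x ∈ Z then Wt k a v * att k a v Z else 0) * hS d α (UU v) i
          ≤ ∑ v : Fin (m + 1) → Finset Λ, ∑ Z : Finset Λ, ∑ y : Λ,
              ((if y ∈ UU v then Wt k a v else 0) * hS d α (UU v) i)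
                * (if okZ k Z ∧ x ∈ Z ∧ y ∈ Z then a Z else 0) :=
            Finset.sum_le_sum fun v _ => Finset.sum_le_sum fun Z _ => step v Z
        _ = ∑ y : Λ, Mw k a d α m y i
              * (∑ Z : Finset Λ, (if okZ k Z ∧ x ∈ Z ∧ y ∈ Z then a Z else 0)) := by
            rw [triple_factor]
            rfl
        _ ≤ ∑ y : Λ, (μ * dec d α y i) * (J * dec d α x y) := by
            refine Finset.sum_le_sum fun y _ => ?_
            refine mul_le_mul (ih y i) (tripleSum k a d α J ha hpair x y)
              (Finset.sum_nonneg fun Z _ => by split <;> [exact ha Z; exact le_refl 0])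
              (mul_nonneg hμnn (dec_nonneg d α y i))
        _ = (J * μ) * ∑ y : Λ, dec d α x y * dec d α y i := by
            rw [Finset.mul_sum]
            exact Finset.sum_congr rfl fun y _ => by ring
        _ ≤ (J * μ) * (lam * dec d α x i) := by
            refine mul_le_mul_of_nonneg_left (hlam₂ x i) (by positivity)
        _ = (lam * J) * (μ * dec d α x i) := by ring
    -- S4
    have hS4 : ∑ v : Fin (m + 1) → Finset Λ, ∑ Z : Finset Λ,
          (if x ∈ Z then Wt k a v * att k a v Z else 0) * hS d α Z i
        ≤ NB * ((k : ℝ) * (lam * J * dec d α x i)) := by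
      have step : ∀ (v : Fin (m + 1) → Finset Λ) (Z : Finset Λ),
          (if x ∈ Z then Wt k a v * att k a v Z else 0) * hS d α Z i
            ≤ ∑ y : Λ, (if y ∈ UU v then Wt k a v else 0)
                * ((if okZ k Z ∧ x ∈ Z ∧ y ∈ Z then a Z else 0) * hS d α Z i) := by
        intro v Z
        have h := mul_le_mul_of_nonneg_right (pointN2 k a ha v Z x) (hS_nonneg d α Z i)
        refine le_trans h (le_of_eq ?_)
        rw [Finset.sum_mul]
        exact Finset.sum_congr rfl fun y _ => by ring
      calc ∑ v : Fin (m + 1) → Finset Λ, ∑ Z : Finset Λ,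
            (if x ∈ Z then Wt k a v * att k a v Z else 0) * hS d α Z i
          ≤ ∑ v : Fin (m + 1) → Finset Λ, ∑ Z : Finset Λ, ∑ y : Λ,
              (if y ∈ UU v then Wt k a v else 0)
                * ((if okZ k Z ∧ x ∈ Z ∧ y ∈ Z then a Z else 0) * hS d α Z i) :=
            Finset.sum_le_sum fun v _ => Finset.sum_le_sum fun Z _ => step v Z
        _ = ∑ y : Λ, Npin k a m y
              * (∑ Z : Finset Λ,
                  (if okZ k Z ∧ x ∈ Z ∧ y ∈ Z then a Z else 0) * hS d α Z i) := by
            rw [triple_factor]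
            rfl
        _ ≤ ∑ y : Λ, NB
              * (∑ Z : Finset Λ,
                  (if okZ k Z ∧ x ∈ Z ∧ y ∈ Z then a Z else 0) * hS d α Z i) := by
            refine Finset.sum_le_sum fun y _ => ?_
            refine mul_le_mul_of_nonneg_right (Npin_le k a g ha hg hsite gt hgk hgt m y) ?_
            exact Finset.sum_nonneg fun Z _ => mul_nonneg
              (by split <;> [exact ha Z; exact le_refl 0]) (hS_nonneg d α Z i)
        _ = NB * ∑ Z : Finset Λ,
              (if okZ k Z ∧ x ∈ Z then a Z * (Z.card : ℝ) else 0) * hS d α Z i := by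
            rw [← Finset.mul_sum]
            congr 1
            rw [Finset.sum_comm]
            refine Finset.sum_congr rfl fun Z _ => ?_
            rw [← Finset.sum_mul, sum_y_triple k a x Z]
        _ ≤ NB * ((k : ℝ) * (lam * J * dec d α x i)) :=
            mul_le_mul_of_nonneg_left
              (cardHSum k a d α J lam ha hJ hpair hlam₂ x i) hNBnn
    -- combine
    have hA : Mw k a d α m x i ≤ μ * dec d α x i := ih x i
    have hAnn : 0 ≤ Mw k a d α m x i := Mw_nonneg k a d α ha m x i
    have h1 : (g * ((k : ℝ) * ((m : ℝ) + 1))) * Mw k a d α m x i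
        ≤ (gt * ((m : ℝ) + 1)) * (μ * dec d α x i) := by
      have c1 : g * ((k : ℝ) * ((m : ℝ) + 1)) ≤ gt * ((m : ℝ) + 1) := by
        have := mul_le_mul_of_nonneg_right hgk (show (0:ℝ) ≤ (m : ℝ) + 1 by positivity)
        calc g * ((k : ℝ) * ((m : ℝ) + 1)) = g * (k : ℝ) * ((m : ℝ) + 1) := by ring
          _ ≤ gt * ((m : ℝ) + 1) := this
      exact mul_le_mul c1 hA hAnn (by positivity)
    have h2 : (lam * J) * Mw k a d α m x i ≤ gt * (μ * dec d α x i) :=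
      mul_le_mul hlJ hA hAnn hgt
    have h3 : (lam * J) * (μ * dec d α x i) ≤ gt * (μ * dec d α x i) :=
      mul_le_mul_of_nonneg_right hlJ (by positivity)
    have h4 : NB * ((k : ℝ) * (lam * J * dec d α x i))
        ≤ F * gt ^ m * (gt * (gt * dec d α x i)) := by
      have e : NB * ((k : ℝ) * (lam * J * dec d α x i))
          = (g * (k : ℝ)) * ((lam * J) * (F * gt ^ m * dec d α x i)) := by
        rw [hNB2]; ring
      rw [e]
      have hin : 0 ≤ F * gt ^ m * dec d α x i := by positivity
      calc (g * (k : ℝ)) * ((lam * J) * (F * gt ^ m * dec d α x i))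
          ≤ gt * ((lam * J) * (F * gt ^ m * dec d α x i)) := by
            refine mul_le_mul_of_nonneg_right hgk (by positivity)
        _ ≤ gt * (gt * (F * gt ^ m * dec d α x i)) := by
            refine mul_le_mul_of_nonneg_left
              (mul_le_mul_of_nonneg_right hlJ hin) hgt
        _ = F * gt ^ m * (gt * (gt * dec d α x i)) := by ring
    have hsum : (gt * ((m : ℝ) + 1)) * (μ * dec d α x i)
          + (gt * (μ * dec d α x i)
          + (gt * (μ * dec d α x i)
          + F * gt ^ m * (gt * (gt * dec d α x i))))
        = ((m : ℝ) + 1 + 1) * (Nat.factorial (m + 1 + 1) : ℝ) * gt ^ (m + 1 + 1)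
          * dec d α x i := by
      have hfac : (Nat.factorial (m + 2) : ℝ) = ((m : ℝ) + 2) * F := by
        rw [hF, Nat.factorial_succ]; push_cast; ring
      have : (m : ℕ) + 1 + 1 = m + 2 := rfl
      rw [this, hfac, hμ]
      ring
    calc (∑ v : Fin (m + 1) → Finset Λ, ∑ Z : Finset Λ,
            (if x ∈ UU v then Wt k a v * att k a v Z else 0) * hS d α (UU v) i)
          + ((∑ v : Fin (m + 1) → Finset Λ, ∑ Z : Finset Λ,
            (if x ∈ UU v then Wt k a v * att k a v Z else 0) * hS d α Z i)
          + ((∑ v : Fin (m + 1) → Finset Λ, ∑ Z : Finset Λ,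
            (if x ∈ Z then Wt k a v * att k a v Z else 0) * hS d α (UU v) i)
          + (∑ v : Fin (m + 1) → Finset Λ, ∑ Z : Finset Λ,
            (if x ∈ Z then Wt k a v * att k a v Z else 0) * hS d α Z i)))
        ≤ (gt * ((m : ℝ) + 1)) * (μ * dec d α x i)
          + (gt * (μ * dec d α x i)
          + (gt * (μ * dec d α x i)
          + F * gt ^ m * (gt * (gt * dec d α x i)))) := by
          refine add_le_add (le_trans hS1 h1) (add_le_add (le_trans hS2 h2)
            (add_le_add (le_trans hS3 h3) (le_trans hS4 h4)))
      _ = ((m : ℝ) + 1 + 1) * (Nat.factorial (m + 1 + 1) : ℝ) * gt ^ (m + 1 + 1)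
          * dec d α x i := hsum
      _ = (((m + 1 : ℕ) : ℝ) + 1) * (Nat.factorial (m + 1 + 1) : ℝ) * gt ^ (m + 1 + 1)
          * dec d α x i := by push_cast; ring

end StrSum

namespace StrSum

lemma sq_geom_sum_le (x : ℝ) (hx0 : 0 ≤ x) (hx : x ≤ 37 / 100) (M : ℕ) :
    ∑ m ∈ Finset.range M, ((m : ℝ) + 1) ^ 2 * x ^ m ≤ 6 := by
  have key : ∀ N : ℕ, ∑ m ∈ Finset.range N, ((m : ℝ) + 1) ^ 2 * x ^ m
      + ((8 / 5) * ((N : ℝ) + 1) ^ 2 + (19 / 10) * ((N : ℝ) + 1) + 21 / 10) * x ^ N ≤ 6 := by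
    intro N
    induction N with
    | zero => norm_num
    | succ N ihN =>
      have hn : (0 : ℝ) ≤ (N : ℝ) := Nat.cast_nonneg N
      have hp1 : (0 : ℝ) ≤ (8 / 5) * (((N : ℝ) + 1) + 1) ^ 2
          + (19 / 10) * (((N : ℝ) + 1) + 1) + 21 / 10 := by positivity
      have hxM : (0 : ℝ) ≤ x ^ N := pow_nonneg hx0 N
      have key2 : ((N : ℝ) + 1) ^ 2
          + ((8 / 5) * (((N : ℝ) + 1) + 1) ^ 2 + (19 / 10) * (((N : ℝ) + 1) + 1) + 21 / 10) * x
          ≤ (8 / 5) * ((N : ℝ) + 1) ^ 2 + (19 / 10) * ((N : ℝ) + 1) + 21 / 10 := by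
        have hb : ((8 / 5) * (((N : ℝ) + 1) + 1) ^ 2
            + (19 / 10) * (((N : ℝ) + 1) + 1) + 21 / 10) * x
            ≤ ((8 / 5) * (((N : ℝ) + 1) + 1) ^ 2
            + (19 / 10) * (((N : ℝ) + 1) + 1) + 21 / 10) * (37 / 100) :=
          mul_le_mul_of_nonneg_left hx hp1
        nlinarith [sq_nonneg ((N : ℝ) + 1), hn]
      have hstep : ((N : ℝ) + 1) ^ 2 * x ^ N
          + ((8 / 5) * (((N : ℝ) + 1) + 1) ^ 2 + (19 / 10) * (((N : ℝ) + 1) + 1) + 21 / 10)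
            * x ^ (N + 1)
          ≤ ((8 / 5) * ((N : ℝ) + 1) ^ 2 + (19 / 10) * ((N : ℝ) + 1) + 21 / 10) * x ^ N := by
        rw [pow_succ]
        have := mul_le_mul_of_nonneg_right key2 hxM
        calc ((N : ℝ) + 1) ^ 2 * x ^ N
            + ((8 / 5) * (((N : ℝ) + 1) + 1) ^ 2 + (19 / 10) * (((N : ℝ) + 1) + 1) + 21 / 10)
              * (x ^ N * x)
            = (((N : ℝ) + 1) ^ 2
              + ((8 / 5) * (((N : ℝ) + 1) + 1) ^ 2 + (19 / 10) * (((N : ℝ) + 1) + 1) + 21 / 10)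
                * x) * x ^ N := by ring
          _ ≤ ((8 / 5) * ((N : ℝ) + 1) ^ 2 + (19 / 10) * ((N : ℝ) + 1) + 21 / 10) * x ^ N :=
              this
      rw [Finset.sum_range_succ]
      push_cast
      push_cast at ihN hstep
      linarith
  have h := key M
  have hp : (0 : ℝ) ≤ ((8 / 5) * ((M : ℝ) + 1) ^ 2 + (19 / 10) * ((M : ℝ) + 1) + 21 / 10)
      * x ^ M := by positivity
  linarith

end StrSum

open StrSum

/-- **Exponentially weighted two-point string-sum bound**
(first-step inequality of the Supplement): for `2e g̃ |t| ≤ 1`,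
`Σ_{m'} ((2|t|)^{m'}/m'!) Σ_{connected strings containing i,i'} ∏ a ≤ 6g̃ (d(i,i')+1)^{-α}`
(stated via all partial sums of the series). -/
theorem exp_weighted_two_point_string_sum_bound
    {Λ : Type} [Fintype Λ] [DecidableEq Λ] (d : Λ → Λ → ℕ)
    (hmet : IsLatticeMetric d) (k : ℕ) (α D : ℝ) (hD : 0 < D) (hα : D < α)
    (J g lam : ℝ) (hJ : 0 < J) (hg : 0 ≤ g) (hlam : 1 ≤ lam)
    (a : Finset Λ → ℝ) (ha : ∀ Z, 0 ≤ a Z)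
    (hpair : ∀ i i' : Λ,
      ∑ Z ∈ Finset.univ.filter (fun Z : Finset Λ => i ∈ Z ∧ i' ∈ Z), a Z
        ≤ J * ((d i i' : ℝ) + 1) ^ (-α))
    (hsite : ∀ i : Λ,
      ∑ Z ∈ Finset.univ.filter (fun Z : Finset Λ => i ∈ Z), a Z ≤ g)
    (hlam₂ : ∀ i i' : Λ,
      ∑ i₀ : Λ, ((d i i₀ : ℝ) + 1) ^ (-α) * ((d i₀ i' : ℝ) + 1) ^ (-α)
        ≤ lam * ((d i i' : ℝ) + 1) ^ (-α))
    (i i' : Λ) (t : ℝ)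
    (ht : 2 * Real.exp 1 * max (g * k) (lam * J) * |t| ≤ 1) :
    ∀ M : ℕ,
      ∑ m' ∈ Finset.range M,
        (2 * |t|) ^ m' / (m'.factorial : ℝ) *
          ∑ w ∈ Finset.univ.filter (fun w : Fin (m' + 1) → Finset Λ =>
              (∀ j, (w j).Nonempty ∧ (w j).card ≤ k) ∧ SeqConnected w ∧
              i ∈ Finset.univ.biUnion w ∧ i' ∈ Finset.univ.biUnion w),
            ∏ j, a (w j)
      ≤ 6 * max (g * k) (lam * J) * ((d i i' : ℝ) + 1) ^ (-α) := by
  intro M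
  set gt : ℝ := max (g * k) (lam * J) with hgtdef
  have hgk : g * (k : ℝ) ≤ gt := le_max_left _ _
  have hlJ : lam * J ≤ gt := le_max_right _ _
  have hlJ0 : (0 : ℝ) < lam * J := mul_pos (by linarith) hJ
  have hgt0 : (0 : ℝ) < gt := lt_of_lt_of_le hlJ0 hlJ
  have hgt : (0 : ℝ) ≤ gt := hgt0.le
  set Dc : ℝ := ((d i i' : ℝ) + 1) ^ (-α) with hDc
  have hDcnn : 0 ≤ Dc := Real.rpow_nonneg (by positivity) _
  -- per-term bound
  have inner_le : ∀ m : ℕ,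
      (∑ w ∈ Finset.univ.filter (fun w : Fin (m + 1) → Finset Λ =>
          (∀ j, (w j).Nonempty ∧ (w j).card ≤ k) ∧ SeqConnected w ∧
          i ∈ Finset.univ.biUnion w ∧ i' ∈ Finset.univ.biUnion w),
        ∏ j, a (w j))
      ≤ ((m : ℝ) + 1) * (Nat.factorial (m + 1) : ℝ) * gt ^ (m + 1) * Dc := by
    intro m
    have hMw : (∑ w ∈ Finset.univ.filter (fun w : Fin (m + 1) → Finset Λ =>
          (∀ j, (w j).Nonempty ∧ (w j).card ≤ k) ∧ SeqConnected w ∧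
          i ∈ Finset.univ.biUnion w ∧ i' ∈ Finset.univ.biUnion w),
        ∏ j, a (w j)) ≤ Mw k a d α m i' i := by
      rw [Finset.sum_filter, Mw]
      refine Finset.sum_le_sum fun w _ => ?_
      by_cases hc : (∀ j, (w j).Nonempty ∧ (w j).card ≤ k) ∧ SeqConnected w ∧
          i ∈ Finset.univ.biUnion w ∧ i' ∈ Finset.univ.biUnion w
      · rw [if_pos hc]
        obtain ⟨hok, hconn, hi, hi'⟩ := hc
        have hW : Wt k a w = ∏ j, a (w j) := if_pos ⟨hok, hconn⟩
        have hiU : i ∈ UU w := hi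
        have hiU' : i' ∈ UU w := hi'
        have hdec1 : dec d α i i = 1 := by
          unfold dec
          rw [(hmet.2.1 i i).2 rfl]
          norm_num
        have hhS : 1 ≤ hS d α (UU w) i := by
          calc (1 : ℝ) = dec d α i i := hdec1.symm
            _ ≤ hS d α (UU w) i :=
              Finset.single_le_sum (f := fun y => dec d α y i)
                (fun y _ => dec_nonneg d α y i) hiU
        have hprod : 0 ≤ ∏ j, a (w j) := Finset.prod_nonneg fun j _ => ha _
        calc ∏ j, a (w j) = (∏ j, a (w j)) * 1 := (mul_one _).symm
          _ ≤ (∏ j, a (w j)) * hS d α (UU w) i :=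
              mul_le_mul_of_nonneg_left hhS hprod
          _ = (if i' ∈ UU w then Wt k a w else 0) * hS d α (UU w) i := by
              rw [if_pos hiU', hW]
      · rw [if_neg hc]
        exact mul_nonneg (iWt_nonneg k a ha w i') (hS_nonneg d α (UU w) i)
    refine le_trans hMw ?_
    have hsym : dec d α i' i = Dc := by
      unfold dec
      rw [hmet.1 i' i]
    calc Mw k a d α m i' i
        ≤ ((m : ℝ) + 1) * (Nat.factorial (m + 1) : ℝ) * gt ^ (m + 1) * dec d α i' i :=
          Mw_le k a d α J g lam ha hg hJ hlam hsite hpair hlam₂ gt hgk hlJ hgt m i' i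
      _ = ((m : ℝ) + 1) * (Nat.factorial (m + 1) : ℝ) * gt ^ (m + 1) * Dc := by
          rw [hsym]
  -- numeric part
  set x : ℝ := 2 * |t| * gt with hxdef
  have hx0 : 0 ≤ x := by positivity
  have hx37 : x ≤ 37 / 100 := by
    have he : (2.7182818283 : ℝ) < Real.exp 1 := Real.exp_one_gt_d9
    have hu : 0 ≤ gt * |t| := mul_nonneg hgt (abs_nonneg t)
    nlinarith [mul_le_mul_of_nonneg_right he.le hu]
  calc ∑ m ∈ Finset.range M,
        (2 * |t|) ^ m / (m.factorial : ℝ) *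
          ∑ w ∈ Finset.univ.filter (fun w : Fin (m + 1) → Finset Λ =>
              (∀ j, (w j).Nonempty ∧ (w j).card ≤ k) ∧ SeqConnected w ∧
              i ∈ Finset.univ.biUnion w ∧ i' ∈ Finset.univ.biUnion w),
            ∏ j, a (w j)
      ≤ ∑ m ∈ Finset.range M,
          (2 * |t|) ^ m / (m.factorial : ℝ)
            * (((m : ℝ) + 1) * (Nat.factorial (m + 1) : ℝ) * gt ^ (m + 1) * Dc) := by
        refine Finset.sum_le_sum fun m _ => ?_
        exact mul_le_mul_of_nonneg_left (inner_le m) (by positivity)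
    _ = (gt * Dc) * ∑ m ∈ Finset.range M, ((m : ℝ) + 1) ^ 2 * x ^ m := by
        rw [Finset.mul_sum]
        refine Finset.sum_congr rfl fun m _ => ?_
        have hfm : ((m.factorial : ℕ) : ℝ) ≠ 0 := by
          exact_mod_cast m.factorial_ne_zero
        have hfs : (Nat.factorial (m + 1) : ℝ) = ((m : ℝ) + 1) * (m.factorial : ℝ) := by
          rw [Nat.factorial_succ]; push_cast; ring
        rw [hfs, hxdef, mul_pow, mul_pow, pow_succ]
        field_simp
        ring
    _ ≤ (gt * Dc) * 6 := by
        refine mul_le_mul_of_nonneg_left (sq_geom_sum_le x hx0 hx37 M) (by positivity)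
    _ = 6 * gt * Dc := by ring
end
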